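/- arXiv:1601.00292 — 13 statements merged into one kernel-verified Lean document; each statement's English description precedes it below -/
import Mathlib

section
/- Let β : ℂ^{m×n} × ℂ^n → ℂ^m be the matrix-vector product bilinear map (A, x) ↦ Ax. Then the rank of its structure tensor μ_β equals mn. -/
open Filter Topology

/-- `HasTensorRankLE 𝕜 β r` means that the bilinear operation `β` admits a decomposition
into `r` rank-one terms, i.e., the structure tensor `μ_β ∈ U* ⊗ V* ⊗ W` of `β` can be
written as `∑ i, f i ⊗ g i ⊗ w i` with `r` summands; equivalently `rank (μ_β) ≤ r`. -/
def HasTensorRankLE (𝕜 : Type*) [Field 𝕜] {U V W : Type*}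
    [AddCommGroup U] [Module 𝕜 U] [AddCommGroup V] [Module 𝕜 V]
    [AddCommGroup W] [Module 𝕜 W] (β : U → V → W) (r : ℕ) : Prop :=
  ∃ (f : Fin r → (U →ₗ[𝕜] 𝕜)) (g : Fin r → (V →ₗ[𝕜] 𝕜)) (w : Fin r → W),
    ∀ u v, β u v = ∑ i, (f i u * g i v) • w i

/-- The rank of the structure tensor `μ_β` of a bilinear operation `β`. -/
noncomputable def tensorRank (𝕜 : Type*) [Field 𝕜] {U V W : Type*}
    [AddCommGroup U] [Module 𝕜 U] [AddCommGroup V] [Module 𝕜 V]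
    [AddCommGroup W] [Module 𝕜 W] (β : U → V → W) : ℕ :=
  sInf {r | HasTensorRankLE 𝕜 β r}

/-- The border rank of the structure tensor `μ_β` of a bilinear operation `β` : the least `r`
such that `μ_β` is a limit of a sequence of tensors of rank at most `r` (convergence of the
tensors in the finite-dimensional space `U* ⊗ V* ⊗ W` being equivalent to pointwise
convergence of the corresponding bilinear maps). -/
noncomputable def borderRank (𝕜 : Type*) [Field 𝕜] {U V W : Type*}
    [AddCommGroup U] [Module 𝕜 U] [AddCommGroup V] [Module 𝕜 V]
    [AddCommGroup W] [Module 𝕜 W] [TopologicalSpace W] (β : U → V → W) : ℕ :=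
  sInf {r | ∃ s : ℕ → (U → V → W), (∀ m, HasTensorRankLE 𝕜 (s m) r) ∧
    ∀ u v, Tendsto (fun m => s m u v) atTop (𝓝 (β u v))}

private lemma mulVec_upper (m n : ℕ) :
    HasTensorRankLE ℂ (fun (A : Matrix (Fin m) (Fin n) ℂ) (x : Fin n → ℂ) => A.mulVec x) (m * n) := by
  refine ⟨fun i => (LinearMap.proj (R:=ℂ) (φ := fun _ : Fin n => ℂ) (finProdFinEquiv.symm i).2).comp
      (LinearMap.proj (R := ℂ) (φ := fun _ : Fin m => Fin n → ℂ) (finProdFinEquiv.symm i).1),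
    fun i => LinearMap.proj (R:=ℂ) (φ := fun _ : Fin n => ℂ) (finProdFinEquiv.symm i).2,
    fun i => Pi.single (finProdFinEquiv.symm i).1 1, ?_⟩
  intro A x
  rw [← Equiv.sum_comp finProdFinEquiv.symm.symm]
  simp only [Equiv.symm_symm, Equiv.symm_apply_apply]
  rw [Fintype.sum_prod_type]
  funext k
  simp [Matrix.mulVec, dotProduct, Finset.sum_apply, Pi.single_apply,
    Finset.sum_comm (γ := Fin n), LinearMap.proj_apply]
  exact Finset.sum_congr rfl fun j _ => rfl

private lemma mulVec_lower (m n r : ℕ)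
    (h : HasTensorRankLE ℂ (fun (A : Matrix (Fin m) (Fin n) ℂ) (x : Fin n → ℂ) => A.mulVec x) r) :
    m * n ≤ r := by
  obtain ⟨f, g, w, hw⟩ := h
  have hinj : Function.Injective (LinearMap.pi (fun i => f i) :
      Matrix (Fin m) (Fin n) ℂ →ₗ[ℂ] (Fin r → ℂ)) := by
    rw [← LinearMap.ker_eq_bot, LinearMap.ker_eq_bot']
    intro A hA
    have hf : ∀ i, f i A = 0 := fun i => congrFun hA i
    have hv : ∀ x : Fin n → ℂ, A.mulVec x = 0 := by
      intro x
      have := hw A x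
      simp only at this
      rw [this]
      simp [hf]
    ext k j
    have := congrFun (hv (Pi.single j 1)) k
    simpa [Matrix.mulVec_single] using this
  have := LinearMap.finrank_le_finrank_of_injective hinj
  rw [Module.finrank_fintype_fun_eq_card, Fintype.card_fin] at this
  rw [Module.finrank_matrix] at this
  simpa using this

/-- The structure tensor of the matrix-vector product
`ℂ^{m×n} × ℂ^n → ℂ^m`, `(A, x) ↦ Ax`, has rank `mn`. -/
theorem tensorRank_mulVec (m n : ℕ) :
    tensorRank ℂ (fun (A : Matrix (Fin m) (Fin n) ℂ) (x : Fin n → ℂ) => A.mulVec x) = m * n := by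
  refine le_antisymm (Nat.sInf_le (mulVec_upper m n)) ?_
  exact le_csInf ⟨m * n, mulVec_upper m n⟩ fun r hr => mulVec_lower m n r hr
end

section
/- Let Ω ⊆ {1,…,m} × {1,…,n} be a sparsity pattern and let ℂ^{m×n}_Ω = {A ∈ ℂ^{m×n} : a_{ij} = 0 for all (i,j) ∉ Ω} be the space of matrices with sparsity pattern Ω. Let β_Ω : ℂ^{m×n}_Ω × ℂ^n → ℂ^m, (A, x) ↦ Ax, with structure tensor μ_Ω. Then both the rank and the border rank of μ_Ω equal #Ω, the cardinality of Ω. -/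
open Filter Topology

/-- The space `ℂ^{m×n}_Ω` of complex `m × n` matrices with sparsity pattern `Ω`, i.e. whose
entries vanish outside of `Ω`. -/
noncomputable def sparseMatrixSpace (m n : ℕ) (Ω : Finset (Fin m × Fin n)) :
    Submodule ℂ (Matrix (Fin m) (Fin n) ℂ) where
  carrier := {A | ∀ i j, (i, j) ∉ Ω → A i j = 0}
  add_mem' := by
    intro A B hA hB i j h
    simp [Matrix.add_apply, hA i j h, hB i j h]
  zero_mem' := by intro i j _; simp
  smul_mem' := by
    intro c A hA i j h
    simp [Matrix.smul_apply, hA i j h]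

section Aux
variable (m n : ℕ) (Ω : Finset (Fin m × Fin n))

noncomputable def eΩ : Fin Ω.card ≃ Ω := Ω.equivFin.symm

noncomputable def EΩ (q : Fin Ω.card) : sparseMatrixSpace m n Ω :=
  ⟨Matrix.single (eΩ m n Ω q).1.1 (eΩ m n Ω q).1.2 1, by
    intro i j h
    have hne : ((eΩ m n Ω q).1.1, (eΩ m n Ω q).1.2) ≠ (i, j) := by
      intro he; apply h; rw [← he]; exact (eΩ m n Ω q).2
    simp only [Matrix.single, Matrix.of_apply, ite_eq_right_iff]
    intro h1; exact absurd (Prod.ext h1.1 h1.2) hne⟩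

noncomputable def Dmat (τ : sparseMatrixSpace m n Ω → (Fin n → ℂ) → (Fin m → ℂ)) :
    Matrix (Fin Ω.card) (Fin Ω.card) ℂ :=
  fun p q => τ (EΩ m n Ω q) (Pi.single (eΩ m n Ω p).1.2 1) (eΩ m n Ω p).1.1

lemma Dmat_beta : Dmat m n Ω (fun A x => (A : Matrix (Fin m) (Fin n) ℂ).mulVec x) = 1 := by
  funext p q
  simp only [Dmat, EΩ]
  rw [Matrix.mulVec_single_one]
  simp only [mul_one, Matrix.single, Matrix.col, Matrix.transpose_apply, Matrix.of_apply, Matrix.one_apply]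
  by_cases h : p = q
  · subst h; simp
  · have : (eΩ m n Ω p) ≠ (eΩ m n Ω q) := fun he => h ((eΩ m n Ω).injective he)
    have hne : ((eΩ m n Ω q).1.1, (eΩ m n Ω q).1.2) ≠ ((eΩ m n Ω p).1.1, (eΩ m n Ω p).1.2) := by
      intro he
      exact this (Subtype.ext (Prod.ext (congrArg Prod.fst he).symm (congrArg Prod.snd he).symm))
    rw [if_neg h, if_neg]
    intro hc
    exact hne (Prod.ext hc.1 hc.2)


lemma det_Dmat_eq_zero {r : ℕ} (hr : r < Ω.card)
    (τ : sparseMatrixSpace m n Ω → (Fin n → ℂ) → (Fin m → ℂ))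
    (hτ : HasTensorRankLE ℂ τ r) : (Dmat m n Ω τ).det = 0 := by
  obtain ⟨f, g, w, hfgw⟩ := hτ
  set A : Matrix (Fin Ω.card) (Fin r) ℂ :=
    fun p k => g k (Pi.single (eΩ m n Ω p).1.2 1) * w k (eΩ m n Ω p).1.1 with hA
  set B : Matrix (Fin r) (Fin Ω.card) ℂ := fun k q => f k (EΩ m n Ω q) with hB
  have hD : Dmat m n Ω τ = A * B := by
    funext p q
    simp only [Dmat, Matrix.mul_apply, hfgw, Finset.sum_apply, Pi.smul_apply, smul_eq_mul,
      hA, hB]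
    exact Finset.sum_congr rfl fun k _ => by ring
  rw [hD]
  -- B.mulVecLin is not injective
  have hni : ¬ Function.Injective B.mulVecLin := by
    intro hinj
    have := LinearMap.finrank_le_finrank_of_injective hinj
    rw [Module.finrank_fin_fun, Module.finrank_fin_fun] at this
    omega
  obtain ⟨x, y, hxy, hne⟩ := Function.not_injective_iff.mp hni
  refine (Matrix.exists_mulVec_eq_zero_iff).mp ⟨x - y, sub_ne_zero.mpr hne, ?_⟩
  rw [← Matrix.mulVec_mulVec]
  have : B.mulVec (x - y) = 0 := by
    have hx : B.mulVecLin (x - y) = 0 := by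
      rw [map_sub, hxy, sub_self]
    simpa using hx
  rw [this, Matrix.mulVec_zero]

lemma beta_rank_le :
    HasTensorRankLE ℂ (fun (A : sparseMatrixSpace m n Ω) (x : Fin n → ℂ) =>
      (A : Matrix (Fin m) (Fin n) ℂ).mulVec x) Ω.card := by
  refine ⟨fun p => {
      toFun := fun A => (A : Matrix (Fin m) (Fin n) ℂ) (eΩ m n Ω p).1.1 (eΩ m n Ω p).1.2
      map_add' := by intros; simp
      map_smul' := by intros; simp },
    fun p => {
      toFun := fun x => x (eΩ m n Ω p).1.2
      map_add' := by intros; simp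
      map_smul' := by intros; simp },
    fun p => Pi.single (eΩ m n Ω p).1.1 1, ?_⟩
  intro A x
  funext i
  simp only [LinearMap.coe_mk, AddHom.coe_mk, Finset.sum_apply, Pi.smul_apply, smul_eq_mul,
    Pi.single_apply, Matrix.mulVec, dotProduct]
  change _ = ∑ p, (A : Matrix (Fin m) (Fin n) ℂ) (eΩ m n Ω p).1.1 (eΩ m n Ω p).1.2 *
    x (eΩ m n Ω p).1.2 * if i = (eΩ m n Ω p).1.1 then 1 else 0
  rw [(eΩ m n Ω).sum_comp (fun ω : Ω =>
    (A : Matrix (Fin m) (Fin n) ℂ) ω.1.1 ω.1.2 * x ω.1.2 * if i = ω.1.1 then 1 else 0)]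
  rw [Finset.sum_coe_sort Ω (fun ω =>
    (A : Matrix (Fin m) (Fin n) ℂ) ω.1 ω.2 * x ω.2 * if i = ω.1 then 1 else 0)]
  rw [Finset.sum_subset (Finset.subset_univ Ω) (by
    intro ω _ hω
    rw [A.2 ω.1 ω.2 (by simpa using hω)]
    ring)]
  rw [Fintype.sum_prod_type]
  rw [Finset.sum_comm]
  refine Finset.sum_congr rfl fun j _ => ?_
  rw [Finset.sum_eq_single i]
  · simp
  · intro b _ hb; simp [Ne.symm hb]
  · intro h; exact absurd (Finset.mem_univ i) h

lemma card_le_of_hasRank {r : ℕ}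
    (h : HasTensorRankLE ℂ (fun (A : sparseMatrixSpace m n Ω) (x : Fin n → ℂ) =>
      (A : Matrix (Fin m) (Fin n) ℂ).mulVec x) r) : Ω.card ≤ r := by
  by_contra hc
  push_neg at hc
  have h0 := det_Dmat_eq_zero m n Ω hc _ h
  rw [Dmat_beta, Matrix.det_one] at h0
  exact one_ne_zero h0

lemma card_le_of_border {r : ℕ}
    (h : ∃ s : ℕ → (sparseMatrixSpace m n Ω → (Fin n → ℂ) → (Fin m → ℂ)),
      (∀ k, HasTensorRankLE ℂ (s k) r) ∧
      ∀ u v, Tendsto (fun k => s k u v) atTop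
        (𝓝 ((u : Matrix (Fin m) (Fin n) ℂ).mulVec v))) : Ω.card ≤ r := by
  by_contra hc
  push_neg at hc
  obtain ⟨s, hs, hlim⟩ := h
  have hT : Tendsto (fun k => Dmat m n Ω (s k)) atTop
      (𝓝 (Dmat m n Ω (fun A x => (A : Matrix (Fin m) (Fin n) ℂ).mulVec x))) := by
    refine tendsto_pi_nhds.mpr ?_
    intro p
    rw [tendsto_pi_nhds]
    intro q
    exact ((continuous_apply (eΩ m n Ω p).1.1).tendsto _).comp
      (hlim (EΩ m n Ω q) (Pi.single (eΩ m n Ω p).1.2 1))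
  have hdet : Tendsto (fun k => (Dmat m n Ω (s k)).det) atTop
      (𝓝 ((Dmat m n Ω (fun A x => (A : Matrix (Fin m) (Fin n) ℂ).mulVec x)).det)) :=
    ((continuous_id.matrix_det).tendsto _).comp hT
  rw [Dmat_beta, Matrix.det_one] at hdet
  have hzero : ∀ k, (Dmat m n Ω (s k)).det = 0 := fun k => det_Dmat_eq_zero m n Ω hc _ (hs k)
  simp only [hzero] at hdet
  exact one_ne_zero (tendsto_nhds_unique hdet tendsto_const_nhds)

end Aux

/-- The structure tensor of the matrix-vector product
`ℂ^{m×n}_Ω × ℂ^n → ℂ^m`, `(A, x) ↦ Ax`, for matrices with sparsity pattern `Ω` has both rank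
and border rank equal to `#Ω`. -/
theorem tensorRank_and_borderRank_sparse_mulVec (m n : ℕ) (Ω : Finset (Fin m × Fin n)) :
    tensorRank ℂ (fun (A : sparseMatrixSpace m n Ω) (x : Fin n → ℂ) =>
        (A : Matrix (Fin m) (Fin n) ℂ).mulVec x) = Ω.card ∧
    borderRank ℂ (fun (A : sparseMatrixSpace m n Ω) (x : Fin n → ℂ) =>
        (A : Matrix (Fin m) (Fin n) ℂ).mulVec x) = Ω.card := by
  constructor
  · apply le_antisymm
    · exact Nat.sInf_le (beta_rank_le m n Ω)
    · exact le_csInf ⟨Ω.card, beta_rank_le m n Ω⟩ fun r hr => card_le_of_hasRank m n Ω hr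
  · apply le_antisymm
    · exact Nat.sInf_le ⟨fun _ A x => (A : Matrix (Fin m) (Fin n) ℂ).mulVec x,
        fun _ => beta_rank_le m n Ω, fun u v => tendsto_const_nhds⟩
    · exact le_csInf ⟨Ω.card, fun _ A x => (A : Matrix (Fin m) (Fin n) ℂ).mulVec x,
        fun _ => beta_rank_le m n Ω, fun u v => tendsto_const_nhds⟩
        fun r hr => card_le_of_border m n Ω hr
end

section
/- Let U ⊆ ℂ^{n×n} be the space of upper triangular n×n complex matrices and let β : U × ℂ^n → ℂ^n, (A, x) ↦ Ax. Then both the rank and the border rank of the structure tensor of β equal n(n+1)/2. -/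
open Filter Topology

/-- The space of upper triangular `n × n` complex matrices. -/
noncomputable def upperTriangularSpace (n : ℕ) : Submodule ℂ (Matrix (Fin n) (Fin n) ℂ) where
  carrier := {A | ∀ i j : Fin n, j < i → A i j = 0}
  add_mem' := by
    intro A B hA hB i j h
    simp [Matrix.add_apply, hA i j h, hB i j h]
  zero_mem' := by intro i j _; simp
  smul_mem' := by
    intro c A hA i j h
    simp [Matrix.smul_apply, hA i j h]

abbrev UTidx (n : ℕ) := {pq : Fin n × Fin n // pq.1 ≤ pq.2}

/-- basis matrix E_{pq} as an element of the upper triangular space -/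
def UTbasis {n : ℕ} (a : UTidx n) : upperTriangularSpace n :=
  ⟨Matrix.of fun i j => if i = a.1.1 ∧ j = a.1.2 then 1 else 0, by
    intro i j hji
    show (if i = a.1.1 ∧ j = a.1.2 then (1:ℂ) else 0) = 0
    rw [if_neg]
    rintro ⟨rfl, rfl⟩
    exact absurd a.2 (not_le.mpr hji)⟩

lemma UTbasis_apply {n : ℕ} (a : UTidx n) (i j : Fin n) :
    (UTbasis a : Matrix (Fin n) (Fin n) ℂ) i j = if i = a.1.1 ∧ j = a.1.2 then 1 else 0 := rfl

/-- the entry linear functional on the upper triangular space -/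
def UTentry {n : ℕ} (p q : Fin n) : upperTriangularSpace n →ₗ[ℂ] ℂ where
  toFun A := (A : Matrix (Fin n) (Fin n) ℂ) p q
  map_add' A B := by simp [Matrix.add_apply]
  map_smul' c A := by simp [Matrix.smul_apply]

lemma UTbasis_mulVec {n : ℕ} (a b : UTidx n) :
    (UTbasis a : Matrix (Fin n) (Fin n) ℂ).mulVec (Pi.single b.1.2 1) b.1.1
      = (1 : Matrix (UTidx n) (UTidx n) ℂ) a b := by
  rw [Matrix.mulVec_single, Pi.smul_apply, Matrix.col_apply, op_smul_eq_mul]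
  simp only [UTbasis_apply, mul_one, Matrix.one_apply]
  by_cases h : a = b
  · subst h; simp
  · rw [if_neg (fun hc => h (Subtype.ext (Prod.ext hc.1.symm hc.2.symm))), if_neg h]

lemma UTidx_card (n : ℕ) : Fintype.card (UTidx n) = n * (n + 1) / 2 := by
  rw [Fintype.card_subtype, Finset.card_filter, Fintype.sum_prod_type_right]
  have h1 : ∀ q : Fin n, (∑ p : Fin n, if p ≤ q then (1:ℕ) else 0) = q.1 + 1 := by
    intro q
    rw [← Finset.card_filter, Finset.filter_ge_eq_Iic, Fin.card_Iic]
  simp_rw [h1]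
  rw [Fin.sum_univ_eq_sum_range (fun i => i + 1) n]
  have h2 : (∑ i ∈ Finset.range n, (i + 1)) = ∑ i ∈ Finset.range (n+1), i := by
    rw [Finset.sum_range_succ' (fun i => i) n]
    simp
  rw [h2, Finset.sum_range_id, Nat.succ_sub_one, Nat.mul_comm]

lemma UT_sum_decomp {n : ℕ} (A : upperTriangularSpace n) (x : Fin n → ℂ) :
    (A : Matrix (Fin n) (Fin n) ℂ).mulVec x
      = ∑ a : UTidx n, (UTentry a.1.1 a.1.2 A * x a.1.2) • (Pi.single a.1.1 1 : Fin n → ℂ) := by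
  funext j
  rw [Finset.sum_apply]
  simp only [Pi.smul_apply, smul_eq_mul, Pi.single_apply, UTentry]
  have hsub : (∑ a : UTidx n,
      (A : Matrix (Fin n) (Fin n) ℂ) a.1.1 a.1.2 * x a.1.2 * (if j = a.1.1 then (1:ℂ) else 0))
      = ∑ pq ∈ Finset.univ.filter (fun pq : Fin n × Fin n => pq.1 ≤ pq.2),
        (A : Matrix (Fin n) (Fin n) ℂ) pq.1 pq.2 * x pq.2 * (if j = pq.1 then (1:ℂ) else 0) := by
    exact (Finset.sum_subtype (p := fun pq : Fin n × Fin n => pq.1 ≤ pq.2)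
      (Finset.univ.filter (fun pq : Fin n × Fin n => pq.1 ≤ pq.2)) (by intro pq; simp)
      (fun pq => (A : Matrix (Fin n) (Fin n) ℂ) pq.1 pq.2 * x pq.2 *
        (if j = pq.1 then (1:ℂ) else 0))).symm
  change _ = ∑ a : UTidx n, (A : Matrix (Fin n) (Fin n) ℂ) a.1.1 a.1.2 * x a.1.2 *
    (if j = a.1.1 then (1:ℂ) else 0)
  rw [hsub, Finset.sum_filter]
  have hfull : ∀ pq : Fin n × Fin n,
      (if pq.1 ≤ pq.2 then
        (A : Matrix (Fin n) (Fin n) ℂ) pq.1 pq.2 * x pq.2 * (if j = pq.1 then (1:ℂ) else 0) else 0)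
      = (A : Matrix (Fin n) (Fin n) ℂ) pq.1 pq.2 * x pq.2 * (if j = pq.1 then (1:ℂ) else 0) := by
    intro pq
    by_cases h : pq.1 ≤ pq.2
    · rw [if_pos h]
    · rw [if_neg h, A.2 pq.1 pq.2 (not_le.mp h), zero_mul, zero_mul]
  simp_rw [hfull]
  rw [Fintype.sum_prod_type]
  have hrow : ∀ p : Fin n,
      (∑ q : Fin n, (A : Matrix (Fin n) (Fin n) ℂ) p q * x q * (if j = p then (1:ℂ) else 0))
      = if j = p then (∑ q : Fin n, (A : Matrix (Fin n) (Fin n) ℂ) p q * x q) else 0 := by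
    intro p
    by_cases h : j = p
    · simp [h]
    · simp [h]
  simp_rw [hrow]
  rw [Finset.sum_ite_eq]
  simp [Matrix.mulVec, dotProduct]

lemma UT_hasTensorRankLE (n : ℕ) :
    ∃ (f : Fin (n*(n+1)/2) → (upperTriangularSpace n →ₗ[ℂ] ℂ))
      (g : Fin (n*(n+1)/2) → ((Fin n → ℂ) →ₗ[ℂ] ℂ)) (w : Fin (n*(n+1)/2) → (Fin n → ℂ)),
    ∀ (A : upperTriangularSpace n) (x : Fin n → ℂ),
      (A : Matrix (Fin n) (Fin n) ℂ).mulVec x = ∑ i, (f i A * g i x) • w i := by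
  have e : UTidx n ≃ Fin (n*(n+1)/2) := Fintype.equivFinOfCardEq (UTidx_card n)
  refine ⟨fun i => UTentry (e.symm i).1.1 (e.symm i).1.2,
    fun i => LinearMap.proj (e.symm i).1.2,
    fun i => Pi.single (e.symm i).1.1 1, fun A x => ?_⟩
  rw [UT_sum_decomp A x, ← Equiv.sum_comp e.symm
    (fun a : UTidx n => (UTentry a.1.1 a.1.2 A * x a.1.2) • (Pi.single a.1.1 1 : Fin n → ℂ))]
  rfl

lemma UT_borderRank_lb {n r : ℕ} (s : ℕ → (upperTriangularSpace n → (Fin n → ℂ) → (Fin n → ℂ)))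
    (h1 : ∀ m, HasTensorRankLE ℂ (s m) r)
    (h2 : ∀ u v, Tendsto (fun m => s m u v) atTop (𝓝 ((u : Matrix (Fin n) (Fin n) ℂ).mulVec v))) :
    n * (n + 1) / 2 ≤ r := by
  rw [← UTidx_card n]
  by_contra hlt
  push_neg at hlt
  set M : ℕ → Matrix (UTidx n) (UTidx n) ℂ :=
    fun m => Matrix.of fun a b => s m (UTbasis a) (Pi.single b.1.2 1) b.1.1 with hM
  have hrank : ∀ m, (M m).rank ≤ r := by
    intro m
    obtain ⟨f, g, w, hfgw⟩ := h1 m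
    have hMm : M m = (Matrix.of fun a i => f i (UTbasis a)) *
        (Matrix.of fun (i : Fin r) b => g i (Pi.single b.1.2 1) * w i b.1.1) := by
      ext a b
      simp only [hM, Matrix.of_apply, Matrix.mul_apply, hfgw]
      rw [Finset.sum_apply]
      simp [mul_assoc]
    rw [hMm]
    exact le_trans (Matrix.rank_mul_le_left _ _)
      (le_trans (Matrix.rank_le_card_width _) (by simp))
  have hten : Tendsto M atTop (𝓝 (1 : Matrix (UTidx n) (UTidx n) ℂ)) := by
    refine tendsto_pi_nhds.mpr ?_
    intro a
    refine tendsto_pi_nhds.mpr ?_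
    intro b
    have := (tendsto_pi_nhds.mp (h2 (UTbasis a) (Pi.single b.1.2 1))) b.1.1
    rw [UTbasis_mulVec a b] at this
    exact this
  have hdet : Tendsto (fun m => (M m).det) atTop (𝓝 (1 : ℂ)) := by
    have hc : Continuous fun A : Matrix (UTidx n) (UTidx n) ℂ => A.det :=
      Continuous.matrix_det continuous_id
    have := (hc.continuousAt (x := (1 : Matrix (UTidx n) (UTidx n) ℂ))).tendsto.comp hten
    simpa [Function.comp_def] using this
  obtain ⟨m, hm⟩ := (hdet.eventually_ne one_ne_zero).exists
  have hunit : IsUnit (M m) := (Matrix.isUnit_iff_isUnit_det _).mpr (isUnit_iff_ne_zero.mpr hm)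
  have hcard := Matrix.rank_of_isUnit _ hunit
  have := hrank m
  rw [hcard] at this
  omega
/-- The structure tensor of the upper triangular matrix-vector product
`(A, x) ↦ Ax` has both rank and border rank equal to `n(n+1)/2`. -/
theorem tensorRank_and_borderRank_upperTriangular_mulVec (n : ℕ) :
    tensorRank ℂ (fun (A : upperTriangularSpace n) (x : Fin n → ℂ) =>
        (A : Matrix (Fin n) (Fin n) ℂ).mulVec x) = n * (n + 1) / 2 ∧
    borderRank ℂ (fun (A : upperTriangularSpace n) (x : Fin n → ℂ) =>
        (A : Matrix (Fin n) (Fin n) ℂ).mulVec x) = n * (n + 1) / 2 := by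
  set β : upperTriangularSpace n → (Fin n → ℂ) → (Fin n → ℂ) :=
    fun A x => (A : Matrix (Fin n) (Fin n) ℂ).mulVec x with hβ
  have hUB : HasTensorRankLE ℂ β (n * (n + 1) / 2) := UT_hasTensorRankLE n
  have hBmem : (n * (n + 1) / 2) ∈ {r | ∃ s : ℕ → (upperTriangularSpace n → (Fin n → ℂ) → (Fin n → ℂ)),
      (∀ m, HasTensorRankLE ℂ (s m) r) ∧
      ∀ u v, Tendsto (fun m => s m u v) atTop (𝓝 (β u v))} :=
    ⟨fun _ => β, fun _ => hUB, fun _ _ => tendsto_const_nhds⟩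
  constructor
  · refine le_antisymm (Nat.sInf_le hUB) (le_csInf ⟨_, hUB⟩ ?_)
    intro r hr
    exact UT_borderRank_lb (fun _ => β) (fun _ => hr) (fun u v => tendsto_const_nhds)
  · refine le_antisymm (Nat.sInf_le hBmem) (le_csInf ⟨_, hBmem⟩ ?_)
    rintro r ⟨s, hs1, hs2⟩
    exact UT_borderRank_lb s hs1 hs2
end

section
/- Let Circ_n(ℂ) be the space of n×n complex circulant matrices, let β_c : Circ_n(ℂ) × ℂ^n → ℂ^n, (Circ(x), y) ↦ Circ(x)y, be the circulant matrix-vector product with structure tensor μ_c, and let μ_C be the structure tensor of the algebra Circ_n(ℂ) (circulant matrices are closed under matrix multiplication). Then rank(μ_c) = rank(μ_C) = n. -/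
open Filter Topology

/-- Forming the circulant matrix of a vector, as a linear map. -/
noncomputable def circulantLin (n : ℕ) : (Fin n → ℂ) →ₗ[ℂ] Matrix (Fin n) (Fin n) ℂ where
  toFun v := Matrix.circulant v
  map_add' v w := by ext i j; simp [Matrix.circulant_apply]
  map_smul' c v := by ext i j; simp [Matrix.circulant_apply]

/-- The space `Circ_n(ℂ)` of `n × n` complex circulant matrices. -/
noncomputable def circulantSpace (n : ℕ) : Submodule ℂ (Matrix (Fin n) (Fin n) ℂ) :=
  LinearMap.range (circulantLin n)

/-- Circulant matrices are closed under matrix multiplication. -/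
theorem mul_mem_circulantSpace {n : ℕ} (A B : circulantSpace n) :
    (A : Matrix (Fin n) (Fin n) ℂ) * (B : Matrix (Fin n) (Fin n) ℂ) ∈ circulantSpace n := by
  obtain ⟨v, hv⟩ := A.2
  obtain ⟨w, hw⟩ := B.2
  refine ⟨Matrix.mulVec (Matrix.circulant v) w, ?_⟩
  show Matrix.circulant (Matrix.mulVec (Matrix.circulant v) w) = _
  rw [← Matrix.Fin.circulant_mul]
  have hv' : Matrix.circulant v = (A : Matrix (Fin n) (Fin n) ℂ) := hv
  have hw' : Matrix.circulant w = (B : Matrix (Fin n) (Fin n) ℂ) := hw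
  rw [hv', hw']


open Finset

variable {n : ℕ} [NeZero n]

noncomputable def zeta (n : ℕ) : ℂ := Complex.exp (2 * Real.pi * Complex.I / n)

lemma zeta_prim (n : ℕ) [NeZero n] : IsPrimitiveRoot (zeta n) n :=
  Complex.isPrimitiveRoot_exp n (NeZero.ne n)

noncomputable def ee (n : ℕ) (z : Fin n) : ℂ := zeta n ^ (z : ℕ)

lemma ee_zero : ee n 0 = 1 := by simp [ee]

lemma zeta_pow_mod (m : ℕ) : zeta n ^ (m % n) = zeta n ^ m := by
  conv_rhs => rw [← Nat.mod_add_div m n]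
  rw [pow_add, pow_mul, (zeta_prim n).pow_eq_one, one_pow, mul_one]

lemma ee_add (a b : Fin n) : ee n (a + b) = ee n a * ee n b := by
  rw [ee, ee, ee, Fin.add_def, ← pow_add]
  exact zeta_pow_mod _

lemma ee_sum (t : Fin n) : ∑ k : Fin n, ee n (k * t) = if t = 0 then (n : ℂ) else 0 := by
  split_ifs with h
  · subst h; simp [ee_zero]
  · have h1 : ∀ k : Fin n, ee n (k * t) = (zeta n ^ (t : ℕ)) ^ (k : ℕ) := by
      intro k
      rw [ee, Fin.mul_def]
      show zeta n ^ (((k:ℕ) * t) % n) = _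
      rw [zeta_pow_mod, ← pow_mul, mul_comm]
    have hx : zeta n ^ (t : ℕ) ≠ 1 := by
      intro hc
      rw [(zeta_prim n).pow_eq_one_iff_dvd] at hc
      have := Nat.le_of_dvd (Nat.pos_of_ne_zero (fun h0 => h (Fin.ext h0))) hc
      omega
    calc ∑ k : Fin n, ee n (k * t) = ∑ k ∈ range n, (zeta n ^ (t : ℕ)) ^ k := by
          simp_rw [h1]; exact Fin.sum_univ_eq_sum_range _ n
      _ = 0 := by
          rw [geom_sum_eq hx, ← pow_mul, mul_comm, pow_mul, (zeta_prim n).pow_eq_one, one_pow,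
            sub_self, zero_div]

lemma key (φ ψ : Fin n → Fin n) (c d : Fin n → ℂ) (t : Fin n) :
    ∑ k : Fin n, (∑ m, c m * ee n (k * φ m)) * (∑ l, d l * ee n (k * ψ l)) *
      ((n : ℂ)⁻¹ * ee n (k * t))
    = ∑ m, ∑ l, if φ m + ψ l + t = 0 then c m * d l else 0 := by
  have hn : (n : ℂ) ≠ 0 := Nat.cast_ne_zero.mpr (NeZero.ne n)
  calc ∑ k : Fin n, (∑ m, c m * ee n (k * φ m)) * (∑ l, d l * ee n (k * ψ l)) *
        ((n : ℂ)⁻¹ * ee n (k * t))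
      = ∑ k : Fin n, ∑ m, ∑ l,
          c m * d l * (n : ℂ)⁻¹ * ee n (k * (φ m + ψ l + t)) := by
        refine Finset.sum_congr rfl fun k _ => ?_
        rw [Finset.sum_mul_sum, Finset.sum_mul]
        refine Finset.sum_congr rfl fun m _ => ?_
        rw [Finset.sum_mul]
        refine Finset.sum_congr rfl fun l _ => ?_
        have : k * (φ m + ψ l + t) = k * φ m + (k * ψ l + k * t) := by open Fin.CommRing in ring
        rw [this, ee_add, ee_add]
        ring
    _ = ∑ m, ∑ l, c m * d l * (n : ℂ)⁻¹ * ∑ k : Fin n, ee n (k * (φ m + ψ l + t)) := by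
        rw [Finset.sum_comm]
        refine Finset.sum_congr rfl fun m _ => ?_
        rw [Finset.sum_comm]
        refine Finset.sum_congr rfl fun l _ => ?_
        rw [Finset.mul_sum]
    _ = ∑ m, ∑ l, if φ m + ψ l + t = 0 then c m * d l else 0 := by
        refine Finset.sum_congr rfl fun m _ => Finset.sum_congr rfl fun l _ => ?_
        rw [ee_sum]
        split_ifs
        · field_simp
        · simp

lemma circ_row {A : Matrix (Fin n) (Fin n) ℂ} (hA : A ∈ circulantSpace n) (i j : Fin n) :
    A i j = A 0 (j - i) := by
  obtain ⟨v, hv⟩ := hA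
  have hv' : Matrix.circulant v = A := hv
  rw [← hv', Matrix.circulant_apply, Matrix.circulant_apply, zero_sub, neg_sub]

lemma one_mem_circ : (1 : Matrix (Fin n) (Fin n) ℂ) ∈ circulantSpace n := by
  refine ⟨Pi.single 0 1, ?_⟩
  ext i j
  simp [circulantLin, Matrix.circulant_apply, Pi.single_apply, Matrix.one_apply, sub_eq_zero,
    eq_comm]

lemma circulantLin_inj : Function.Injective (circulantLin n) := by
  intro v w h
  funext j
  have := congrFun (congrFun (show Matrix.circulant v = Matrix.circulant w from h) 0) (-j)
  simpa [Matrix.circulant_apply] using this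

lemma finrank_circulantSpace : Module.finrank ℂ (circulantSpace n) = n := by
  rw [circulantSpace, LinearMap.finrank_range_of_inj circulantLin_inj]
  simp [Module.finrank_fin_fun]

lemma lower_bound {U V W : Type*} [AddCommGroup U] [Module ℂ U] [AddCommGroup V] [Module ℂ V]
    [AddCommGroup W] [Module ℂ W] {β : U → V → W} {r : ℕ}
    (h : HasTensorRankLE ℂ β r) (hsurj : ∀ x : W, ∃ u v, β u v = x) :
    Module.finrank ℂ W ≤ r := by
  obtain ⟨f, g, w, hd⟩ := h
  have hspan : Submodule.span ℂ (Set.range w) = ⊤ := by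
    rw [eq_top_iff]
    intro x _
    obtain ⟨u, v, rfl⟩ := hsurj x
    rw [hd]
    exact Submodule.sum_mem _ fun i _ =>
      Submodule.smul_mem _ _ (Submodule.subset_span ⟨i, rfl⟩)
  calc Module.finrank ℂ W = Module.finrank ℂ (⊤ : Submodule ℂ W) := (finrank_top ℂ W).symm
    _ = (Set.range w).finrank ℂ := by rw [← hspan]; rfl
    _ ≤ Fintype.card (Fin r) := finrank_range_le_card w
    _ = r := Fintype.card_fin r

noncomputable def Ff (k : Fin n) : circulantSpace n →ₗ[ℂ] ℂ where
  toFun A := ∑ m, (A : Matrix (Fin n) (Fin n) ℂ) 0 m * ee n (k * m)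
  map_add' A B := by
    simp [Matrix.add_apply, add_mul, Finset.sum_add_distrib]
  map_smul' c A := by
    simp [Matrix.smul_apply, smul_eq_mul, Finset.mul_sum, mul_assoc]

noncomputable def Gg (k : Fin n) : (Fin n → ℂ) →ₗ[ℂ] ℂ where
  toFun y := ∑ j, y j * ee n (k * (-j))
  map_add' y z := by simp [add_mul, Finset.sum_add_distrib]
  map_smul' c y := by simp [smul_eq_mul, Finset.mul_sum, mul_assoc]

lemma decomp1 (A : circulantSpace n) (y : Fin n → ℂ) :
    (A : Matrix (Fin n) (Fin n) ℂ).mulVec y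
      = ∑ k : Fin n, (Ff k A * Gg k y) • (fun i => (n : ℂ)⁻¹ * ee n (k * i)) := by
  funext i
  have hkey := key (n := n) (fun m => m) (fun l => -l)
    ((A : Matrix (Fin n) (Fin n) ℂ) 0) y i
  simp only [Finset.sum_apply, Pi.smul_apply, smul_eq_mul, Ff, Gg, LinearMap.coe_mk,
    AddHom.coe_mk, Matrix.mulVec, dotProduct]
  rw [show ∑ k : Fin n,
      (∑ m, (A : Matrix (Fin n) (Fin n) ℂ) 0 m * ee n (k * m)) *
        (∑ j, y j * ee n (k * (-j))) * ((n : ℂ)⁻¹ * ee n (k * i))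
      = ∑ m, ∑ l, if m + (-l) + i = 0
          then (A : Matrix (Fin n) (Fin n) ℂ) 0 m * y l else 0 from hkey]
  rw [Finset.sum_comm]
  refine Finset.sum_congr rfl fun j _ => ?_
  have hc : ∀ m : Fin n, (m + -j + i = 0) ↔ (m = j - i) := by
    intro m
    constructor
    · intro h; open Fin.CommRing in linear_combination h
    · intro h; subst h; open Fin.CommRing in ring
  simp only [hc]
  rw [Finset.sum_ite_eq' Finset.univ (j - i)]
  simp [circ_row A.2 i j]

noncomputable def Wk (k : Fin n) : circulantSpace n :=
  ⟨circulantLin n (fun m => (n : ℂ)⁻¹ * ee n (k * m)), ⟨_, rfl⟩⟩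

lemma decomp2 (A B : circulantSpace n) :
    (A : Matrix (Fin n) (Fin n) ℂ) * (B : Matrix (Fin n) (Fin n) ℂ)
      = ∑ k : Fin n, ((Ff k A * Ff k B) • (Wk k) : circulantSpace n) := by
  rw [Submodule.coe_sum]
  ext i j
  have hkey := key (n := n) (fun m => m) (fun l => l)
    ((A : Matrix (Fin n) (Fin n) ℂ) 0) ((B : Matrix (Fin n) (Fin n) ℂ) 0) (i - j)
  simp only [Matrix.sum_apply, Finset.sum_apply, SetLike.val_smul, Matrix.smul_apply, smul_eq_mul, Ff, Wk, circulantLin,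
    LinearMap.coe_mk, AddHom.coe_mk, Matrix.circulant_apply, Matrix.mul_apply]
  rw [show ∑ k : Fin n,
      (∑ m, (A : Matrix (Fin n) (Fin n) ℂ) 0 m * ee n (k * m)) *
        (∑ l, (B : Matrix (Fin n) (Fin n) ℂ) 0 l * ee n (k * l)) *
        ((n : ℂ)⁻¹ * ee n (k * (i - j)))
      = ∑ m, ∑ l, if m + l + (i - j) = 0
          then (A : Matrix (Fin n) (Fin n) ℂ) 0 m * (B : Matrix (Fin n) (Fin n) ℂ) 0 l
          else 0 from hkey]
  rw [Finset.sum_comm]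
  refine Fintype.sum_equiv (Equiv.subLeft j) _ _ fun l => ?_
  have hc : ∀ m : Fin n, (m + Equiv.subLeft j l + (i - j) = 0) ↔ (m = l - i) := by
    intro m
    simp only [Equiv.subLeft_apply]
    constructor
    · intro h; open Fin.CommRing in linear_combination h
    · intro h; subst h; open Fin.CommRing in ring
  simp only [hc]
  rw [Finset.sum_ite_eq' Finset.univ (l - i)]
  simp only [Finset.mem_univ, if_true, Equiv.subLeft_apply]
  rw [circ_row A.2 i l, circ_row B.2 l j]

lemma mem1 : HasTensorRankLE ℂ (fun (A : circulantSpace n) (y : Fin n → ℂ) =>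
    (A : Matrix (Fin n) (Fin n) ℂ).mulVec y) n :=
  ⟨Ff, Gg, fun k => fun i => (n : ℂ)⁻¹ * ee n (k * i), fun A y => decomp1 A y⟩

lemma mem2 : HasTensorRankLE ℂ (fun (A B : circulantSpace n) =>
    (⟨(A : Matrix (Fin n) (Fin n) ℂ) * (B : Matrix (Fin n) (Fin n) ℂ),
      mul_mem_circulantSpace A B⟩ : circulantSpace n)) n :=
  ⟨Ff, Ff, Wk, fun A B => Subtype.ext (decomp2 A B)⟩

/-- The structure tensor `μ_c` of the circulant matrix-vector product
`Circ_n(ℂ) × ℂ^n → ℂ^n` and the structure tensor `μ_C` of the algebra `Circ_n(ℂ)` both have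
rank `n`. -/
theorem tensorRank_circulant (n : ℕ) :
    tensorRank ℂ (fun (A : circulantSpace n) (y : Fin n → ℂ) =>
        (A : Matrix (Fin n) (Fin n) ℂ).mulVec y) = n ∧
    tensorRank ℂ (fun (A B : circulantSpace n) =>
        (⟨(A : Matrix (Fin n) (Fin n) ℂ) * (B : Matrix (Fin n) (Fin n) ℂ),
          mul_mem_circulantSpace A B⟩ : circulantSpace n)) = n := by
  unfold tensorRank
  rcases Nat.eq_zero_or_pos n with h | h
  · subst h
    constructor
    · refine Nat.sInf_eq_zero.mpr (Or.inl ?_)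
      exact ⟨Fin.elim0, Fin.elim0, Fin.elim0, fun u v => by funext i; exact i.elim0⟩
    · refine Nat.sInf_eq_zero.mpr (Or.inl ?_)
      exact ⟨Fin.elim0, Fin.elim0, Fin.elim0,
        fun u v => Subtype.ext (by funext i; exact i.elim0)⟩
  · haveI : NeZero n := ⟨h.ne'⟩
    constructor
    · refine le_antisymm (Nat.sInf_le mem1) (le_csInf ⟨n, mem1⟩ fun r hr => ?_)
      have := lower_bound hr (fun x => ⟨⟨1, one_mem_circ⟩, x, Matrix.one_mulVec x⟩)
      rwa [Module.finrank_fin_fun] at this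
    · refine le_antisymm (Nat.sInf_le mem2) (le_csInf ⟨n, mem2⟩ fun r hr => ?_)
      have := lower_bound hr (fun x => ⟨⟨1, one_mem_circ⟩, x, Subtype.ext (one_mul _)⟩)
      rwa [finrank_circulantSpace] at this
end

section
/- Let Circ_n(ℂ) be the space of n×n complex circulant matrices, let μ_c be the structure tensor of the circulant matrix-vector product β_c : Circ_n(ℂ) × ℂ^n → ℂ^n, and let μ_C be the structure tensor of the algebra Circ_n(ℂ). Then brank(μ_c) = brank(μ_C) = n. -/
open Filter Topology

noncomputable def om (n : ℕ) : ℂ := Complex.exp (2 * Real.pi * Complex.I / n)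

lemma om_ne_zero (n : ℕ) : om n ≠ 0 := Complex.exp_ne_zero _

lemma om_pow_n {n : ℕ} (hn : n ≠ 0) : om n ^ n = 1 :=
  (Complex.isPrimitiveRoot_exp n hn).pow_eq_one

lemma geom_root_sum {n : ℕ} (z : ℂ) (hz : z ^ n = 1) :
    ∑ t : Fin n, z ^ (t : ℕ) = if z = 1 then (n : ℂ) else 0 := by
  rw [Fin.sum_univ_eq_sum_range (fun k => z ^ k)]
  split_ifs with h
  · simp [h]
  · rw [geom_sum_eq h, hz]
    simp

lemma omega_combine {n : ℕ} (t i j k : Fin n) :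
    om n ^ ((t : ℕ) * (k : ℕ)) * om n ^ ((t : ℕ) * (j : ℕ)) *
      (om n ^ ((t : ℕ) * (i : ℕ)))⁻¹
      = (om n ^ ((k + j - i : Fin n) : ℕ)) ^ (t : ℕ) := by
  haveI : NeZero n := ⟨i.pos.ne'⟩
  have hω : om n ^ n = 1 := om_pow_n (NeZero.ne n)
  set c : Fin n := k + j - i with hc
  have hci : c + i = k + j := sub_add_cancel _ _
  have hmod : ((c : ℕ) + (i : ℕ)) % n = ((k : ℕ) + (j : ℕ)) % n := by
    have h := congrArg Fin.val hci
    simpa [Fin.val_add] using h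
  have hmod' : Nat.ModEq n ((c : ℕ) + (i : ℕ)) ((k : ℕ) + (j : ℕ)) := hmod
  have key : om n ^ ((t : ℕ) * (k : ℕ) + (t : ℕ) * (j : ℕ))
      = om n ^ ((t : ℕ) * (c : ℕ) + (t : ℕ) * (i : ℕ)) := by
    rw [← Nat.mul_add, ← Nat.mul_add, pow_eq_pow_mod _ hω,
      pow_eq_pow_mod ((t : ℕ) * ((c : ℕ) + (i : ℕ))) hω]
    congr 1
    exact (Nat.ModEq.mul_left (t : ℕ) hmod').symm
  have hne : om n ^ ((t : ℕ) * (i : ℕ)) ≠ 0 := pow_ne_zero _ (om_ne_zero n)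
  have hmain : om n ^ ((t : ℕ) * (k : ℕ)) * om n ^ ((t : ℕ) * (j : ℕ))
      = (om n ^ (c : ℕ)) ^ (t : ℕ) * om n ^ ((t : ℕ) * (i : ℕ)) := by
    rw [← pow_add, ← pow_mul, ← pow_add, key]
    congr 1
    ring
  rw [hmain, mul_inv_cancel_right₀ hne]

lemma omega_sum {n : ℕ} (i j k : Fin n) :
    ∑ t : Fin n, (om n ^ ((k + j - i : Fin n) : ℕ)) ^ (t : ℕ)
      = if k = i - j then (n : ℂ) else 0 := by
  haveI : NeZero n := ⟨i.pos.ne'⟩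
  have hprim : IsPrimitiveRoot (om n) n := Complex.isPrimitiveRoot_exp n (NeZero.ne n)
  set c : Fin n := k + j - i with hc
  have hz : (om n ^ (c : ℕ)) ^ n = 1 := by
    rw [← pow_mul, Nat.mul_comm, pow_mul, om_pow_n (NeZero.ne n), one_pow]
  rw [geom_root_sum _ hz]
  have hcond : om n ^ (c : ℕ) = 1 ↔ k = i - j := by
    rw [hprim.pow_eq_one_iff_dvd]
    constructor
    · intro h
      have h0 : (c : ℕ) = 0 := Nat.eq_zero_of_dvd_of_lt h c.is_lt
      have hc0 : c = 0 := Fin.ext (by simpa using h0)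
      have : k + j = i := sub_eq_zero.mp hc0
      exact eq_sub_iff_add_eq.mpr this
    · intro h
      have : c = 0 := by
        rw [hc, h, sub_add_cancel, sub_self]
      rw [this]
      simp
  rw [if_congr hcond rfl rfl]

lemma circ_mulVec {n : ℕ} (v w : Fin n → ℂ) (i : Fin n) :
    ((Matrix.circulant v).mulVec w) i
      = ∑ t : Fin n, (∑ k, v k * om n ^ ((t : ℕ) * (k : ℕ))) *
          (∑ j, w j * om n ^ ((t : ℕ) * (j : ℕ))) *
          ((om n ^ ((t : ℕ) * (i : ℕ)))⁻¹ / n) := by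
  haveI : NeZero n := ⟨i.pos.ne'⟩
  have hn : (n : ℂ) ≠ 0 := Nat.cast_ne_zero.mpr (NeZero.ne n)
  have step1 : ∀ t : Fin n,
      (∑ k, v k * om n ^ ((t : ℕ) * (k : ℕ))) *
        (∑ j, w j * om n ^ ((t : ℕ) * (j : ℕ))) *
        ((om n ^ ((t : ℕ) * (i : ℕ)))⁻¹ / n)
      = ∑ k, ∑ j, (v k * w j / n) * ((om n ^ ((k + j - i : Fin n) : ℕ)) ^ (t : ℕ)) := by
    intro t
    rw [Finset.sum_mul_sum, Finset.sum_mul]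
    refine Finset.sum_congr rfl fun k _ => ?_
    rw [Finset.sum_mul]
    refine Finset.sum_congr rfl fun j _ => ?_
    rw [← omega_combine t i j k]
    field_simp
  calc ((Matrix.circulant v).mulVec w) i
      = ∑ j, v (i - j) * w j := by
        simp [Matrix.mulVec, dotProduct, Matrix.circulant_apply]
    _ = ∑ j, ∑ k, if k = i - j then v k * w j else 0 := by
        refine Finset.sum_congr rfl fun j _ => ?_
        rw [Finset.sum_ite_eq' Finset.univ (i - j) (fun k => v k * w j)]
        simp
    _ = ∑ k, ∑ j, (v k * w j / n) * (if k = i - j then (n : ℂ) else 0) := by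
        rw [Finset.sum_comm]
        refine Finset.sum_congr rfl fun k _ => Finset.sum_congr rfl fun j _ => ?_
        split_ifs
        · field_simp
        · simp
    _ = ∑ k, ∑ j, (v k * w j / n) * ∑ t : Fin n, (om n ^ ((k + j - i : Fin n) : ℕ)) ^ (t : ℕ) := by
        refine Finset.sum_congr rfl fun k _ => Finset.sum_congr rfl fun j _ => ?_
        rw [omega_sum i j k]
    _ = ∑ k, ∑ j, ∑ t : Fin n, (v k * w j / n) * (om n ^ ((k + j - i : Fin n) : ℕ)) ^ (t : ℕ) := by
        refine Finset.sum_congr rfl fun k _ => Finset.sum_congr rfl fun j _ => ?_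
        rw [Finset.mul_sum]
    _ = ∑ k, ∑ t : Fin n, ∑ j, (v k * w j / n) * (om n ^ ((k + j - i : Fin n) : ℕ)) ^ (t : ℕ) :=
        Finset.sum_congr rfl fun k _ => Finset.sum_comm
    _ = ∑ t : Fin n, ∑ k, ∑ j, (v k * w j / n) * (om n ^ ((k + j - i : Fin n) : ℕ)) ^ (t : ℕ) :=
        Finset.sum_comm
    _ = _ := (Finset.sum_congr rfl fun t _ => (step1 t).symm)

/-- Eigenvalue functional: `t`-th DFT coefficient of the generating vector of a
circulant matrix, read off linearly from the matrix entries. -/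
noncomputable def Fm (n : ℕ) (t : Fin n) : circulantSpace n →ₗ[ℂ] ℂ where
  toFun A := ∑ k, (A : Matrix (Fin n) (Fin n) ℂ) (k + t) t * om n ^ ((t : ℕ) * (k : ℕ))
  map_add' A B := by
    simp [Matrix.add_apply, add_mul, Finset.sum_add_distrib]
  map_smul' c A := by
    simp [Matrix.smul_apply, smul_eq_mul, Finset.mul_sum, mul_assoc]

/-- DFT coefficient of a vector, as a linear functional. -/
noncomputable def Gm (n : ℕ) (t : Fin n) : (Fin n → ℂ) →ₗ[ℂ] ℂ where
  toFun y := ∑ j, y j * om n ^ ((t : ℕ) * (j : ℕ))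
  map_add' y z := by simp [add_mul, Finset.sum_add_distrib]
  map_smul' c y := by simp [smul_eq_mul, Finset.mul_sum, mul_assoc]

noncomputable def w1 (n : ℕ) (t : Fin n) : Fin n → ℂ :=
  fun i => (om n ^ ((t : ℕ) * (i : ℕ)))⁻¹ / n

lemma Fm_circ {n : ℕ} (t : Fin n) (A : circulantSpace n) (v : Fin n → ℂ)
    (hA : (A : Matrix (Fin n) (Fin n) ℂ) = Matrix.circulant v) :
    Fm n t A = ∑ k, v k * om n ^ ((t : ℕ) * (k : ℕ)) := by
  show (∑ k, (A : Matrix (Fin n) (Fin n) ℂ) (k + t) t * om n ^ ((t : ℕ) * (k : ℕ))) = _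
  refine Finset.sum_congr rfl fun k _ => ?_
  haveI : NeZero n := ⟨k.pos.ne'⟩
  rw [hA, Matrix.circulant_apply, add_sub_cancel_right]

lemma dec1 {n : ℕ} (A : circulantSpace n) (y : Fin n → ℂ) :
    (A : Matrix (Fin n) (Fin n) ℂ).mulVec y
      = ∑ t, ((Fm n t A) * (Gm n t y)) • w1 n t := by
  obtain ⟨v, hv⟩ := A.2
  have hA : (A : Matrix (Fin n) (Fin n) ℂ) = Matrix.circulant v := hv.symm
  funext i
  rw [hA, circ_mulVec v y i, Finset.sum_apply]
  refine Finset.sum_congr rfl fun t _ => ?_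
  rw [Pi.smul_apply, smul_eq_mul, Fm_circ t A v hA]
  rfl

lemma dec2 {n : ℕ} (A B : circulantSpace n) :
    (⟨(A : Matrix (Fin n) (Fin n) ℂ) * (B : Matrix (Fin n) (Fin n) ℂ),
        mul_mem_circulantSpace A B⟩ : circulantSpace n)
      = ∑ t, ((Fm n t A) * (Fm n t B)) •
          (⟨Matrix.circulant (w1 n t), ⟨w1 n t, rfl⟩⟩ : circulantSpace n) := by
  obtain ⟨v, hv⟩ := A.2
  obtain ⟨u, hu⟩ := B.2
  have hA : (A : Matrix (Fin n) (Fin n) ℂ) = Matrix.circulant v := hv.symm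
  have hB : (B : Matrix (Fin n) (Fin n) ℂ) = Matrix.circulant u := hu.symm
  apply Subtype.ext
  have hcoe : ((∑ t, ((Fm n t A) * (Fm n t B)) •
        (⟨Matrix.circulant (w1 n t), ⟨w1 n t, rfl⟩⟩ : circulantSpace n) :
        circulantSpace n) : Matrix (Fin n) (Fin n) ℂ)
      = ∑ t, ((Fm n t A) * (Fm n t B)) • Matrix.circulant (w1 n t) := by
    rw [AddSubmonoidClass.coe_finset_sum]
    rfl
  rw [hcoe]
  show (A : Matrix (Fin n) (Fin n) ℂ) * (B : Matrix (Fin n) (Fin n) ℂ) = _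
  rw [hA, hB, Matrix.Fin.circulant_mul]
  have hsum : ∑ t, ((Fm n t A) * (Fm n t B)) • Matrix.circulant (w1 n t)
      = Matrix.circulant (∑ t, ((Fm n t A) * (Fm n t B)) • w1 n t) := by
    simp_rw [← Matrix.circulant_smul]
    exact (map_sum (circulantLin n) (fun t => ((Fm n t A) * (Fm n t B)) • w1 n t)
      Finset.univ).symm
  rw [hsum]
  refine congrArg Matrix.circulant (funext fun i => ?_)
  rw [circ_mulVec v u i, Finset.sum_apply]
  refine Finset.sum_congr rfl fun t _ => ?_
  rw [Pi.smul_apply, smul_eq_mul, Fm_circ t A v hA, Fm_circ t B u hB]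
  rfl

lemma det_sum_rank_lt {n r : ℕ} (hrn : r < n) (a b : Fin r → Fin n → ℂ) :
    (Matrix.of fun i j : Fin n => ∑ t, a t j * b t i).det = 0 := by
  have hnotinj : ¬ Function.Injective
      ((Matrix.of a : Matrix (Fin r) (Fin n) ℂ).mulVecLin) := by
    intro hinj
    have h := LinearMap.finrank_le_finrank_of_injective hinj
    rw [Module.finrank_fin_fun, Module.finrank_fin_fun] at h
    omega
  obtain ⟨x, y, hxy, hne⟩ := Function.not_injective_iff.mp hnotinj
  refine (Matrix.exists_mulVec_eq_zero_iff).mp ⟨x - y, sub_ne_zero.mpr hne, ?_⟩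
  have hz : (Matrix.of a : Matrix (Fin r) (Fin n) ℂ).mulVecLin (x - y) = 0 := by
    rw [map_sub, hxy, sub_self]
  have hzt : ∀ t, ∑ j, a t j * (x - y) j = 0 := by
    intro t
    have h := congrFun hz t
    simpa [Matrix.mulVecLin_apply, Matrix.mulVec, dotProduct] using h
  funext i
  show ∑ j, (∑ t, a t j * b t i) * (x - y) j = 0
  calc ∑ j, (∑ t, a t j * b t i) * (x - y) j
      = ∑ j, ∑ t, a t j * b t i * (x - y) j := by
        refine Finset.sum_congr rfl fun j _ => ?_
        rw [Finset.sum_mul]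
    _ = ∑ t, ∑ j, a t j * b t i * (x - y) j := Finset.sum_comm
    _ = ∑ t, b t i * ∑ j, a t j * (x - y) j := by
        refine Finset.sum_congr rfl fun t _ => ?_
        rw [Finset.mul_sum]
        exact Finset.sum_congr rfl fun j _ => by ring
    _ = 0 := by
        simp only [Pi.sub_apply] at hzt
        simp [hzt]

lemma tendsto_one_det_absurd {n : ℕ} (M : ℕ → Matrix (Fin n) (Fin n) ℂ)
    (h0 : ∀ m, (M m).det = 0)
    (hlim : Tendsto M atTop (𝓝 1)) : False := by
  have h1 : Tendsto (fun m => (M m).det) atTop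
      (𝓝 (Matrix.det (1 : Matrix (Fin n) (Fin n) ℂ))) :=
    ((Continuous.matrix_det continuous_id).tendsto _).comp hlim
  rw [Matrix.det_one] at h1
  have heq : (fun m => (M m).det) = fun _ => (0 : ℂ) := funext h0
  rw [heq] at h1
  exact one_ne_zero (tendsto_nhds_unique h1 tendsto_const_nhds)

/-- The structure tensor `μ_c` of the circulant matrix-vector product
`Circ_n(ℂ) × ℂ^n → ℂ^n` and the structure tensor `μ_C` of the algebra `Circ_n(ℂ)` both have
border rank `n`. -/
theorem borderRank_circulant (n : ℕ) :
    borderRank ℂ (fun (A : circulantSpace n) (y : Fin n → ℂ) =>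
        (A : Matrix (Fin n) (Fin n) ℂ).mulVec y) = n ∧
    borderRank ℂ (fun (A B : circulantSpace n) =>
        (⟨(A : Matrix (Fin n) (Fin n) ℂ) * (B : Matrix (Fin n) (Fin n) ℂ),
          mul_mem_circulantSpace A B⟩ : circulantSpace n)) = n := by
  constructor
  · -- the matrix-vector product tensor
    have hm1 : n ∈ {r | ∃ s : ℕ → ((circulantSpace n) → (Fin n → ℂ) → (Fin n → ℂ)),
        (∀ m, HasTensorRankLE ℂ (s m) r) ∧
        ∀ u v, Tendsto (fun m => s m u v) atTop
          (𝓝 ((u : Matrix (Fin n) (Fin n) ℂ).mulVec v))} :=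
      ⟨fun _ A y => (A : Matrix (Fin n) (Fin n) ℂ).mulVec y,
        fun _ => ⟨Fm n, Gm n, w1 n, dec1⟩, fun _ _ => tendsto_const_nhds⟩
    refine le_antisymm (Nat.sInf_le hm1) (le_csInf ⟨n, hm1⟩ ?_)
    rintro r ⟨s, hrank, hconv⟩
    by_contra hlt
    push_neg at hlt
    haveI : NeZero n := ⟨by omega⟩
    choose f g w hdec using hrank
    set Ie : circulantSpace n := ⟨1, ⟨Pi.single 0 1, by
        show Matrix.circulant (Pi.single 0 1) = 1
        exact Matrix.circulant_single_one ℂ (Fin n)⟩⟩ with hIe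
    refine tendsto_one_det_absurd
      (fun m => Matrix.of fun i j : Fin n =>
        ∑ t, (f m t Ie * g m t (Pi.single j 1)) * (w m t i))
      (fun m => det_sum_rank_lt hlt _ _) ?_
    refine tendsto_pi_nhds.mpr fun i => tendsto_pi_nhds.mpr fun j => ?_
    have h := tendsto_pi_nhds.mp (hconv Ie (Pi.single j 1)) i
    have hval : ((Ie : Matrix (Fin n) (Fin n) ℂ).mulVec (Pi.single j 1)) i
        = (1 : Matrix (Fin n) (Fin n) ℂ) i j := by
      show ((1 : Matrix (Fin n) (Fin n) ℂ).mulVec (Pi.single j 1)) i = _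
      rw [Matrix.one_mulVec, Pi.single_apply, Matrix.one_apply]
    have hfun : (fun m => (Matrix.of fun i j : Fin n =>
        ∑ t, (f m t Ie * g m t (Pi.single j 1)) * (w m t i)) i j)
        = fun m => s m Ie (Pi.single j 1) i := by
      funext m
      rw [Matrix.of_apply, hdec m Ie (Pi.single j 1)]
      simp [Finset.sum_apply]
    rw [hfun, ← hval]
    exact h
  · -- the algebra structure tensor
    have hm2 : n ∈ {r | ∃ s : ℕ → ((circulantSpace n) → (circulantSpace n) → (circulantSpace n)),
        (∀ m, HasTensorRankLE ℂ (s m) r) ∧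
        ∀ u v, Tendsto (fun m => s m u v) atTop
          (𝓝 (⟨(u : Matrix (Fin n) (Fin n) ℂ) * (v : Matrix (Fin n) (Fin n) ℂ),
            mul_mem_circulantSpace u v⟩ : circulantSpace n))} :=
      ⟨fun _ A B => (⟨(A : Matrix (Fin n) (Fin n) ℂ) * (B : Matrix (Fin n) (Fin n) ℂ),
          mul_mem_circulantSpace A B⟩ : circulantSpace n),
        fun _ => ⟨Fm n, Fm n,
          fun t => (⟨Matrix.circulant (w1 n t), ⟨w1 n t, rfl⟩⟩ : circulantSpace n), dec2⟩,
        fun _ _ => tendsto_const_nhds⟩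
    refine le_antisymm (Nat.sInf_le hm2) (le_csInf ⟨n, hm2⟩ ?_)
    rintro r ⟨s, hrank, hconv⟩
    by_contra hlt
    push_neg at hlt
    haveI : NeZero n := ⟨by omega⟩
    choose f g w hdec using hrank
    set Ie : circulantSpace n := ⟨1, ⟨Pi.single 0 1, by
        show Matrix.circulant (Pi.single 0 1) = 1
        exact Matrix.circulant_single_one ℂ (Fin n)⟩⟩ with hIe
    set Cj : Fin n → circulantSpace n := fun j =>
      ⟨Matrix.circulant (Pi.single j 1), ⟨Pi.single j 1, rfl⟩⟩ with hCj
    refine tendsto_one_det_absurd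
      (fun m => Matrix.of fun i j : Fin n =>
        ∑ t, (f m t Ie * g m t (Cj j)) *
          ((w m t : circulantSpace n) : Matrix (Fin n) (Fin n) ℂ) i 0)
      (fun m => det_sum_rank_lt hlt _ _) ?_
    refine tendsto_pi_nhds.mpr fun i => tendsto_pi_nhds.mpr fun j => ?_
    have h2 : Tendsto (fun m => ((s m Ie (Cj j) : circulantSpace n) :
        Matrix (Fin n) (Fin n) ℂ)) atTop
        (𝓝 ((Ie : Matrix (Fin n) (Fin n) ℂ) * ((Cj j : circulantSpace n) :
          Matrix (Fin n) (Fin n) ℂ))) :=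
      (continuous_subtype_val.tendsto _).comp (hconv Ie (Cj j))
    have h3 := tendsto_pi_nhds.mp (tendsto_pi_nhds.mp h2 i) 0
    have hval : ((Ie : Matrix (Fin n) (Fin n) ℂ) *
        ((Cj j : circulantSpace n) : Matrix (Fin n) (Fin n) ℂ)) i 0
        = (1 : Matrix (Fin n) (Fin n) ℂ) i j := by
      show ((1 * Matrix.circulant (Pi.single j 1) : Matrix (Fin n) (Fin n) ℂ)) i 0 = _
      rw [one_mul, Matrix.circulant_apply, sub_zero, Pi.single_apply, Matrix.one_apply]
    have hfun : (fun m => (Matrix.of fun i j : Fin n =>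
        ∑ t, (f m t Ie * g m t (Cj j)) *
          ((w m t : circulantSpace n) : Matrix (Fin n) (Fin n) ℂ) i 0) i j)
        = fun m => ((s m Ie (Cj j) : circulantSpace n) : Matrix (Fin n) (Fin n) ℂ) i 0 := by
      funext m
      rw [Matrix.of_apply, hdec m Ie (Cj j)]
      rw [AddSubmonoidClass.coe_finset_sum]
      simp [Matrix.sum_apply, Matrix.smul_apply, smul_eq_mul]
    rw [hfun, ← hval]
    exact h3
end

section
/- Let Circ_{2,−1}(ℝ) = {[[a, b], [−b, a]] : a, b ∈ ℝ} be the space of 2×2 real skew-circulant matrices and let β : Circ_{2,−1}(ℝ) × ℝ² → ℝ², (X, v) ↦ Xv. Then the rank of the structure tensor of β, as a tensor over ℝ, equals 3. -/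
open Filter Topology

/-- The space `Circ_{2,−1}(ℝ)` of `2 × 2` real skew-circulant matrices
`[[a, b], [−b, a]]`. -/
noncomputable def skewCirculant2Space : Submodule ℝ (Matrix (Fin 2) (Fin 2) ℝ) where
  carrier := {A | A 1 1 = A 0 0 ∧ A 1 0 = -A 0 1}
  add_mem' := by
    rintro A B ⟨hA1, hA2⟩ ⟨hB1, hB2⟩
    constructor
    · simp [Matrix.add_apply, hA1, hB1]
    · simp [Matrix.add_apply, hA2, hB2]; ring
  zero_mem' := by simp
  smul_mem' := by
    rintro c A ⟨h1, h2⟩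
    constructor
    · simp [Matrix.smul_apply, h1]
    · simp [Matrix.smul_apply, h2]

/-- Monotonicity of `HasTensorRankLE` in the number of terms (pad with zero terms). -/
lemma hasTensorRankLE_mono {𝕜 : Type*} [Field 𝕜] {U V W : Type*}
    [AddCommGroup U] [Module 𝕜 U] [AddCommGroup V] [Module 𝕜 V]
    [AddCommGroup W] [Module 𝕜 W] {β : U → V → W} {r s : ℕ}
    (h : HasTensorRankLE 𝕜 β r) (hrs : r ≤ s) : HasTensorRankLE 𝕜 β s := by
  obtain ⟨f, g, w, hfgw⟩ := h
  refine ⟨fun i => if h : (i : ℕ) < r then f ⟨i, h⟩ else 0,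
          fun i => if h : (i : ℕ) < r then g ⟨i, h⟩ else 0,
          fun i => if h : (i : ℕ) < r then w ⟨i, h⟩ else 0, fun u v => ?_⟩
  rw [hfgw u v]
  have step1 : ∑ i : Fin r, (f i u * g i v) • w i
      = ∑ n ∈ Finset.range r,
          (if h : n < r then (f ⟨n, h⟩ u * g ⟨n, h⟩ v) • w ⟨n, h⟩ else (0 : W)) := by
    rw [← Fin.sum_univ_eq_sum_range]
    exact Finset.sum_congr rfl fun i _ => by simp [i.isLt]
  have step2 : ∑ n ∈ Finset.range r,
          (if h : n < r then (f ⟨n, h⟩ u * g ⟨n, h⟩ v) • w ⟨n, h⟩ else (0 : W))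
      = ∑ n ∈ Finset.range s,
          (if h : n < r then (f ⟨n, h⟩ u * g ⟨n, h⟩ v) • w ⟨n, h⟩ else (0 : W)) := by
    refine Finset.sum_subset (Finset.range_subset_range.2 hrs) ?_
    intro n _ hn
    simp only [Finset.mem_range, not_lt] at hn
    simp [Nat.not_lt.mpr hn]
  have step3 : ∑ n ∈ Finset.range s,
          (if h : n < r then (f ⟨n, h⟩ u * g ⟨n, h⟩ v) • w ⟨n, h⟩ else (0 : W))
      = ∑ i : Fin s, ((if h : (i : ℕ) < r then f ⟨i, h⟩ else 0) u *
          (if h : (i : ℕ) < r then g ⟨i, h⟩ else 0) v) •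
          (if h : (i : ℕ) < r then w ⟨i, h⟩ else (0 : W)) := by
    rw [← Fin.sum_univ_eq_sum_range]
    refine Finset.sum_congr rfl fun i _ => ?_
    by_cases hi : (i : ℕ) < r <;> simp [hi]
  rw [step1, step2, step3]

/-- The skew-circulant matrix-vector product has a 3-term decomposition (Gauss's trick). -/
lemma skewCirculant2_rank_le_three :
    HasTensorRankLE ℝ (fun (A : skewCirculant2Space) (v : Fin 2 → ℝ) =>
        (A : Matrix (Fin 2) (Fin 2) ℝ).mulVec v) 3 := by
  refine ⟨![{ toFun := fun A => (A : Matrix (Fin 2) (Fin 2) ℝ) 0 0,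
              map_add' := fun A B => by simp, map_smul' := fun c A => by simp },
            { toFun := fun A => (A : Matrix (Fin 2) (Fin 2) ℝ) 0 0 -
                (A : Matrix (Fin 2) (Fin 2) ℝ) 0 1,
              map_add' := fun A B => by simp; ring,
              map_smul' := fun c A => by simp; ring },
            { toFun := fun A => (A : Matrix (Fin 2) (Fin 2) ℝ) 0 0 +
                (A : Matrix (Fin 2) (Fin 2) ℝ) 0 1,
              map_add' := fun A B => by simp; ring,
              map_smul' := fun c A => by simp; ring }],
          ![{ toFun := fun v => v 0 + v 1,
              map_add' := fun x y => by simp; ring,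
              map_smul' := fun c x => by simp; ring },
            { toFun := fun v => v 1,
              map_add' := fun x y => by simp, map_smul' := fun c x => by simp },
            { toFun := fun v => v 0,
              map_add' := fun x y => by simp, map_smul' := fun c x => by simp }],
          ![![1, 1], ![-1, 0], ![0, -1]], fun A v => ?_⟩
  obtain ⟨h11, h10⟩ := A.2
  funext x
  fin_cases x <;>
    simp [Matrix.mulVec, dotProduct, Fin.sum_univ_two, Fin.sum_univ_three,
      h11, h10] <;> erw [AddHom.coe_mk] <;> ring

/-- The skew-circulant matrix-vector product has no 2-term decomposition. -/
lemma skewCirculant2_not_rank_le_two :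
    ¬ HasTensorRankLE ℝ (fun (A : skewCirculant2Space) (v : Fin 2 → ℝ) =>
        (A : Matrix (Fin 2) (Fin 2) ℝ).mulVec v) 2 := by
  rintro ⟨f, g, w, h⟩
  set uI : skewCirculant2Space := ⟨!![1, 0; 0, 1], by constructor <;> norm_num⟩ with huI
  set uJ : skewCirculant2Space := ⟨!![0, 1; -1, 0], by constructor <;> norm_num⟩ with huJ
  set e0 : Fin 2 → ℝ := ![1, 0] with he0
  set e1 : Fin 2 → ℝ := ![0, 1] with he1
  have E1 := congrFun (h uI e0) 0
  have E2 := congrFun (h uI e0) 1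
  have E3 := congrFun (h uI e1) 0
  have E4 := congrFun (h uI e1) 1
  have E5 := congrFun (h uJ e0) 0
  have E6 := congrFun (h uJ e0) 1
  have E7 := congrFun (h uJ e1) 0
  have E8 := congrFun (h uJ e1) 1
  simp only [huI, huJ, he0, he1, Matrix.mulVec, dotProduct,
    Fin.sum_univ_two, Finset.sum_apply, Pi.smul_apply, smul_eq_mul,
    Matrix.cons_val', Matrix.cons_val_zero, Matrix.cons_val_one, Matrix.head_cons,
    Matrix.empty_val', Matrix.cons_val_fin_one, Matrix.head_fin_const] at E1 E2 E3 E4 E5 E6 E7 E8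
  norm_num at E1 E2 E3 E4 E5 E6 E7 E8
  set c0 := f 0 uI; set c1 := f 1 uI; set d0 := f 0 uJ; set d1 := f 1 uJ
  set a0 := g 0 e0; set a1 := g 0 e1; set b0 := g 1 e0; set b1 := g 1 e1
  have hA : d1 = (d1 * c0 - c1 * d0) * (a0 * w 0 0) := by
    linear_combination d1 * E1 - c1 * E5
  have hB : c1 = (d1 * c0 - c1 * d0) * (a0 * w 0 1) := by
    linear_combination d1 * E2 - c1 * E6
  have hC : -c1 = (d1 * c0 - c1 * d0) * (a1 * w 0 0) := by
    linear_combination d1 * E3 - c1 * E7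
  have hD : d1 = (d1 * c0 - c1 * d0) * (a1 * w 0 1) := by
    linear_combination d1 * E4 - c1 * E8
  have hsum : d1 * d1 + c1 * c1 = 0 := by
    linear_combination d1 * hD + ((d1 * c0 - c1 * d0) * (a1 * w 0 1)) * hA
      - c1 * hC - ((d1 * c0 - c1 * d0) * (a1 * w 0 0)) * hB
  have hc1 : c1 = 0 := by
    have h0 : c1 * c1 = 0 :=
      le_antisymm (by nlinarith [mul_self_nonneg d1]) (mul_self_nonneg c1)
    exact mul_self_eq_zero.mp h0
  rw [hc1] at E1 E2 E3 E4
  have hcontra : (1 : ℝ) = 0 := by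
    linear_combination E1 + (c0 * (a0 * w 0 0)) * E4 - (c0 * (a1 * w 0 0)) * E2
  norm_num at hcontra

/-- The structure tensor of the `2 × 2` real skew-circulant matrix-vector
product `Circ_{2,−1}(ℝ) × ℝ² → ℝ²`, `(X, v) ↦ Xv`, has rank `3` over `ℝ`. -/
theorem tensorRank_skewCirculant2 :
    tensorRank ℝ (fun (A : skewCirculant2Space) (v : Fin 2 → ℝ) =>
        (A : Matrix (Fin 2) (Fin 2) ℝ).mulVec v) = 3 := by
  refine le_antisymm (Nat.sInf_le skewCirculant2_rank_le_three)
    (le_csInf ⟨3, skewCirculant2_rank_le_three⟩ ?_)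
  intro r hr
  by_contra hlt
  push_neg at hlt
  exact skewCirculant2_not_rank_le_two (hasTensorRankLE_mono hr (by omega))
end

section
/- Let μ_ℂ ∈ ℂ* ⊗_ℝ ℂ* ⊗_ℝ ℂ be the structure tensor of ℂ regarded as a 2-dimensional ℝ-algebra, i.e., the structure tensor of the ℝ-bilinear multiplication map ℂ × ℂ → ℂ, (a+bi, c+di) ↦ (ac−bd) + (ad+bc)i. Then both the rank and the border rank of μ_ℂ over ℝ equal 3. -/
open Filter Topology

/-! ### Auxiliary material -/

/-- The (negated Cayley hyperdeterminant type) discriminant of a `2×2×2` tensor given by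
its eight coordinates. -/
def disc8 (pr pi qr qi rr ri sr si : ℝ) : ℝ :=
  (pr * si + pi * sr - qr * ri - qi * rr) ^ 2
    - 4 * (pr * sr - qr * rr) * (pi * si - qi * ri)

/-- The discriminant of the structure tensor of a bilinear operation `ℂ × ℂ → ℂ`. -/
noncomputable def Disc (β : ℂ → ℂ → ℂ) : ℝ :=
  disc8 (β 1 1).re (β 1 1).im (β 1 Complex.I).re (β 1 Complex.I).im
    (β Complex.I 1).re (β Complex.I 1).im (β Complex.I Complex.I).re
    (β Complex.I Complex.I).im

/-- The key algebraic identity: for a rank-`2` tensor, the discriminant is a perfect square. -/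
lemma disc8_rank_two (a1 a2 b1 b2 c1 c2 d1 d2 u0 v0 u1 v1 : ℝ) :
    disc8 (a1 * b1 * u0 + c1 * d1 * u1) (a1 * b1 * v0 + c1 * d1 * v1)
      (a1 * b2 * u0 + c1 * d2 * u1) (a1 * b2 * v0 + c1 * d2 * v1)
      (a2 * b1 * u0 + c2 * d1 * u1) (a2 * b1 * v0 + c2 * d1 * v1)
      (a2 * b2 * u0 + c2 * d2 * u1) (a2 * b2 * v0 + c2 * d2 * v1)
      = ((a1 * c2 - a2 * c1) * (b1 * d2 - b2 * d1) * (u0 * v1 - u1 * v0)) ^ 2 := by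
  unfold disc8; ring

/-- Padding a decomposition with a zero term. -/
lemma HasTensorRankLE.succ {β : ℂ → ℂ → ℂ} {r : ℕ} (h : HasTensorRankLE ℝ β r) :
    HasTensorRankLE ℝ β (r + 1) := by
  obtain ⟨f, g, w, hβ⟩ := h
  refine ⟨Fin.snoc f 0, Fin.snoc g 0, Fin.snoc w 0, fun u v => ?_⟩
  rw [hβ u v, Fin.sum_univ_castSucc]
  simp [Fin.snoc_castSucc, Fin.snoc_last]

lemma HasTensorRankLE.mono {β : ℂ → ℂ → ℂ} {r r' : ℕ} (h : HasTensorRankLE ℝ β r)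
    (hrr : r ≤ r') : HasTensorRankLE ℝ β r' := by
  induction r', hrr using Nat.le_induction with
  | base => exact h
  | succ n hn ih => exact ih.succ

/-- A tensor of rank at most `2` has nonnegative discriminant. -/
lemma disc_nonneg_of_rank_le_two {β : ℂ → ℂ → ℂ} (h : HasTensorRankLE ℝ β 2) :
    0 ≤ Disc β := by
  obtain ⟨f, g, w, hβ⟩ := h
  have hre : ∀ u v : ℂ, (β u v).re
      = f 0 u * g 0 v * (w 0).re + f 1 u * g 1 v * (w 1).re := by
    intro u v
    rw [hβ u v, Fin.sum_univ_two]
    simp [Complex.add_re, Complex.smul_re]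
  have him : ∀ u v : ℂ, (β u v).im
      = f 0 u * g 0 v * (w 0).im + f 1 u * g 1 v * (w 1).im := by
    intro u v
    rw [hβ u v, Fin.sum_univ_two]
    simp [Complex.add_im, Complex.smul_im]
  unfold Disc
  rw [hre, hre, hre, hre, him, him, him, him]
  rw [disc8_rank_two (f 0 1) (f 0 Complex.I) (g 0 1) (g 0 Complex.I)
    (f 1 1) (f 1 Complex.I) (g 1 1) (g 1 Complex.I)
    (w 0).re (w 0).im (w 1).re (w 1).im]
  positivity

/-- The discriminant of complex multiplication is `-4`. -/
lemma disc_mul : Disc (fun z w : ℂ => z * w) = -4 := by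
  unfold Disc disc8
  norm_num

/-- Complex multiplication has tensor rank at most `3`. -/
lemma mul_rank_le_three : HasTensorRankLE ℝ (fun z w : ℂ => z * w) 3 := by
  refine ⟨![Complex.reLm, Complex.imLm, Complex.reLm + Complex.imLm],
    ![Complex.reLm, Complex.imLm, Complex.reLm + Complex.imLm],
    ![1 - Complex.I, -1 - Complex.I, Complex.I], fun u v => ?_⟩
  rw [Fin.sum_univ_three]
  simp only [Matrix.cons_val_zero, Matrix.cons_val_one, Matrix.head_cons,
    Matrix.cons_val_two, Matrix.tail_cons, LinearMap.add_apply,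
    Complex.reLm_coe, Complex.imLm_coe]
  apply Complex.ext <;>
    simp [Complex.mul_re, Complex.mul_im, Complex.add_re, Complex.add_im,
      Complex.smul_re, Complex.smul_im, Complex.sub_re, Complex.sub_im] <;>
    ring

/-- The structure tensor `μ_ℂ` of `ℂ` regarded as a 2-dimensional
`ℝ`-algebra, i.e. of the `ℝ`-bilinear multiplication map `ℂ × ℂ → ℂ`, has rank `3` and border
rank `3` over `ℝ`. -/
theorem tensorRank_and_borderRank_complexMul :
    tensorRank ℝ (fun z w : ℂ => z * w) = 3 ∧
    borderRank ℝ (fun z w : ℂ => z * w) = 3 := by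
  have hrank_not2 : ∀ {β : ℂ → ℂ → ℂ}, Disc β < 0 → ∀ r ≤ 2, ¬ HasTensorRankLE ℝ β r := by
    intro β hβ r hr h
    exact absurd (disc_nonneg_of_rank_le_two (h.mono hr)) (not_le.2 hβ)
  constructor
  · apply le_antisymm
    · exact csInf_le (OrderBot.bddBelow _) mul_rank_le_three
    · refine le_csInf ⟨3, mul_rank_le_three⟩ fun r hr => ?_
      by_contra hlt
      push_neg at hlt
      exact hrank_not2 (by rw [disc_mul]; norm_num) r (by omega) hr
  · apply le_antisymm
    · exact csInf_le (OrderBot.bddBelow _)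
        ⟨fun _ => fun z w : ℂ => z * w, fun _ => mul_rank_le_three,
          fun u v => tendsto_const_nhds⟩
    · refine le_csInf ⟨3, fun _ => fun z w : ℂ => z * w, fun _ => mul_rank_le_three,
        fun u v => tendsto_const_nhds⟩ fun r hr => ?_
      by_contra hlt
      push_neg at hlt
      obtain ⟨s, hs, hconv⟩ := hr
      -- the discriminant is continuous, hence nonnegative in the limit
      have hc : Continuous (fun x : ℂ × ℂ × ℂ × ℂ =>
          disc8 x.1.re x.1.im x.2.1.re x.2.1.im x.2.2.1.re x.2.2.1.im
            x.2.2.2.re x.2.2.2.im) := by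
        unfold disc8; fun_prop
      have ht : Tendsto (fun m => ((s m 1 1, s m 1 Complex.I, s m Complex.I 1,
          s m Complex.I Complex.I) : ℂ × ℂ × ℂ × ℂ)) atTop
          (𝓝 ((1 : ℂ) * 1, (1 : ℂ) * Complex.I, Complex.I * 1,
            Complex.I * Complex.I)) :=
        (hconv 1 1).prodMk_nhds ((hconv 1 Complex.I).prodMk_nhds
          ((hconv Complex.I 1).prodMk_nhds (hconv Complex.I Complex.I)))
      have hD := (hc.tendsto ((1 : ℂ) * 1, (1 : ℂ) * Complex.I, Complex.I * 1,
        Complex.I * Complex.I)).comp ht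
      have hge := ge_of_tendsto' hD (fun m => by
        simp only [Function.comp]
        have h0 := disc_nonneg_of_rank_le_two ((hs m).mono (show r ≤ 2 by omega))
        unfold Disc at h0
        exact h0)
      norm_num [disc8] at hge
end

section
/- Let Toep_n(ℂ) be the space of n×n complex Toeplitz matrices and let β_t : Toep_n(ℂ) × ℂ^n → ℂ^n, (A, x) ↦ Ax, be the Toeplitz matrix-vector product with structure tensor μ_t. Then rank(μ_t) = 2n − 1. -/
open Filter Topology

/-- The space `Toep_n(ℂ)` of `n × n` complex Toeplitz matrices: matrices whose `(i,j)` entry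
depends only on `j − i` (constant along diagonals). -/
noncomputable def toeplitzSpace (n : ℕ) : Submodule ℂ (Matrix (Fin n) (Fin n) ℂ) where
  carrier := {A | ∀ i j k l : Fin n, (j : ℤ) - (i : ℤ) = (l : ℤ) - (k : ℤ) → A i j = A k l}
  add_mem' := by
    intro A B hA hB i j k l h
    simp [Matrix.add_apply, hA i j k l h, hB i j k l h]
  zero_mem' := by intro i j k l _; simp
  smul_mem' := by
    intro c A hA i j k l h
    simp [Matrix.smul_apply, hA i j k l h]


private def trow (m : ℕ) (d : Fin (2*m+1)) : Fin (m+1) :=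
  if h : (d:ℕ) < m+1 then ⟨d, h⟩ else ⟨0, Nat.succ_pos m⟩

private def tcol (m : ℕ) (d : Fin (2*m+1)) : Fin (m+1) :=
  if h : (d:ℕ) < m+1 then ⟨0, Nat.succ_pos m⟩ else ⟨2*m+1 - d, by have := d.isLt; omega⟩

private def td0 (m : ℕ) (k j : Fin (m+1)) : Fin (2*m+1) :=
  ⟨((k:ℕ) + (2*m+1 - (j:ℕ))) % (2*m+1), Nat.mod_lt _ (by omega)⟩

private lemma td0_val (m : ℕ) (k j : Fin (m+1)) :
    ((td0 m k j : ℕ)) = if (j:ℕ) ≤ k then (k:ℕ) - j else 2*m+1 - ((j:ℕ) - k) := by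
  have hj := j.isLt; have hk := k.isLt
  show ((k:ℕ) + (2*m+1 - (j:ℕ))) % (2*m+1) = _
  rcases le_or_gt (j:ℕ) (k:ℕ) with h | h
  · rw [if_pos h]
    have he : (k:ℕ) + (2*m+1 - (j:ℕ)) = (2*m+1) + ((k:ℕ) - j) := by omega
    rw [he, Nat.add_mod_left, Nat.mod_eq_of_lt (by omega)]
  · rw [if_neg (by omega), Nat.mod_eq_of_lt (by omega)]
    omega

private lemma tcol_sub_trow (m : ℕ) (k j : Fin (m+1)) :
    ((tcol m (td0 m k j) : ℕ) : ℤ) - ((trow m (td0 m k j) : ℕ) : ℤ) = ((j:ℕ) : ℤ) - ((k:ℕ) : ℤ) := by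
  have hj := j.isLt; have hk := k.isLt
  have hv := td0_val m k j
  unfold trow tcol
  rcases le_or_gt (j:ℕ) (k:ℕ) with h | h
  · rw [if_pos h] at hv
    have hlt : ((td0 m k j : ℕ)) < m+1 := by omega
    rw [dif_pos hlt, dif_pos hlt]
    push_cast
    omega
  · rw [if_neg (by omega)] at hv
    have hge : ¬ ((td0 m k j : ℕ)) < m+1 := by omega
    rw [dif_neg hge, dif_neg hge]
    push_cast
    omega

private lemma td0_dvd_iff (m : ℕ) (k j : Fin (m+1)) (d : Fin (2*m+1)) :
    (2*m+1) ∣ ((d:ℕ) + (j:ℕ) + (2*m+1 - (k:ℕ))) ↔ d = td0 m k j := by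
  have hd := d.isLt; have hj := j.isLt; have hk := k.isLt
  have hv := td0_val m k j
  constructor
  · rintro ⟨c, hc⟩
    have hc3 : c < 3 := by
      by_contra hge
      have h3 : (2*m+1) * 3 ≤ (2*m+1) * c := Nat.mul_le_mul_left _ (by omega)
      omega
    refine Fin.ext ?_
    interval_cases c <;> (rw [hv]; split_ifs with h <;> omega)
  · rintro rfl
    refine ⟨if (j:ℕ) ≤ k then 1 else 2, ?_⟩
    rw [hv]
    split_ifs with h <;> omega

private lemma sum_primroot_pow {N : ℕ} {ζ : ℂ} (hζ : IsPrimitiveRoot ζ N) (M : ℕ) :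
    ∑ i ∈ Finset.range N, ζ ^ (i * M) = if N ∣ M then (N : ℂ) else 0 := by
  have key : ∀ i, ζ ^ (i*M) = (ζ^M)^i := fun i => by rw [← pow_mul, Nat.mul_comm]
  simp_rw [key]
  by_cases h : N ∣ M
  · rw [if_pos h, (hζ.pow_eq_one_iff_dvd M).mpr h]; simp
  · rw [if_neg h]
    have h1 : ζ^M ≠ 1 := fun e => h ((hζ.pow_eq_one_iff_dvd M).mp e)
    rw [geom_sum_eq h1]
    have h2 : (ζ^M)^N = 1 := by rw [← pow_mul, mul_comm, pow_mul, hζ.pow_eq_one, one_pow]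
    rw [h2]; simp

private noncomputable def tf (m : ℕ) (ζ : ℂ) (i : Fin (2*m+1)) :
    toeplitzSpace (m+1) →ₗ[ℂ] ℂ where
  toFun A := ∑ d : Fin (2*m+1),
    (A : Matrix (Fin (m+1)) (Fin (m+1)) ℂ) (trow m d) (tcol m d) * ζ ^ ((i:ℕ) * (d:ℕ))
  map_add' A B := by
    simp [Matrix.add_apply, add_mul, Finset.sum_add_distrib]
  map_smul' c A := by
    simp [Matrix.smul_apply, smul_eq_mul, mul_assoc, Finset.mul_sum]

private noncomputable def tg (m : ℕ) (ζ : ℂ) (i : Fin (2*m+1)) :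
    (Fin (m+1) → ℂ) →ₗ[ℂ] ℂ where
  toFun x := ∑ j : Fin (m+1), x j * ζ ^ ((i:ℕ) * (j:ℕ))
  map_add' x y := by
    simp [add_mul, Finset.sum_add_distrib]
  map_smul' c x := by
    simp [smul_eq_mul, mul_assoc, Finset.mul_sum]

private lemma toeplitz_upper_core (m : ℕ) :
    HasTensorRankLE ℂ (fun (A : toeplitzSpace (m+1)) (x : Fin (m+1) → ℂ) =>
        (A : Matrix (Fin (m+1)) (Fin (m+1)) ℂ).mulVec x) (2*m+1) := by
  obtain ⟨ζ, hζ⟩ : ∃ ζ : ℂ, IsPrimitiveRoot ζ (2*m+1) :=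
    ⟨_, Complex.isPrimitiveRoot_exp (2*m+1) (by omega)⟩
  have hNC : ((2*m+1 : ℕ) : ℂ) ≠ 0 := Nat.cast_ne_zero.mpr (by omega)
  refine ⟨tf m ζ, tg m ζ,
    fun i k => ((2*m+1 : ℕ) : ℂ)⁻¹ * ζ ^ ((i:ℕ) * (2*m+1 - (k:ℕ))), ?_⟩
  intro A x
  show (A : Matrix (Fin (m+1)) (Fin (m+1)) ℂ).mulVec x = _
  funext k
  rw [Finset.sum_apply]
  simp only [tf, tg, LinearMap.coe_mk, AddHom.coe_mk, Pi.smul_apply, smul_eq_mul]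
  have hsum : ∀ M : ℕ, ∑ i : Fin (2*m+1), ζ ^ ((i:ℕ) * M)
      = if (2*m+1) ∣ M then ((2*m+1:ℕ):ℂ) else 0 := by
    intro M
    rw [Fin.sum_univ_eq_sum_range (fun i => ζ ^ (i * M))]
    exact sum_primroot_pow hζ M
  set aa : Fin (2*m+1) → ℂ :=
    fun d => (A : Matrix (Fin (m+1)) (Fin (m+1)) ℂ) (trow m d) (tcol m d) with haa
  calc (A : Matrix (Fin (m+1)) (Fin (m+1)) ℂ).mulVec x k
      = ∑ j : Fin (m+1), (A : Matrix (Fin (m+1)) (Fin (m+1)) ℂ) k j * x j := by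
        simp [Matrix.mulVec, dotProduct]
    _ = ∑ j : Fin (m+1), aa (td0 m k j) * x j := by
        refine Finset.sum_congr rfl fun j _ => ?_
        congr 1
        exact A.2 k j (trow m (td0 m k j)) (tcol m (td0 m k j)) (tcol_sub_trow m k j).symm
    _ = ∑ j : Fin (m+1), ∑ d : Fin (2*m+1),
          (if d = td0 m k j then aa d * x j else 0) := by
        refine Finset.sum_congr rfl fun j _ => ?_
        rw [Finset.sum_ite_eq' Finset.univ (td0 m k j) (fun d => aa d * x j)]
        simp
    _ = ∑ d : Fin (2*m+1), ∑ j : Fin (m+1),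
          (if (2*m+1) ∣ ((d:ℕ) + (j:ℕ) + (2*m+1 - (k:ℕ))) then aa d * x j else 0) := by
        rw [Finset.sum_comm]
        refine Finset.sum_congr rfl fun d _ => Finset.sum_congr rfl fun j _ => ?_
        simp only [td0_dvd_iff]
    _ = ∑ d : Fin (2*m+1), ∑ j : Fin (m+1), ∑ i : Fin (2*m+1), aa d * x j *
          (((2*m+1:ℕ):ℂ)⁻¹ * ζ ^ ((i:ℕ) * ((d:ℕ) + (j:ℕ) + (2*m+1 - (k:ℕ))))) := by
        refine Finset.sum_congr rfl fun d _ => Finset.sum_congr rfl fun j _ => ?_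
        rw [← Finset.mul_sum, ← Finset.mul_sum, hsum]
        split_ifs with h
        · rw [inv_mul_cancel₀ hNC, mul_one]
        · simp
    _ = ∑ i : Fin (2*m+1), ∑ d : Fin (2*m+1), ∑ j : Fin (m+1), aa d * x j *
          (((2*m+1:ℕ):ℂ)⁻¹ * ζ ^ ((i:ℕ) * ((d:ℕ) + (j:ℕ) + (2*m+1 - (k:ℕ))))) :=
        Eq.trans (Finset.sum_congr rfl fun d _ => Finset.sum_comm) Finset.sum_comm
    _ = ∑ i : Fin (2*m+1), (∑ d : Fin (2*m+1), aa d * ζ ^ ((i:ℕ) * (d:ℕ))) *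
          (∑ j : Fin (m+1), x j * ζ ^ ((i:ℕ) * (j:ℕ))) *
          (((2*m+1:ℕ):ℂ)⁻¹ * ζ ^ ((i:ℕ) * (2*m+1 - (k:ℕ)))) := by
        refine Finset.sum_congr rfl fun i _ => ?_
        rw [Finset.sum_mul_sum, Finset.sum_mul]
        refine Finset.sum_congr rfl fun d _ => ?_
        rw [Finset.sum_mul]
        refine Finset.sum_congr rfl fun j _ => ?_
        rw [Nat.mul_add, Nat.mul_add, pow_add, pow_add]
        ring

private lemma toeplitz_upper (n : ℕ) :
    HasTensorRankLE ℂ (fun (A : toeplitzSpace n) (x : Fin n → ℂ) =>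
        (A : Matrix (Fin n) (Fin n) ℂ).mulVec x) (2 * n - 1) := by
  cases n with
  | zero =>
    exact ⟨Fin.elim0, Fin.elim0, Fin.elim0, fun u v => funext fun k => k.elim0⟩
  | succ m =>
    have h2 : 2 * (m+1) - 1 = 2*m+1 := by omega
    rw [h2]
    exact toeplitz_upper_core m

private def tmat (m : ℕ) (e : Fin (2*m+1)) : Matrix (Fin (m+1)) (Fin (m+1)) ℂ :=
  fun i j => if ((j:ℕ):ℤ) - ((i:ℕ):ℤ) = ((e:ℕ):ℤ) - (m:ℤ) then 1 else 0

private lemma tmat_mem (m : ℕ) (e : Fin (2*m+1)) : tmat m e ∈ toeplitzSpace (m+1) := by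
  intro i j k l h
  have h' : ((j:ℕ):ℤ) - ((i:ℕ):ℤ) = ((l:ℕ):ℤ) - ((k:ℕ):ℤ) := h
  simp only [tmat, h']

private def tP (m : ℕ) (d : Fin (2*m+1)) : Fin (m+1) :=
  if h : m ≤ (d:ℕ) then ⟨0, Nat.succ_pos m⟩ else ⟨m - d, by omega⟩

private def tQ (m : ℕ) (d : Fin (2*m+1)) : Fin (m+1) :=
  if h : m ≤ (d:ℕ) then ⟨(d:ℕ) - m, by have := d.isLt; omega⟩ else ⟨0, Nat.succ_pos m⟩

private lemma tQ_sub_tP (m : ℕ) (d : Fin (2*m+1)) :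
    ((tQ m d : ℕ) : ℤ) - ((tP m d : ℕ) : ℤ) = ((d:ℕ) : ℤ) - (m : ℤ) := by
  have hd := d.isLt
  unfold tP tQ
  split_ifs with h <;> (push_cast; omega)

private lemma tmat_apply_PQ (m : ℕ) (e d : Fin (2*m+1)) :
    tmat m e (tP m d) (tQ m d) = if e = d then 1 else 0 := by
  unfold tmat
  rw [tQ_sub_tP]
  by_cases h : e = d
  · subst h; simp
  · rw [if_neg h, if_neg]
    intro hc
    exact h (Fin.ext (by omega))

private lemma tmat_li (m : ℕ) : LinearIndependent ℂ (tmat m) := by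
  rw [Fintype.linearIndependent_iff]
  intro c hc d
  have h := congrFun (congrFun hc (tP m d)) (tQ m d)
  rw [Matrix.sum_apply] at h
  simpa [Matrix.smul_apply, smul_eq_mul, tmat_apply_PQ, Finset.sum_ite_eq'] using h

private lemma toeplitz_lower (n r : ℕ)
    (h : HasTensorRankLE ℂ (fun (A : toeplitzSpace n) (x : Fin n → ℂ) =>
        (A : Matrix (Fin n) (Fin n) ℂ).mulVec x) r) : 2 * n - 1 ≤ r := by
  cases n with
  | zero => omega
  | succ m =>
    obtain ⟨f, g, w, hfgw⟩ := h
    have h2 : 2 * (m+1) - 1 = 2*m+1 := by omega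
    rw [h2]
    set T : Fin (2*m+1) → toeplitzSpace (m+1) := fun e => ⟨tmat m e, tmat_mem m e⟩ with hT
    have hTli : LinearIndependent ℂ T := by
      apply LinearIndependent.of_comp ((toeplitzSpace (m+1)).subtype)
      have : ((toeplitzSpace (m+1)).subtype) ∘ T = tmat m := rfl
      rw [this]
      exact tmat_li m
    set F : toeplitzSpace (m+1) →ₗ[ℂ] (Fin r → ℂ) := LinearMap.pi (fun i => f i) with hF
    have hker : LinearMap.ker F = ⊥ := by
      rw [LinearMap.ker_eq_bot']
      intro A hA
      have hfA : ∀ i, f i A = 0 := by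
        intro i
        have := congrFun hA i
        simpa [hF, LinearMap.pi_apply] using this
      have hβ : ∀ x : Fin (m+1) → ℂ, (A : Matrix (Fin (m+1)) (Fin (m+1)) ℂ).mulVec x = 0 := by
        intro x
        have hx := hfgw A x
        simp only [hfA, zero_mul, zero_smul, Finset.sum_const_zero] at hx
        exact hx
      apply Subtype.ext
      show (A : Matrix (Fin (m+1)) (Fin (m+1)) ℂ) = 0
      ext i j
      have := congrFun (hβ (Pi.single j 1)) i
      simpa [Matrix.mulVec, dotProduct, Pi.single_apply, Finset.sum_ite_eq'] using this
    have hFT : LinearIndependent ℂ (F ∘ T) :=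
      hTli.map (by rw [hker]; exact disjoint_bot_right)
    have hcard := hFT.fintype_card_le_finrank
    simpa [Module.finrank_fin_fun] using hcard

/-- The structure tensor `μ_t` of the Toeplitz matrix-vector product
`Toep_n(ℂ) × ℂ^n → ℂ^n`, `(A, x) ↦ Ax`, has rank `2n − 1`. -/
theorem tensorRank_toeplitz_mulVec (n : ℕ) :
    tensorRank ℂ (fun (A : toeplitzSpace n) (x : Fin n → ℂ) =>
        (A : Matrix (Fin n) (Fin n) ℂ).mulVec x) = 2 * n - 1 := by
  apply le_antisymm
  · exact Nat.sInf_le (toeplitz_upper n)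
  · exact le_csInf ⟨_, toeplitz_upper n⟩ fun r hr => toeplitz_lower n r hr
end

section
/- Let Toep_n(ℂ) be the space of n×n complex Toeplitz matrices and let μ_t be the structure tensor of the Toeplitz matrix-vector product β_t : Toep_n(ℂ) × ℂ^n → ℂ^n. Then brank(μ_t) = 2n − 1. -/
open Filter Topology

open Complex Finset

section AuxBR

lemma BR.rootSum (N : ℕ) (hN : 0 < N) (t : ℤ) :
    ∑ k : Fin N, Complex.exp (2 * Real.pi * Complex.I / N) ^ ((k : ℤ) * t)
      = if (N : ℤ) ∣ t then (N : ℂ) else 0 := by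
  set ω := Complex.exp (2 * Real.pi * Complex.I / N) with hω
  have hprim : IsPrimitiveRoot ω N := Complex.isPrimitiveRoot_exp N hN.ne'
  have hstep : ∀ k : Fin N, ω ^ ((k : ℤ) * t) = (ω ^ t) ^ (k : ℕ) := by
    intro k
    rw [mul_comm, zpow_mul, ← zpow_natCast (ω ^ t) (k : ℕ)]
  simp_rw [hstep]
  by_cases hdvd : (N : ℤ) ∣ t
  · have h1 : ω ^ t = 1 := (hprim.zpow_eq_one_iff_dvd t).mpr hdvd
    simp [h1, hdvd]
  · have h1 : ω ^ t ≠ 1 := fun h => hdvd ((hprim.zpow_eq_one_iff_dvd t).mp h)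
    have hN1 : (ω ^ t) ^ N = 1 := by
      rw [← zpow_natCast (ω ^ t) N, ← zpow_mul, mul_comm, zpow_mul, zpow_natCast,
        hprim.pow_eq_one, one_zpow]
    rw [if_neg hdvd, Fin.sum_univ_eq_sum_range, geom_sum_eq h1, hN1]
    simp

lemma BR.rootDelta (N : ℕ) (hN : 0 < N) (t : ℤ) (ht : |t| < N) :
    (N : ℂ)⁻¹ * ∑ k : Fin N, Complex.exp (2 * Real.pi * Complex.I / N) ^ ((k : ℤ) * t)
      = if t = 0 then 1 else 0 := by
  rw [BR.rootSum N hN t]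
  have hNC : (N : ℂ) ≠ 0 := Nat.cast_ne_zero.mpr hN.ne'
  by_cases h0 : t = 0
  · simp [h0, inv_mul_cancel₀ hNC]
  · have : ¬ (N : ℤ) ∣ t := by
      intro hd
      have := Int.le_of_dvd (abs_pos.mpr h0) ((dvd_abs _ _).mpr hd)
      omega
    simp [this, h0]

/-- diagonal index of `e : Fin (2m+1)` -/
def BR.dIdx (m : ℕ) (e : Fin (2 * m + 1)) : ℤ := (e : ℤ) - m

/-- column of the representative entry of diagonal `e` -/
def BR.ciF (m : ℕ) (e : Fin (2 * m + 1)) : Fin (m + 1) :=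
  if h : m ≤ (e : ℕ) then ⟨(e : ℕ) - m, by have := e.isLt; omega⟩ else ⟨0, by omega⟩

/-- row of the representative entry of diagonal `e` -/
def BR.riF (m : ℕ) (e : Fin (2 * m + 1)) : Fin (m + 1) :=
  if h : m ≤ (e : ℕ) then ⟨0, by omega⟩ else ⟨m - (e : ℕ), by omega⟩

lemma BR.ci_sub_ri (m : ℕ) (e : Fin (2 * m + 1)) :
    ((BR.ciF m e : ℕ) : ℤ) - ((BR.riF m e : ℕ) : ℤ) = BR.dIdx m e := by
  unfold BR.ciF BR.riF BR.dIdx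
  by_cases h : m ≤ (e : ℕ) <;> simp [h] <;> omega

lemma BR.dIdx_inj (m : ℕ) {e e' : Fin (2 * m + 1)} (h : BR.dIdx m e = BR.dIdx m e') :
    e = e' := by
  unfold BR.dIdx at h
  exact Fin.ext (by omega)

end AuxBR

noncomputable def BR.evalF (n : ℕ) (i j : Fin n) : toeplitzSpace n →ₗ[ℂ] ℂ where
  toFun A := (A : Matrix (Fin n) (Fin n) ℂ) i j
  map_add' A B := by simp
  map_smul' c A := by simp

lemma BR.upper (m : ℕ) :
    HasTensorRankLE ℂ
      (fun (A : toeplitzSpace (m + 1)) (x : Fin (m + 1) → ℂ) =>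
        (A : Matrix (Fin (m + 1)) (Fin (m + 1)) ℂ).mulVec x) (2 * m + 1) := by
  set N := 2 * m + 1 with hNdef
  have hN : 0 < N := by omega
  set ω := Complex.exp (2 * Real.pi * Complex.I / N) with hω
  have hω0 : ω ≠ 0 := Complex.exp_ne_zero _
  set f : Fin N → (toeplitzSpace (m + 1) →ₗ[ℂ] ℂ) :=
    fun k => ∑ e : Fin N, (ω ^ (-(k : ℤ) * BR.dIdx m e)) • BR.evalF (m + 1) (BR.riF m e) (BR.ciF m e) with hfdef
  set g : Fin N → ((Fin (m + 1) → ℂ) →ₗ[ℂ] ℂ) :=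
    fun k => ∑ j : Fin (m + 1), (ω ^ ((k : ℤ) * ((j : ℕ) : ℤ))) • (LinearMap.proj j : (Fin (m + 1) → ℂ) →ₗ[ℂ] ℂ) with hgdef
  set w : Fin N → (Fin (m + 1) → ℂ) :=
    fun k => fun i => (N : ℂ)⁻¹ * ω ^ (-(k : ℤ) * ((i : ℕ) : ℤ)) with hwdef
  refine ⟨f, g, w, ?_⟩
  intro A x
  funext i
  show ((A : Matrix (Fin (m + 1)) (Fin (m + 1)) ℂ).mulVec x) i = (∑ k : Fin N, (f k A * g k x) • w k) i
  have hA : ∀ i j k l : Fin (m + 1), (j : ℤ) - (i : ℤ) = (l : ℤ) - (k : ℤ) →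
      (A : Matrix (Fin (m + 1)) (Fin (m + 1)) ℂ) i j = (A : Matrix (Fin (m + 1)) (Fin (m + 1)) ℂ) k l := A.2
  set a : Fin N → ℂ := fun e => (A : Matrix (Fin (m + 1)) (Fin (m + 1)) ℂ) (BR.riF m e) (BR.ciF m e) with ha
  -- evaluate the linear maps
  have hstep1 : (∑ k : Fin N, (f k A * g k x) • w k) i
      = ∑ k : Fin N, ∑ e : Fin N, ∑ j : Fin (m + 1),
          (a e * x j) * ((N : ℂ)⁻¹ * ω ^ ((k : ℤ) * (((j : ℕ) : ℤ) - ((i : ℕ) : ℤ) - BR.dIdx m e))) := by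
    rw [Finset.sum_apply]
    refine Finset.sum_congr rfl fun k _ => ?_
    rw [Pi.smul_apply, smul_eq_mul]
    simp only [hfdef, hgdef, hwdef, LinearMap.sum_apply, LinearMap.smul_apply, smul_eq_mul, BR.evalF,
      LinearMap.coe_mk, AddHom.coe_mk, LinearMap.proj_apply]
    rw [Finset.sum_mul_sum, Finset.sum_mul]
    refine Finset.sum_congr rfl fun e _ => ?_
    rw [Finset.sum_mul]
    refine Finset.sum_congr rfl fun j _ => ?_
    have hz : ω ^ ((k : ℤ) * (((j : ℕ) : ℤ) - ((i : ℕ) : ℤ) - BR.dIdx m e))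
        = ω ^ (-(k : ℤ) * BR.dIdx m e) * ω ^ ((k : ℤ) * ((j : ℕ) : ℤ)) * ω ^ (-(k : ℤ) * ((i : ℕ) : ℤ)) := by
      rw [← zpow_add₀ hω0, ← zpow_add₀ hω0]
      ring_nf
    rw [hz, ha]
    erw [AddHom.coe_mk]
    ring
  rw [hstep1, Finset.sum_comm]
  have hstep2 : ∀ e : Fin N, ∑ k : Fin N, ∑ j : Fin (m + 1),
      (a e * x j) * ((N : ℂ)⁻¹ * ω ^ ((k : ℤ) * (((j : ℕ) : ℤ) - ((i : ℕ) : ℤ) - BR.dIdx m e)))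
      = ∑ j : Fin (m + 1), (a e * x j) *
          (if ((j : ℕ) : ℤ) - ((i : ℕ) : ℤ) - BR.dIdx m e = 0 then 1 else 0) := by
    intro e
    rw [Finset.sum_comm]
    refine Finset.sum_congr rfl fun j _ => ?_
    rw [← BR.rootDelta N hN (((j : ℕ) : ℤ) - ((i : ℕ) : ℤ) - BR.dIdx m e) ?_]
    · rw [Finset.mul_sum, ← hω]
      simp [Finset.mul_sum, mul_assoc]
    · have h1 := e.isLt
      have h2 := j.isLt
      have h3 := i.isLt
      simp only [BR.dIdx]
      rw [abs_lt]
      omega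
  simp_rw [hstep2]
  rw [Finset.sum_comm]
  have hstep3 : ∀ j : Fin (m + 1), ∑ e : Fin N,
      (a e * x j) * (if ((j : ℕ) : ℤ) - ((i : ℕ) : ℤ) - BR.dIdx m e = 0 then 1 else 0)
      = (A : Matrix (Fin (m + 1)) (Fin (m + 1)) ℂ) i j * x j := by
    intro j
    have h2 := j.isLt
    have h3 := i.isLt
    set e0 : Fin N := ⟨(j : ℕ) + m - (i : ℕ), by omega⟩ with he0
    have hd0 : BR.dIdx m e0 = ((j : ℕ) : ℤ) - ((i : ℕ) : ℤ) := by
      simp only [BR.dIdx, he0]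
      omega
    have hiff : ∀ e : Fin N, (((j : ℕ) : ℤ) - ((i : ℕ) : ℤ) - BR.dIdx m e = 0) ↔ e = e0 := by
      intro e
      constructor
      · intro h
        exact BR.dIdx_inj m (by rw [hd0]; omega)
      · intro h
        subst h
        rw [hd0]
        ring
    simp_rw [mul_ite, mul_one, mul_zero]
    have : ∀ e : Fin N, (if ((j : ℕ) : ℤ) - ((i : ℕ) : ℤ) - BR.dIdx m e = 0 then a e * x j else 0)
        = (if e = e0 then a e * x j else 0) := fun e => by simp only [hiff e]
    simp_rw [this]
    rw [Finset.sum_ite_eq' Finset.univ e0]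
    simp only [Finset.mem_univ, if_true, ha]
    have : (A : Matrix (Fin (m + 1)) (Fin (m + 1)) ℂ) (BR.riF m e0) (BR.ciF m e0)
        = (A : Matrix (Fin (m + 1)) (Fin (m + 1)) ℂ) i j := by
      apply hA
      rw [BR.ci_sub_ri, hd0]
    rw [this]
  simp_rw [hstep3]
  simp [Matrix.mulVec, dotProduct]



lemma BR.lower (m : ℕ) {r : ℕ}
    (s : ℕ → (toeplitzSpace (m + 1) → (Fin (m + 1) → ℂ) → (Fin (m + 1) → ℂ)))
    (hrank : ∀ t, HasTensorRankLE ℂ (s t) r)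
    (hconv : ∀ u v, Tendsto (fun t => s t u v) atTop
      (𝓝 ((u : Matrix (Fin (m + 1)) (Fin (m + 1)) ℂ).mulVec v))) :
    2 * m + 1 ≤ r := by
  set N := 2 * m + 1 with hNdef
  have humem : ∀ e : Fin N,
      (fun i j : Fin (m + 1) => if ((j : ℤ) - (i : ℤ) = BR.dIdx m e) then (1 : ℂ) else 0)
        ∈ toeplitzSpace (m + 1) := by
    intro e i j k l h
    simp only [h]
  set u : Fin N → toeplitzSpace (m + 1) := fun e => ⟨_, humem e⟩ with hu
  set v : Fin N → (Fin (m + 1) → ℂ) := fun e => Pi.single (BR.ciF m e) 1 with hv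
  set M : ℕ → Matrix (Fin N) (Fin N) ℂ :=
    fun t => Matrix.of fun e e' => s t (u e) (v e') (BR.riF m e') with hM
  have hval : ∀ e e' : Fin N,
      ((u e : Matrix (Fin (m + 1)) (Fin (m + 1)) ℂ).mulVec (v e')) (BR.riF m e')
        = (1 : Matrix (Fin N) (Fin N) ℂ) e e' := by
    intro e e'
    rw [hv]
    simp only [Matrix.mulVec_single]
    have hcond : ((((BR.ciF m e') : ℕ) : ℤ) - (((BR.riF m e') : ℕ) : ℤ) = BR.dIdx m e) ↔ e = e' := by
      rw [BR.ci_sub_ri]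
      constructor
      · intro h
        exact BR.dIdx_inj m h.symm
      · intro h
        rw [h]
    show (if ((((BR.ciF m e') : ℕ) : ℤ) - (((BR.riF m e') : ℕ) : ℤ) = BR.dIdx m e)
        then (1 : ℂ) else 0) * 1 = (1 : Matrix (Fin N) (Fin N) ℂ) e e'
    rw [mul_one, Matrix.one_apply]
    simp only [hcond]
  have hlim : Tendsto M atTop (𝓝 (1 : Matrix (Fin N) (Fin N) ℂ)) := by
    refine tendsto_pi_nhds.mpr ?_
    intro e
    rw [tendsto_pi_nhds]
    intro e'
    have h1 := ((continuous_apply (BR.riF m e')).tendsto _).comp (hconv (u e) (v e'))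
    rw [← hval e e']
    exact h1
  have hdet : Tendsto (fun t => (M t).det) atTop (𝓝 (1 : ℂ)) := by
    have hc : Continuous fun A : Matrix (Fin N) (Fin N) ℂ => A.det :=
      Continuous.matrix_det continuous_id
    have h2 := (hc.tendsto (1 : Matrix (Fin N) (Fin N) ℂ)).comp hlim
    simpa [Function.comp_def] using h2
  obtain ⟨t, ht⟩ := (hdet.eventually_ne one_ne_zero).exists
  obtain ⟨f, g, wv, hs⟩ := hrank t
  by_contra hlt
  push_neg at hlt
  set F : Matrix (Fin N) (Fin r) ℂ := Matrix.of fun e i => f i (u e) with hF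
  set G : Matrix (Fin r) (Fin N) ℂ :=
    Matrix.of fun i e' => g i (v e') * wv i (BR.riF m e') with hG
  have hMt : M t = F * G := by
    ext e e'
    rw [Matrix.mul_apply]
    show s t (u e) (v e') (BR.riF m e') = _
    rw [hs (u e) (v e'), Finset.sum_apply]
    refine Finset.sum_congr rfl fun i2 _ => ?_
    rw [Pi.smul_apply, smul_eq_mul]
    show _ = F e i2 * G i2 e'
    rw [hF, hG]
    simp only [Matrix.of_apply]
    ring
  have hrk : (M t).rank ≤ r := by
    rw [hMt]
    refine le_trans (Matrix.rank_mul_le_right F G) (le_trans (Matrix.rank_le_card_height G) ?_)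
    simp
  have hunit : IsUnit (M t) := (Matrix.isUnit_iff_isUnit_det _).mpr (isUnit_iff_ne_zero.mpr ht)
  have hrkN := Matrix.rank_of_isUnit _ hunit
  rw [hrkN] at hrk
  simp only [Fintype.card_fin] at hrk
  omega

/-- The structure tensor `μ_t` of the Toeplitz matrix-vector product
`Toep_n(ℂ) × ℂ^n → ℂ^n`, `(A, x) ↦ Ax`, has border rank `2n − 1`. -/


theorem borderRank_toeplitz_mulVec (n : ℕ) :
    borderRank ℂ (fun (A : toeplitzSpace n) (x : Fin n → ℂ) =>
        (A : Matrix (Fin n) (Fin n) ℂ).mulVec x) = 2 * n - 1 := by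
  rcases n with _ | m
  · show borderRank ℂ _ = 0
    unfold borderRank
    rw [Nat.sInf_eq_zero]
    left
    refine ⟨fun _ => fun (A : toeplitzSpace 0) (x : Fin 0 → ℂ) =>
        (A : Matrix (Fin 0) (Fin 0) ℂ).mulVec x,
      fun t => ⟨Fin.elim0, Fin.elim0, Fin.elim0, fun u v => funext fun i => i.elim0⟩,
      fun u v => tendsto_const_nhds⟩
  · have hub := BR.upper m
    have hmem : (2 * m + 1) ∈ {r | ∃ s : ℕ → (toeplitzSpace (m + 1) → (Fin (m + 1) → ℂ) → (Fin (m + 1) → ℂ)),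
        (∀ t, HasTensorRankLE ℂ (s t) r) ∧
        ∀ u v, Tendsto (fun t => s t u v) atTop
          (𝓝 ((fun (A : toeplitzSpace (m + 1)) (x : Fin (m + 1) → ℂ) =>
            (A : Matrix (Fin (m + 1)) (Fin (m + 1)) ℂ).mulVec x) u v))} :=
      ⟨fun _ => fun A x => (A : Matrix (Fin (m + 1)) (Fin (m + 1)) ℂ).mulVec x,
        fun _ => hub, fun u v => tendsto_const_nhds⟩
    have h1 := Nat.sInf_le hmem
    have h2 : 2 * m + 1 ≤ sInf {r | ∃ s : ℕ → (toeplitzSpace (m + 1) → (Fin (m + 1) → ℂ) → (Fin (m + 1) → ℂ)),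
        (∀ t, HasTensorRankLE ℂ (s t) r) ∧
        ∀ u v, Tendsto (fun t => s t u v) atTop
          (𝓝 ((fun (A : toeplitzSpace (m + 1)) (x : Fin (m + 1) → ℂ) =>
            (A : Matrix (Fin (m + 1)) (Fin (m + 1)) ℂ).mulVec x) u v))} := by
      obtain ⟨sq, hr, hc⟩ := Nat.sInf_mem (⟨2 * m + 1, hmem⟩ :
        Set.Nonempty {r | ∃ s : ℕ → (toeplitzSpace (m + 1) → (Fin (m + 1) → ℂ) → (Fin (m + 1) → ℂ)),
          (∀ t, HasTensorRankLE ℂ (s t) r) ∧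
          ∀ u v, Tendsto (fun t => s t u v) atTop
            (𝓝 ((fun (A : toeplitzSpace (m + 1)) (x : Fin (m + 1) → ℂ) =>
              (A : Matrix (Fin (m + 1)) (Fin (m + 1)) ℂ).mulVec x) u v))})
      refine BR.lower m sq hr fun u v => ?_
      exact hc u v
    have h3 : 2 * (m + 1) - 1 = 2 * m + 1 := by clear h1 h2 hmem hub; omega
    rw [h3]
    exact le_antisymm (Nat.sInf_le hmem) h2
end

section
/- Let Hank_n(ℂ) be the space of n×n complex Hankel matrices. Let μ_h be the structure tensor of the Hankel matrix-vector product β_h : Hank_n(ℂ) × ℂ^n → ℂ^n, (A, x) ↦ Ax, and let μ_H be the structure tensor of the Hankel matrix-Hankel matrix product β_H : Hank_n(ℂ) × Hank_n(ℂ) → ℂ^{n×n}, (A, B) ↦ AB. Then rank(μ_h) = brank(μ_h) = 2n − 1 and rank(μ_H) ≤ n(2n − 1). -/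
open Filter Topology

/-- The space `Hank_n(ℂ)` of `n × n` complex Hankel matrices: matrices whose `(i,j)` entry
depends only on `i + j` (constant along antidiagonals). -/
noncomputable def hankelSpace (n : ℕ) : Submodule ℂ (Matrix (Fin n) (Fin n) ℂ) where
  carrier := {A | ∀ i j k l : Fin n, (i : ℕ) + (j : ℕ) = (k : ℕ) + (l : ℕ) → A i j = A k l}
  add_mem' := by
    intro A B hA hB i j k l h
    simp [Matrix.add_apply, hA i j k l h, hB i j k l h]
  zero_mem' := by intro i j k l _; simp
  smul_mem' := by
    intro c A hA i j k l h
    simp [Matrix.smul_apply, hA i j k l h]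

namespace HankAux

lemma dite_sum {M : Type*} [AddCommMonoid M] {N r : ℕ} (hr : r ≤ N) (F : Fin r → M) :
    ∑ k : Fin N, (if h : (k : ℕ) < r then F ⟨k, h⟩ else 0) = ∑ p : Fin r, F p := by
  rw [Fin.sum_univ_eq_sum_range (fun k => if h : k < r then F ⟨k, h⟩ else 0) N,
      ← Finset.sum_subset (Finset.range_subset_range.mpr hr)
        (fun k _ hk => dif_neg (by simpa using hk)),
      ← Fin.sum_univ_eq_sum_range (fun k => if h : k < r then F ⟨k, h⟩ else 0) r]
  exact Finset.sum_congr rfl fun p _ => by simp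

lemma root_sum {N : ℕ} {ζ : ℂ} (hζ : IsPrimitiveRoot ζ N) (c : ℕ) :
    ∑ m : Fin N, ζ ^ (c * (m : ℕ)) = if N ∣ c then (N : ℂ) else 0 := by
  have h1 : ∀ m : Fin N, ζ ^ (c * (m : ℕ)) = (ζ ^ c) ^ (m : ℕ) := fun m => by rw [pow_mul]
  simp only [h1]
  by_cases hd : N ∣ c
  · rw [if_pos hd]
    have hone : ζ ^ c = 1 := (hζ.pow_eq_one_iff_dvd c).mpr hd
    simp [hone]
  · rw [if_neg hd]
    have hx : ζ ^ c ≠ 1 := fun h => hd ((hζ.pow_eq_one_iff_dvd c).mp h)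
    rw [Fin.sum_univ_eq_sum_range (fun m => (ζ ^ c) ^ m) N, geom_sum_eq hx]
    have hNc : (ζ ^ c) ^ N = 1 := by
      rw [← pow_mul, mul_comm, pow_mul, hζ.pow_eq_one, one_pow]
    rw [hNc]; simp

def repI (n : ℕ) (s : Fin (2 * n - 1)) : Fin n :=
  ⟨(s : ℕ) - min (s : ℕ) (n - 1), by have := s.isLt; omega⟩

def repJ (n : ℕ) (s : Fin (2 * n - 1)) : Fin n :=
  ⟨min (s : ℕ) (n - 1), by have := s.isLt; omega⟩

lemma rep_add {n : ℕ} (s : Fin (2 * n - 1)) : (repI n s : ℕ) + (repJ n s : ℕ) = s := by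
  simp only [repI, repJ]; have := s.isLt; omega

lemma hankel_entry {n : ℕ} (A : hankelSpace n) (s : Fin (2 * n - 1)) (i j : Fin n)
    (h : (i : ℕ) + (j : ℕ) = (s : ℕ)) :
    (A : Matrix (Fin n) (Fin n) ℂ) (repI n s) (repJ n s) = (A : Matrix (Fin n) (Fin n) ℂ) i j :=
  A.2 _ _ _ _ (by rw [rep_add, ← h])

/-- The key divisibility characterization. -/
lemma dvd_iff {n : ℕ} (hn : 1 ≤ n) (s : Fin (2 * n - 1)) (i j : Fin n) :
    (2 * n - 1) ∣ ((s : ℕ) + ((2 * n - 1) - (j : ℕ)) + ((2 * n - 1) - (i : ℕ)))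
      ↔ (s : ℕ) = (i : ℕ) + (j : ℕ) := by
  have hs := s.isLt
  have hi := i.isLt
  have hj := j.isLt
  constructor
  · rintro ⟨k, hk⟩
    have h1 : 1 < k := by
      rcases Nat.lt_or_ge 1 k with h | h
      · exact h
      · exfalso; interval_cases k <;> omega
    have h2 : k < 3 := by
      by_contra h
      push_neg at h
      have h3 : (2 * n - 1) * 3 ≤ (2 * n - 1) * k := Nat.mul_le_mul_left _ h
      omega
    have hk2 : k = 2 := by omega
    rw [hk2] at hk
    omega
  · intro h
    exact ⟨2, by omega⟩

lemma matvec_rank (n : ℕ) :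
    HasTensorRankLE ℂ (fun (A : hankelSpace n) (x : Fin n → ℂ) =>
        (A : Matrix (Fin n) (Fin n) ℂ).mulVec x) (2 * n - 1) := by
  rcases Nat.eq_zero_or_pos n with hn | hn
  · subst hn
    exact ⟨fun _ => 0, fun _ => 0, fun _ => 0, fun u v => funext fun i => i.elim0⟩
  set N := 2 * n - 1 with hN
  have hN0 : N ≠ 0 := by omega
  set ζ : ℂ := Complex.exp (2 * Real.pi * Complex.I / N) with hζdef
  have hζ : IsPrimitiveRoot ζ N := Complex.isPrimitiveRoot_exp N hN0
  refine ⟨fun m =>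
      { toFun := fun A => ∑ s : Fin N,
          (A : Matrix (Fin n) (Fin n) ℂ) (repI n s) (repJ n s) * ζ ^ ((s : ℕ) * (m : ℕ))
        map_add' := by
          intro A B
          simp [Submodule.coe_add, Matrix.add_apply, add_mul, Finset.sum_add_distrib]
        map_smul' := by
          intro c A
          simp [Submodule.coe_smul, Matrix.smul_apply, smul_eq_mul, Finset.mul_sum, mul_assoc] },
    fun m =>
      { toFun := fun x => ∑ j : Fin n, x j * ζ ^ ((N - (j : ℕ)) * (m : ℕ))
        map_add' := by intro x y; simp [add_mul, Finset.sum_add_distrib]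
        map_smul' := by intro c x; simp [smul_eq_mul, Finset.mul_sum, mul_assoc] },
    fun m => fun i => ((N : ℂ))⁻¹ * ζ ^ ((N - (i : ℕ)) * (m : ℕ)), ?_⟩
  intro A x
  funext i
  simp only [LinearMap.coe_mk, AddHom.coe_mk, Finset.sum_apply, Pi.smul_apply, smul_eq_mul]
  have expand : ∀ m : Fin N,
      (∑ s : Fin N, (A : Matrix (Fin n) (Fin n) ℂ) (repI n s) (repJ n s) * ζ ^ ((s : ℕ) * (m : ℕ))) *
          (∑ j : Fin n, x j * ζ ^ ((N - (j : ℕ)) * (m : ℕ))) *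
          ((N : ℂ)⁻¹ * ζ ^ ((N - (i : ℕ)) * (m : ℕ))) =
        ∑ s : Fin N, ∑ j : Fin n,
          ((A : Matrix (Fin n) (Fin n) ℂ) (repI n s) (repJ n s) * x j * (N : ℂ)⁻¹) *
            ζ ^ (((s : ℕ) + (N - (j : ℕ)) + (N - (i : ℕ))) * (m : ℕ)) := by
    intro m
    rw [Finset.sum_mul_sum, Finset.sum_mul]
    refine Finset.sum_congr rfl fun s _ => ?_
    rw [Finset.sum_mul]
    refine Finset.sum_congr rfl fun j _ => ?_
    rw [add_mul, add_mul, pow_add, pow_add]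
    ring
  rw [Finset.sum_congr rfl fun m _ => expand m, Finset.sum_comm]
  have swap2 : ∀ s : Fin N,
      ∑ m : Fin N, ∑ j : Fin n,
          ((A : Matrix (Fin n) (Fin n) ℂ) (repI n s) (repJ n s) * x j * (N : ℂ)⁻¹) *
            ζ ^ (((s : ℕ) + (N - (j : ℕ)) + (N - (i : ℕ))) * (m : ℕ)) =
      ∑ j : Fin n,
          ((A : Matrix (Fin n) (Fin n) ℂ) (repI n s) (repJ n s) * x j * (N : ℂ)⁻¹) *
            (∑ m : Fin N, ζ ^ (((s : ℕ) + (N - (j : ℕ)) + (N - (i : ℕ))) * (m : ℕ))) := by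
    intro s
    rw [Finset.sum_comm]
    exact Finset.sum_congr rfl fun j _ => by rw [← Finset.mul_sum]
  rw [Finset.sum_congr rfl fun s _ => swap2 s]
  have key : ∀ (s : Fin N) (j : Fin n),
      ((A : Matrix (Fin n) (Fin n) ℂ) (repI n s) (repJ n s) * x j * (N : ℂ)⁻¹) *
          (∑ m : Fin N, ζ ^ (((s : ℕ) + (N - (j : ℕ)) + (N - (i : ℕ))) * (m : ℕ))) =
      if (s : ℕ) = (i : ℕ) + (j : ℕ)
        then (A : Matrix (Fin n) (Fin n) ℂ) (repI n s) (repJ n s) * x j else 0 := by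
    intro s j
    rw [root_sum hζ]
    by_cases hc : (s : ℕ) = (i : ℕ) + (j : ℕ)
    · rw [if_pos ((dvd_iff hn s i j).mpr hc), if_pos hc]
      have : ((N : ℂ)) ≠ 0 := Nat.cast_ne_zero.mpr hN0
      field_simp
    · rw [if_neg (fun hd => hc ((dvd_iff hn s i j).mp hd)), if_neg hc]
      ring
  rw [Finset.sum_congr rfl fun s _ => Finset.sum_congr rfl fun j _ => key s j]
  rw [Finset.sum_comm]
  have last : ∀ j : Fin n,
      ∑ s : Fin N, (if (s : ℕ) = (i : ℕ) + (j : ℕ)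
          then (A : Matrix (Fin n) (Fin n) ℂ) (repI n s) (repJ n s) * x j else 0) =
      (A : Matrix (Fin n) (Fin n) ℂ) i j * x j := by
    intro j
    have hij : (i : ℕ) + (j : ℕ) < N := by have := i.isLt; have := j.isLt; omega
    have hcond : ∀ s : Fin N, ((s : ℕ) = (i : ℕ) + (j : ℕ)) ↔ s = ⟨(i : ℕ) + (j : ℕ), hij⟩ := by
      intro s; rw [Fin.ext_iff]
    rw [Finset.sum_congr rfl fun s _ => by rw [if_congr (hcond s) rfl rfl]]
    rw [Finset.sum_ite_eq' Finset.univ ⟨(i : ℕ) + (j : ℕ), hij⟩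
      (fun s => (A : Matrix (Fin n) (Fin n) ℂ) (repI n s) (repJ n s) * x j)]
    simp only [Finset.mem_univ, if_true]
    rw [hankel_entry A ⟨(i : ℕ) + (j : ℕ), hij⟩ i j rfl]
  rw [Finset.sum_congr rfl fun j _ => last j]
  simp [Matrix.mulVec, dotProduct]

section LowerBound
open Finset
/-- The basis Hankel matrices. -/
def basisH (n : ℕ) (t : Fin (2 * n - 1)) : hankelSpace n :=
  ⟨fun i j => if (i : ℕ) + (j : ℕ) = (t : ℕ) then 1 else 0, by
    intro i j k l h
    simp only [h]⟩

/-- The flattening matrix of a bilinear operation. -/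
noncomputable def flatM (n : ℕ) (β : hankelSpace n → (Fin n → ℂ) → (Fin n → ℂ)) :
    Matrix (Fin (2 * n - 1)) (Fin (2 * n - 1)) ℂ :=
  fun s t => β (basisH n t) (Pi.single (repJ n s) 1) (repI n s)

lemma flatM_mulVec (n : ℕ) :
    flatM n (fun A x => (A : Matrix (Fin n) (Fin n) ℂ).mulVec x) = 1 := by
  ext s t
  simp only [flatM, Matrix.mulVec_single_one, Matrix.col_apply]
  simp only [flatM, Matrix.mulVec_single_one, Matrix.col_apply, basisH, Matrix.one_apply, mul_one]
  rw [rep_add]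
  simp [Fin.ext_iff, eq_comm]

lemma flatM_det_zero (n : ℕ) {r : ℕ} (hr : r < 2 * n - 1)
    {β : hankelSpace n → (Fin n → ℂ) → (Fin n → ℂ)} (h : HasTensorRankLE ℂ β r) :
    (flatM n β).det = 0 := by
  obtain ⟨f, g, w, hd⟩ := h
  set P : Matrix (Fin (2 * n - 1)) (Fin (2 * n - 1)) ℂ := fun s k =>
    if h : (k : ℕ) < r then g ⟨k, h⟩ (Pi.single (repJ n s) 1) * w ⟨k, h⟩ (repI n s) else 0
    with hP
  set Q : Matrix (Fin (2 * n - 1)) (Fin (2 * n - 1)) ℂ := fun k t =>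
    if h : (k : ℕ) < r then f ⟨k, h⟩ (basisH n t) else 0 with hQ
  have hPQ : flatM n β = P * Q := by
    ext s t
    rw [Matrix.mul_apply]
    have : ∀ k : Fin (2 * n - 1), P s k * Q k t =
        if h : (k : ℕ) < r then
          (g ⟨k, h⟩ (Pi.single (repJ n s) 1) * w ⟨k, h⟩ (repI n s)) * f ⟨k, h⟩ (basisH n t)
        else 0 := by
      intro k
      by_cases h : (k : ℕ) < r
      · rw [hP, hQ]; simp only [dif_pos h]
      · rw [hP, hQ]; simp only [dif_neg h, zero_mul]
    rw [Finset.sum_congr rfl fun k _ => this k,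
      dite_sum (le_of_lt hr) (fun p : Fin r =>
        (g p (Pi.single (repJ n s) 1) * w p (repI n s)) * f p (basisH n t))]
    simp only [flatM]
    rw [congrFun (hd (basisH n t) (Pi.single (repJ n s) 1)) (repI n s)]
    rw [Finset.sum_apply]
    exact Finset.sum_congr rfl fun p _ => by simp [smul_eq_mul]; ring
  have hQ0 : Q.det = 0 := by
    apply Matrix.det_eq_zero_of_row_eq_zero (⟨r, hr⟩ : Fin (2 * n - 1))
    intro t
    rw [hQ]
    exact dif_neg (lt_irrefl r)
  rw [hPQ, Matrix.det_mul, hQ0, mul_zero]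

lemma border_lower (n : ℕ) (r : ℕ)
    (s : ℕ → (hankelSpace n → (Fin n → ℂ) → (Fin n → ℂ)))
    (hrk : ∀ m, HasTensorRankLE ℂ (s m) r)
    (hlim : ∀ u v, Tendsto (fun m => s m u v) atTop
      (𝓝 ((u : Matrix (Fin n) (Fin n) ℂ).mulVec v))) :
    2 * n - 1 ≤ r := by
  by_contra hcon
  push_neg at hcon
  have hMlim : Tendsto (fun m => flatM n (s m)) atTop
      (𝓝 (flatM n (fun A x => (A : Matrix (Fin n) (Fin n) ℂ).mulVec x))) := by
    refine tendsto_pi_nhds.mpr ?_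
    intro s'
    rw [tendsto_pi_nhds]
    intro t
    exact tendsto_pi_nhds.mp (hlim (basisH n t) (Pi.single (repJ n s') (1 : ℂ))) (repI n s')
  have hdet : Tendsto (fun m => (flatM n (s m)).det) atTop
      (𝓝 ((flatM n (fun A x => (A : Matrix (Fin n) (Fin n) ℂ).mulVec x)).det)) :=
    ((Continuous.matrix_det continuous_id).tendsto _).comp hMlim
  have hzero : ∀ m, (flatM n (s m)).det = 0 := fun m => flatM_det_zero n hcon (hrk m)
  simp only [hzero, flatM_mulVec, Matrix.det_one] at hdet
  have h10 : (1 : ℂ) = 0 :=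
    tendsto_nhds_unique hdet (tendsto_const_nhds (x := (0 : ℂ)))
  exact one_ne_zero h10

end LowerBound

end HankAux

namespace HankAux2
open HankAux

lemma prod_rank_of_matvec (n r : ℕ)
    (h : HasTensorRankLE ℂ (fun (A : hankelSpace n) (x : Fin n → ℂ) =>
        (A : Matrix (Fin n) (Fin n) ℂ).mulVec x) r) :
    HasTensorRankLE ℂ (fun (A B : hankelSpace n) =>
      (A : Matrix (Fin n) (Fin n) ℂ) * (B : Matrix (Fin n) (Fin n) ℂ)) (n * r) := by
  obtain ⟨f, g, w, hd⟩ := h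
  let e : Fin n × Fin r ≃ Fin (n * r) := finProdFinEquiv
  let col : Fin n → (hankelSpace n →ₗ[ℂ] (Fin n → ℂ)) := fun k =>
    { toFun := fun B => fun j => (B : Matrix (Fin n) (Fin n) ℂ) j k
      map_add' := fun B C => by funext j; simp
      map_smul' := fun c B => by funext j; simp }
  refine ⟨fun p => f (e.symm p).2,
      fun p => (g ((e.symm p).2)).comp (col (e.symm p).1),
      fun p => fun i k' => if k' = (e.symm p).1 then w (e.symm p).2 i else 0, ?_⟩
  intro A B
  erw [← Equiv.sum_comp e (fun p =>
    ((f (e.symm p).2) A * ((g ((e.symm p).2)).comp (col (e.symm p).1)) B) •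
      (fun i k' => if k' = (e.symm p).1 then w (e.symm p).2 i else 0 :
        Matrix (Fin n) (Fin n) ℂ))]
  simp only [Equiv.symm_apply_apply]
  funext i k'
  simp only [Finset.sum_apply, Matrix.sum_apply, Matrix.smul_apply, Pi.smul_apply,
    smul_eq_mul, mul_ite, mul_zero, LinearMap.comp_apply]
  rw [Fintype.sum_prod_type]
  have step : ∀ k : Fin n, (∑ m : Fin r,
      if k' = k then (f m A * (g m) ((col k) B)) * w m i else 0) =
      if k' = k then ∑ m : Fin r, (f m A * (g m) ((col k) B)) * w m i else 0 := fun k => by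
    split <;> simp
  rw [Finset.sum_congr rfl fun k _ => step k, Finset.sum_ite_eq Finset.univ k'
    (fun k => ∑ m : Fin r, (f m A * (g m) ((col k) B)) * w m i), if_pos (Finset.mem_univ k')]
  have hmv := congrFun (hd A (fun j => (B : Matrix (Fin n) (Fin n) ℂ) j k')) i
  simp only [Finset.sum_apply, Pi.smul_apply, smul_eq_mul] at hmv
  have hcol : (col k') B = fun j => (B : Matrix (Fin n) (Fin n) ℂ) j k' := rfl
  rw [hcol, ← hmv]
  simp [Matrix.mul_apply, Matrix.mulVec, dotProduct]

end HankAux2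

/-- The structure tensor `μ_h` of the Hankel matrix-vector product
`Hank_n(ℂ) × ℂ^n → ℂ^n` has rank and border rank `2n − 1`, and the structure tensor `μ_H` of
the Hankel matrix-Hankel matrix product `Hank_n(ℂ) × Hank_n(ℂ) → ℂ^{n×n}` has rank at most
`n(2n − 1)`. -/
theorem tensorRank_hankel (n : ℕ) :
    tensorRank ℂ (fun (A : hankelSpace n) (x : Fin n → ℂ) =>
        (A : Matrix (Fin n) (Fin n) ℂ).mulVec x) = 2 * n - 1 ∧
    borderRank ℂ (fun (A : hankelSpace n) (x : Fin n → ℂ) =>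
        (A : Matrix (Fin n) (Fin n) ℂ).mulVec x) = 2 * n - 1 ∧
    tensorRank ℂ (fun (A B : hankelSpace n) =>
        (A : Matrix (Fin n) (Fin n) ℂ) * (B : Matrix (Fin n) (Fin n) ℂ)) ≤ n * (2 * n - 1) := by
  have hmv := HankAux.matvec_rank n
  have hlow : ∀ r : ℕ, (∃ s : ℕ → (hankelSpace n → (Fin n → ℂ) → (Fin n → ℂ)),
      (∀ m, HasTensorRankLE ℂ (s m) r) ∧
      ∀ u v, Tendsto (fun m => s m u v) atTop
        (𝓝 ((u : Matrix (Fin n) (Fin n) ℂ).mulVec v))) → 2 * n - 1 ≤ r := by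
    rintro r ⟨s, h1, h2⟩
    exact HankAux.border_lower n r s h1 h2
  refine ⟨?_, ?_, ?_⟩
  · refine le_antisymm (Nat.sInf_le hmv) (le_csInf ⟨2 * n - 1, hmv⟩ ?_)
    intro r hr
    exact hlow r ⟨fun _ => _, fun _ => hr, fun u v => tendsto_const_nhds⟩
  · refine le_antisymm (Nat.sInf_le ?_) (le_csInf ⟨2 * n - 1, ?_⟩ ?_)
    · exact ⟨fun _ => _, fun _ => hmv, fun u v => tendsto_const_nhds⟩
    · exact ⟨fun _ => _, fun _ => hmv, fun u v => tendsto_const_nhds⟩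
    · intro r hr
      exact hlow r hr
  · exact Nat.sInf_le (HankAux2.prod_rank_of_matvec n (2 * n - 1) hmv)
end

section
/- Let Toep_n^Δ(ℂ) be the space of n×n upper triangular Toeplitz matrices and let β_Δ : Toep_n^Δ(ℂ) × ℂ^n → ℂ^n, (A, v) ↦ Av, be the upper triangular Toeplitz matrix-vector product with structure tensor μ_Δ. Then rank(μ_Δ) = 2n − 1. -/
open Filter Topology

/-- The space `Toep_n^Δ(ℂ)` of `n × n` upper triangular Toeplitz matrices: entries depend only
on `j − i` and vanish below the diagonal. -/
noncomputable def upperToeplitzSpace (n : ℕ) : Submodule ℂ (Matrix (Fin n) (Fin n) ℂ) where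
  carrier := {A | (∀ i j k l : Fin n, (j : ℤ) - (i : ℤ) = (l : ℤ) - (k : ℤ) → A i j = A k l) ∧
    ∀ i j : Fin n, j < i → A i j = 0}
  add_mem' := by
    rintro A B ⟨hA1, hA2⟩ ⟨hB1, hB2⟩
    constructor
    · intro i j k l h
      simp [Matrix.add_apply, hA1 i j k l h, hB1 i j k l h]
    · intro i j h
      simp [Matrix.add_apply, hA2 i j h, hB2 i j h]
  zero_mem' := by
    constructor
    · intro i j k l _; simp
    · intro i j _; simp
  smul_mem' := by
    rintro c A ⟨h1, h2⟩
    constructor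
    · intro i j k l h
      simp [Matrix.smul_apply, h1 i j k l h]
    · intro i j h
      simp [Matrix.smul_apply, h2 i j h]


/-- The "correlation" bilinear map: `(t, v) ↦ (i ↦ ∑ t_a v_{i+a})`. -/
noncomputable def Bcorr (n : ℕ) (t v : Fin n → ℂ) : Fin n → ℂ :=
  fun i => ∑ a : Fin n, ∑ k : Fin n,
    if (i : ℕ) + (a : ℕ) = (k : ℕ) then t a * v k else 0

lemma Bcorr_apply (n : ℕ) (t v : Fin n → ℂ) (i : Fin n) :
    Bcorr n t v i = ∑ a : Fin n,
      if h : (i : ℕ) + (a : ℕ) < n then t a * v ⟨(i : ℕ) + a, h⟩ else 0 := by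
  unfold Bcorr
  refine Finset.sum_congr rfl fun a _ => ?_
  by_cases h : (i : ℕ) + (a : ℕ) < n
  · rw [dif_pos h]
    rw [Finset.sum_eq_single (⟨(i : ℕ) + a, h⟩ : Fin n)]
    · simp
    · intro k _ hk
      rw [if_neg]
      intro hc
      exact hk (Fin.ext hc.symm)
    · intro hmem; exact absurd (Finset.mem_univ _) hmem
  · rw [dif_neg h]
    refine Finset.sum_eq_zero fun k _ => ?_
    rw [if_neg]
    intro hc
    exact h (hc ▸ k.2)

/-- The linear functional `t ↦ ∑ t_a c_a`. -/
noncomputable def dotL {n : ℕ} (c : Fin n → ℂ) : (Fin n → ℂ) →ₗ[ℂ] ℂ where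
  toFun t := ∑ a, t a * c a
  map_add' x y := by simp [add_mul, Finset.sum_add_distrib]
  map_smul' r x := by simp [Finset.mul_sum, mul_assoc]

@[simp] lemma dotL_apply {n : ℕ} (c t : Fin n → ℂ) : dotL c t = ∑ a, t a * c a := rfl
section Upper

variable (n : ℕ)

lemma vand_key (hn : 0 < n) :
    ∀ (m : Fin (2 * n - 1)) (s : ℕ), s < 2 * n - 1 →
      ∑ p : Fin (2 * n - 1),
        (Matrix.vandermonde (fun p : Fin (2 * n - 1) => ((p : ℕ) : ℂ)))⁻¹ m p * ((p : ℕ) : ℂ) ^ s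
        = if (m : ℕ) = s then 1 else 0 := by
  set z : Fin (2 * n - 1) → ℂ := fun p => ((p : ℕ) : ℂ) with hz
  have hdet : (Matrix.vandermonde z).det ≠ 0 := by
    rw [Matrix.det_vandermonde]
    refine Finset.prod_ne_zero_iff.mpr fun i _ => Finset.prod_ne_zero_iff.mpr fun j hj => ?_
    have hij : i < j := Finset.mem_Ioi.mp hj
    have hij' : (i : ℕ) < (j : ℕ) := hij
    simp only [hz, sub_ne_zero]
    exact Nat.cast_injective.ne (by omega)
  have hinv := Matrix.nonsing_inv_mul (Matrix.vandermonde z) (Ne.isUnit hdet)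
  intro m s hs
  have := congrFun (congrFun hinv m) ⟨s, hs⟩
  rw [Matrix.mul_apply] at this
  simp only [Matrix.vandermonde] at this
  rw [Matrix.one_apply] at this
  rw [show (if (m : ℕ) = s then (1:ℂ) else 0) = (if m = ⟨s, hs⟩ then 1 else 0) by
    simp [Fin.ext_iff]]
  exact this

lemma upper_bound : HasTensorRankLE ℂ (Bcorr n) (2 * n - 1) := by
  rcases Nat.eq_zero_or_pos n with hn | hn
  · subst hn
    refine ⟨Fin.elim0, Fin.elim0, Fin.elim0, fun u v => ?_⟩
    funext i; exact i.elim0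
  set N := 2 * n - 1 with hN
  set z : Fin N → ℂ := fun p => ((p : ℕ) : ℂ) with hz
  refine ⟨fun p => dotL (fun a => z p ^ (a : ℕ)),
          fun p => dotL (fun k => z p ^ (n - 1 - (k : ℕ))),
          fun p => fun i => (Matrix.vandermonde z)⁻¹ ⟨n - 1 - (i : ℕ), by omega⟩ p,
          fun t v => ?_⟩
  funext i
  rw [Finset.sum_apply]
  have key := vand_key n hn
  symm
  calc _
      = ∑ p : Fin N, ∑ a : Fin n, ∑ k : Fin n, (t a * v k) *
          ((Matrix.vandermonde z)⁻¹ ⟨n - 1 - (i : ℕ), by omega⟩ p *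
            z p ^ ((a : ℕ) + (n - 1 - (k : ℕ)))) := by
        refine Finset.sum_congr rfl fun p _ => ?_
        simp only [Pi.smul_apply, smul_eq_mul, dotL_apply]
        rw [Finset.sum_mul_sum]
        rw [Finset.sum_mul]
        refine Finset.sum_congr rfl fun a _ => ?_
        rw [Finset.sum_mul]
        refine Finset.sum_congr rfl fun k _ => ?_
        rw [pow_add]
        ring
    _ = ∑ a : Fin n, ∑ k : Fin n, (t a * v k) *
          ∑ p : Fin N, (Matrix.vandermonde z)⁻¹ ⟨n - 1 - (i : ℕ), by omega⟩ p *
            z p ^ ((a : ℕ) + (n - 1 - (k : ℕ))) := by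
        rw [Finset.sum_comm]
        refine Finset.sum_congr rfl fun a _ => ?_
        rw [Finset.sum_comm]
        refine Finset.sum_congr rfl fun k _ => ?_
        rw [Finset.mul_sum]
    _ = ∑ a : Fin n, ∑ k : Fin n, (t a * v k) *
          (if (n - 1 - (i : ℕ)) = (a : ℕ) + (n - 1 - (k : ℕ)) then 1 else 0) := by
        refine Finset.sum_congr rfl fun a _ => Finset.sum_congr rfl fun k _ => ?_
        rw [key ⟨n - 1 - (i : ℕ), by omega⟩ ((a : ℕ) + (n - 1 - (k : ℕ)))
          (by have := a.2; have := k.2; omega)]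
    _ = Bcorr n t v i := by
        unfold Bcorr
        refine Finset.sum_congr rfl fun a _ => Finset.sum_congr rfl fun k _ => ?_
        have hi := i.2; have ha := a.2; have hk := k.2
        by_cases h : (i : ℕ) + (a : ℕ) = (k : ℕ)
        · rw [if_pos h, if_pos (by omega), mul_one]
        · rw [if_neg h, if_neg (by omega), mul_zero]

end Upper
section Lower

lemma Bcorr_single_single (n : ℕ) (x y i : Fin n) :
    Bcorr n (Pi.single x 1) (Pi.single y 1) i
      = if (i : ℕ) + (x : ℕ) = (y : ℕ) then 1 else 0 := by
  rw [Bcorr_apply]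
  rw [Finset.sum_eq_single x]
  · by_cases h : (i : ℕ) + (x : ℕ) < n
    · rw [dif_pos h, Pi.single_eq_same, one_mul, Pi.single_apply]
      simp [Fin.ext_iff]
    · have hy : ¬((i : ℕ) + (x : ℕ) = (y : ℕ)) := by have := y.2; omega
      rw [dif_neg h, if_neg hy]
  · intro a _ ha
    by_cases h : (i : ℕ) + (a : ℕ) < n
    · rw [dif_pos h, Pi.single_eq_of_ne ha, zero_mul]
    · exact dif_neg h
  · intro h; exact absurd (Finset.mem_univ _) h

lemma Bcorr_add_smul_left (n : ℕ) (a b : Fin (n + 1) → ℂ) (s : ℂ) (m : Fin n) :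
    Bcorr (n + 1) (a + s • (Pi.single (Fin.last n) 1 : Fin (n + 1) → ℂ)) b m.succ
      = Bcorr (n + 1) a b m.succ := by
  rw [Bcorr_apply, Bcorr_apply]
  refine Finset.sum_congr rfl fun j _ => ?_
  by_cases h : ((m.succ : ℕ)) + (j : ℕ) < n + 1
  · rw [dif_pos h, dif_pos h]
    have hj : j ≠ Fin.last n := by
      intro hj; subst hj
      rw [Fin.val_succ, Fin.val_last] at h
      omega
    simp [Pi.single_eq_of_ne hj]
  · rw [dif_neg h, dif_neg h]

lemma Bcorr_add_smul_right (n : ℕ) (a b : Fin (n + 1) → ℂ) (s : ℂ) (m : Fin n) :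
    Bcorr (n + 1) a (b + s • (Pi.single (0 : Fin (n + 1)) 1 : Fin (n + 1) → ℂ)) m.succ
      = Bcorr (n + 1) a b m.succ := by
  rw [Bcorr_apply, Bcorr_apply]
  refine Finset.sum_congr rfl fun j _ => ?_
  by_cases h : ((m.succ : ℕ)) + (j : ℕ) < n + 1
  · rw [dif_pos h, dif_pos h]
    have hne : (⟨(m.succ : ℕ) + (j : ℕ), h⟩ : Fin (n + 1)) ≠ 0 := by
      intro hc
      have hc2 := congrArg Fin.val hc
      simp only [Fin.val_succ, Fin.val_zero, Fin.val_mk] at hc2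
      omega
    simp only [Pi.add_apply, Pi.smul_apply, smul_eq_mul, Pi.single_eq_of_ne hne, mul_zero,
      add_zero]
  · rw [dif_neg h, dif_neg h]

/-- Pad with a zero in the last coordinate. -/
noncomputable def padL (n : ℕ) : (Fin n → ℂ) →ₗ[ℂ] (Fin (n + 1) → ℂ) where
  toFun u := fun j => if h : (j : ℕ) < n then u ⟨j, h⟩ else 0
  map_add' x y := by funext j; by_cases h : (j : ℕ) < n <;> simp [h]
  map_smul' r x := by funext j; by_cases h : (j : ℕ) < n <;> simp [h]

@[simp] lemma padL_apply (n : ℕ) (u : Fin n → ℂ) (j : Fin (n + 1)) :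
    padL n u j = if h : (j : ℕ) < n then u ⟨j, h⟩ else 0 := rfl

/-- Shift up by one, putting a zero in coordinate `0`. -/
noncomputable def shiftL (n : ℕ) : (Fin n → ℂ) →ₗ[ℂ] (Fin (n + 1) → ℂ) where
  toFun v := fun k => if h : 0 < (k : ℕ) then v ⟨(k : ℕ) - 1, by have := k.isLt; omega⟩ else 0
  map_add' x y := by funext k; by_cases h : (0 : Fin (n + 1)) < k <;> simp [h]
  map_smul' r x := by funext k; by_cases h : (0 : Fin (n + 1)) < k <;> simp [h]

@[simp] lemma shiftL_apply (n : ℕ) (v : Fin n → ℂ) (k : Fin (n + 1)) :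
    shiftL n v k = if h : 0 < (k : ℕ) then v ⟨(k : ℕ) - 1, by have := k.isLt; omega⟩ else 0 :=
  rfl

lemma Bcorr_reduce (n : ℕ) (u v : Fin n → ℂ) (m : Fin n) :
    Bcorr n u v m = Bcorr (n + 1) (padL n u) (shiftL n v) m.succ := by
  rw [Bcorr_apply, Bcorr_apply, Fin.sum_univ_castSucc]
  rw [dif_neg (show ¬((m.succ : ℕ) + ((Fin.last n : Fin (n + 1)) : ℕ) < n + 1) by
    rw [Fin.val_succ, Fin.val_last]; omega), add_zero]
  refine Finset.sum_congr rfl fun j _ => ?_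
  by_cases h : (m : ℕ) + (j : ℕ) < n
  · have h2 : (m.succ : ℕ) + ((j.castSucc : Fin (n + 1)) : ℕ) < n + 1 := by
      rw [Fin.val_succ, Fin.coe_castSucc]; omega
    rw [dif_pos h, dif_pos h2, padL_apply, shiftL_apply]
    rw [dif_pos (show ((j.castSucc : Fin (n + 1)) : ℕ) < n by rw [Fin.coe_castSucc]; exact j.2)]
    rw [dif_pos (show 0 < (((⟨(m.succ : ℕ) + ((j.castSucc : Fin (n + 1)) : ℕ), h2⟩ : Fin (n + 1))) : ℕ) by
      simp [Fin.val_succ])]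
    congr 1
    · refine congrArg v (Fin.ext ?_)
      simp only [Fin.coe_castSucc, Fin.val_succ, Fin.val_mk]
      omega
  · rw [dif_neg h, dif_neg (show ¬((m.succ : ℕ) + ((j.castSucc : Fin (n + 1)) : ℕ) < n + 1) by
      rw [Fin.val_succ, Fin.coe_castSucc]; omega)]

lemma hasTensorRankLE_of_finset {U V W : Type*}
    [AddCommGroup U] [Module ℂ U] [AddCommGroup V] [Module ℂ V]
    [AddCommGroup W] [Module ℂ W] (β : U → V → W) {r : ℕ} (s : Finset (Fin r))
    (f : Fin r → (U →ₗ[ℂ] ℂ)) (g : Fin r → (V →ₗ[ℂ] ℂ)) (w : Fin r → W)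
    (h : ∀ u v, β u v = ∑ p ∈ s, (f p u * g p v) • w p) :
    HasTensorRankLE ℂ β s.card := by
  refine ⟨fun i => f (s.equivFin.symm i), fun i => g (s.equivFin.symm i),
    fun i => w (s.equivFin.symm i), fun u v => ?_⟩
  rw [h u v, ← Finset.sum_coe_sort s (fun p => (f p u * g p v) • w p)]
  exact (Equiv.sum_comp s.equivFin.symm _).symm

lemma lower_bound_s16 : ∀ n r, HasTensorRankLE ℂ (Bcorr n) r → 2 * n - 1 ≤ r := by
  intro n
  induction n with
  | zero => intro r _; omega
  | succ n ih =>
    intro r hr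
    obtain ⟨f, g, w, hd⟩ := hr
    rcases Nat.eq_zero_or_pos n with hn0 | hn
    · subst hn0
      rcases r with _ | r
      · exfalso
        have h1 := congrFun (hd (Pi.single 0 1) (Pi.single 0 1)) 0
        rw [Bcorr_single_single] at h1
        simp at h1
      · omega
    -- main case : n ≥ 1
    · have hBNN : Bcorr (n + 1) (Pi.single (Fin.last n) 1) (Pi.single (Fin.last n) 1) 0 = 1 := by
        rw [Bcorr_single_single]; simp
      have hB00 : Bcorr (n + 1) (Pi.single 0 1) (Pi.single 0 1) 0 = 1 := by
        rw [Bcorr_single_single]; simp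
      have hBN0 : ∀ i, Bcorr (n + 1) (Pi.single (Fin.last n) 1) (Pi.single 0 1) i = 0 := by
        intro i
        rw [Bcorr_single_single, if_neg]
        rw [Fin.val_last]
        simp
        omega
      have hf : ∃ p, f p (Pi.single (Fin.last n) 1) ≠ 0 := by
        by_contra h; push_neg at h
        have h1 := congrFun (hd (Pi.single (Fin.last n) 1) (Pi.single (Fin.last n) 1)) 0
        rw [hBNN, Finset.sum_apply] at h1
        simp [h] at h1
      have hg : ∃ q, g q (Pi.single (0 : Fin (n + 1)) 1) ≠ 0 := by
        by_contra h; push_neg at h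
        have h1 := congrFun (hd (Pi.single 0 1) (Pi.single 0 1)) 0
        rw [hB00, Finset.sum_apply] at h1
        simp [h] at h1
      obtain ⟨p0, hp0⟩ := hf
      have hpair : ∃ q0, q0 ≠ p0 ∧ g q0 (Pi.single (0 : Fin (n + 1)) 1) ≠ 0 := by
        by_contra h; push_neg at h
        obtain ⟨q, hq⟩ := hg
        have hqp : q = p0 := by
          by_contra hne; exact hq (h q hne)
        rw [hqp] at hq
        have hw : w p0 = 0 := by
          have hBe : Bcorr (n + 1) (Pi.single (Fin.last n) 1) (Pi.single 0 1)
              = (f p0 (Pi.single (Fin.last n) 1) * g p0 (Pi.single 0 1)) • w p0 := by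
            rw [hd]
            exact Finset.sum_eq_single p0
              (fun p _ hp => by rw [h p hp, mul_zero, zero_smul])
              (fun hm => absurd (Finset.mem_univ _) hm)
          have hz : (f p0 (Pi.single (Fin.last n) 1) * g p0 (Pi.single 0 1)) • w p0 = 0 := by
            rw [← hBe]; funext i; rw [hBN0 i]; rfl
          exact (smul_eq_zero.mp hz).resolve_left (mul_ne_zero hp0 hq)
        have h1 := congrFun (hd (Pi.single 0 1) (Pi.single 0 1)) 0
        rw [hB00, Finset.sum_apply] at h1
        have h2 : (1 : ℂ) = 0 := by
          rw [h1]
          refine Finset.sum_eq_zero fun p _ => ?_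
          by_cases hp : p = p0
          · subst hp; simp [hw]
          · simp [h p hp]
        exact one_ne_zero h2
      obtain ⟨q0, hq0p0, hq0⟩ := hpair
      set σL : (Fin (n + 1) → ℂ) →ₗ[ℂ] (Fin (n + 1) → ℂ) :=
        LinearMap.id - (f p0 (Pi.single (Fin.last n) 1))⁻¹ •
          (f p0).smulRight (Pi.single (Fin.last n) 1) with hσdef
      set τL : (Fin (n + 1) → ℂ) →ₗ[ℂ] (Fin (n + 1) → ℂ) :=
        LinearMap.id - (g q0 (Pi.single (0 : Fin (n + 1)) 1))⁻¹ •
          (g q0).smulRight (Pi.single (0 : Fin (n + 1)) 1) with hτdef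
      have hσf : ∀ a, f p0 (σL a) = 0 := by
        intro a
        rw [hσdef]
        simp only [LinearMap.sub_apply, LinearMap.id_apply, LinearMap.smul_apply,
          LinearMap.smulRight_apply, map_sub, map_smul, smul_eq_mul]
        field_simp
        simp
      have hτg : ∀ b, g q0 (τL b) = 0 := by
        intro b
        rw [hτdef]
        simp only [LinearMap.sub_apply, LinearMap.id_apply, LinearMap.smul_apply,
          LinearMap.smulRight_apply, map_sub, map_smul, smul_eq_mul]
        field_simp
        simp
      have hσform : ∀ a, ∃ s : ℂ, σL a = a + s • (Pi.single (Fin.last n) 1 : Fin (n + 1) → ℂ) := by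
        intro a
        refine ⟨-((f p0 (Pi.single (Fin.last n) 1))⁻¹ * f p0 a), ?_⟩
        rw [hσdef]
        simp only [LinearMap.sub_apply, LinearMap.id_apply, LinearMap.smul_apply,
          LinearMap.smulRight_apply, smul_smul, neg_smul]
        rw [← sub_eq_add_neg]
      have hτform : ∀ b, ∃ s : ℂ, τL b = b + s • (Pi.single (0 : Fin (n + 1)) 1 : Fin (n + 1) → ℂ) := by
        intro b
        refine ⟨-((g q0 (Pi.single (0 : Fin (n + 1)) 1))⁻¹ * g q0 b), ?_⟩
        rw [hτdef]
        simp only [LinearMap.sub_apply, LinearMap.id_apply, LinearMap.smul_apply,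
          LinearMap.smulRight_apply, smul_smul, neg_smul]
        rw [← sub_eq_add_neg]
      have hmain : ∀ u v, Bcorr n u v = ∑ p ∈ (Finset.univ.erase p0).erase q0,
          (((f p).comp (σL.comp (padL n))) u * ((g p).comp (τL.comp (shiftL n))) v) •
            (fun m : Fin n => w p m.succ) := by
        intro u v
        funext m
        obtain ⟨s1, hs1⟩ := hσform (padL n u)
        obtain ⟨s2, hs2⟩ := hτform (shiftL n v)
        have e1 : Bcorr n u v m = Bcorr (n + 1) (σL (padL n u)) (τL (shiftL n v)) m.succ := by
          rw [Bcorr_reduce, hs1, hs2, Bcorr_add_smul_left, Bcorr_add_smul_right]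
        rw [e1, congrFun (hd _ _) m.succ, Finset.sum_apply, Finset.sum_apply]
        simp only [Pi.smul_apply, smul_eq_mul, LinearMap.comp_apply]
        refine (Finset.sum_subset (Finset.subset_univ _) fun p _ hp => ?_).symm
        rw [Finset.mem_erase, Finset.mem_erase] at hp
        push_neg at hp
        by_cases hpq : p = q0
        · subst hpq; rw [hτg, mul_zero, zero_mul]
        · by_cases hpp : p = p0
          · subst hpp; rw [hσf, zero_mul, zero_mul]
          · exact absurd (Finset.mem_univ p) (hp hpq hpp)
      have hle : HasTensorRankLE ℂ (Bcorr n) ((Finset.univ.erase p0).erase q0).card :=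
        hasTensorRankLE_of_finset (Bcorr n) _ _ _ _ hmain
      have hcard : ((Finset.univ.erase p0).erase q0).card = r - 1 - 1 := by
        rw [Finset.card_erase_of_mem (Finset.mem_erase.mpr ⟨hq0p0, Finset.mem_univ _⟩),
          Finset.card_erase_of_mem (Finset.mem_univ _), Finset.card_univ, Fintype.card_fin]
      have hih := ih _ hle
      rw [hcard] at hih
      have h2r : 2 ≤ r := by
        have h1 := p0.isLt
        have h2 := q0.isLt
        have h3 : (q0 : ℕ) ≠ (p0 : ℕ) := fun hc => hq0p0 (Fin.ext hc)
        omega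
      omega

end Lower
section Transfer

lemma Bcorr_apply' (n : ℕ) (t v : Fin n → ℂ) (i : Fin n) :
    Bcorr n t v i = ∑ k : Fin n,
      (if h : (i : ℕ) ≤ (k : ℕ) then t ⟨(k : ℕ) - (i : ℕ), by have := k.isLt; omega⟩ else 0)
        * v k := by
  unfold Bcorr
  rw [Finset.sum_comm]
  refine Finset.sum_congr rfl fun k _ => ?_
  by_cases h : (i : ℕ) ≤ (k : ℕ)
  · rw [dif_pos h]
    rw [Finset.sum_eq_single (⟨(k : ℕ) - (i : ℕ), by have := k.isLt; omega⟩ : Fin n)]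
    · rw [if_pos (by simp only [Fin.val_mk]; omega)]
    · intro a _ ha
      rw [if_neg]
      intro hc
      exact ha (Fin.ext (by simp only [Fin.val_mk]; omega))
    · intro hm; exact absurd (Finset.mem_univ _) hm
  · rw [dif_neg h, zero_mul]
    refine Finset.sum_eq_zero fun a _ => ?_
    rw [if_neg (by omega)]

/-- The linear equivalence between coefficient vectors and upper triangular Toeplitz
matrices. -/
noncomputable def toepEquiv (n : ℕ) : (Fin n → ℂ) ≃ₗ[ℂ] upperToeplitzSpace n where
  toFun t := ⟨Matrix.of fun i j =>
      if h : (i : ℕ) ≤ (j : ℕ) then t ⟨(j : ℕ) - (i : ℕ), by have := j.isLt; omega⟩ else 0,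
    by
      constructor
      · intro i j k l hjl
        have hjl' : ((j : ℕ) : ℤ) - ((i : ℕ) : ℤ) = ((l : ℕ) : ℤ) - ((k : ℕ) : ℤ) := by
          exact_mod_cast hjl
        by_cases h1 : (i : ℕ) ≤ (j : ℕ)
        · have h2 : (k : ℕ) ≤ (l : ℕ) := by omega
          rw [Matrix.of_apply, Matrix.of_apply, dif_pos h1, dif_pos h2]
          exact congrArg t (Fin.ext (by simp only [Fin.val_mk]; omega))
        · have h2 : ¬((k : ℕ) ≤ (l : ℕ)) := by omega
          rw [Matrix.of_apply, Matrix.of_apply, dif_neg h1, dif_neg h2]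
      · intro i j hij
        have : ¬((i : ℕ) ≤ (j : ℕ)) := by
          rw [Fin.lt_def] at hij; omega
        rw [Matrix.of_apply, dif_neg this]⟩
  invFun A := fun k =>
    (A : Matrix (Fin n) (Fin n) ℂ) ⟨0, Nat.lt_of_le_of_lt (Nat.zero_le _) k.isLt⟩ k
  map_add' x y := by
    refine Subtype.ext ?_
    funext i j
    dsimp only
    simp only [Submodule.coe_add, Matrix.add_apply, Matrix.of_apply]
    split_ifs <;> simp
  map_smul' c x := by
    refine Subtype.ext ?_
    funext i j
    dsimp only
    simp only [Submodule.coe_smul, Matrix.smul_apply, Matrix.of_apply, RingHom.id_apply]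
    split_ifs <;> simp
  left_inv t := by
    funext k
    dsimp only
    simp only [Matrix.of_apply, Fin.val_mk, dif_pos (Nat.zero_le _)]
    exact congrArg t (Fin.ext (by simp only [Fin.val_mk]; omega))
  right_inv A := by
    refine Subtype.ext ?_
    funext i j
    dsimp only
    rw [Matrix.of_apply]
    by_cases h : (i : ℕ) ≤ (j : ℕ)
    · rw [dif_pos h]
      exact (A.2.1 ⟨0, Nat.lt_of_le_of_lt (Nat.zero_le _)
          ((⟨(j : ℕ) - (i : ℕ), by have := j.isLt; omega⟩ : Fin n)).isLt⟩
          ⟨(j : ℕ) - (i : ℕ), by have := j.isLt; omega⟩ i j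
          (by simp only [Fin.val_mk, Fin.val_zero]; push_cast; omega))
    · rw [dif_neg h]
      exact (A.2.2 i j (by rw [Fin.lt_def]; omega)).symm

lemma transfer {U U' V W : Type*}
    [AddCommGroup U] [Module ℂ U] [AddCommGroup U'] [Module ℂ U']
    [AddCommGroup V] [Module ℂ V] [AddCommGroup W] [Module ℂ W]
    (e : U ≃ₗ[ℂ] U') (β : U' → V → W) (β' : U → V → W)
    (h : ∀ u v, β (e u) v = β' u v) (r : ℕ) :
    HasTensorRankLE ℂ β' r → HasTensorRankLE ℂ β r := by
  rintro ⟨f, g, w, hd⟩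
  refine ⟨fun i => (f i).comp e.symm.toLinearMap, g, w, fun u v => ?_⟩
  have : β u v = β' (e.symm u) v := by rw [← h (e.symm u) v, e.apply_symm_apply]
  rw [this, hd]
  rfl

end Transfer
lemma toep_rel (n : ℕ) (t : Fin n → ℂ) (v : Fin n → ℂ) :
    ((toepEquiv n t : upperToeplitzSpace n) : Matrix (Fin n) (Fin n) ℂ).mulVec v
      = Bcorr n t v := by
  funext i
  rw [Bcorr_apply' n t v i]
  rfl

/-- The structure tensor `μ_Δ` of the upper triangular Toeplitz
matrix-vector product `Toep_n^Δ(ℂ) × ℂ^n → ℂ^n`, `(A, v) ↦ Av`, has rank `2n − 1`. -/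
theorem tensorRank_upperToeplitz_mulVec (n : ℕ) :
    tensorRank ℂ (fun (A : upperToeplitzSpace n) (v : Fin n → ℂ) =>
        (A : Matrix (Fin n) (Fin n) ℂ).mulVec v) = 2 * n - 1 := by
  have hset : {r | HasTensorRankLE ℂ (fun (A : upperToeplitzSpace n) (v : Fin n → ℂ) =>
      (A : Matrix (Fin n) (Fin n) ℂ).mulVec v) r}
      = {r | HasTensorRankLE ℂ (Bcorr n) r} := by
    ext r
    constructor
    · intro h
      exact transfer (toepEquiv n).symm
        (Bcorr n)
        (fun (A : upperToeplitzSpace n) (v : Fin n → ℂ) =>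
          (A : Matrix (Fin n) (Fin n) ℂ).mulVec v)
        (fun A v => by
          rw [← toep_rel n ((toepEquiv n).symm A) v, LinearEquiv.apply_symm_apply]) r h
    · intro h
      exact transfer (toepEquiv n)
        (fun (A : upperToeplitzSpace n) (v : Fin n → ℂ) =>
          (A : Matrix (Fin n) (Fin n) ℂ).mulVec v)
        (Bcorr n) (fun t v => toep_rel n t v) r h
  rw [tensorRank, hset]
  refine le_antisymm (Nat.sInf_le (upper_bound n)) ?_
  exact le_csInf ⟨_, upper_bound n⟩ fun m hm => lower_bound_s16 n m hm
end

section
/- Let U ⊆ ℂ^{n×n} and V ⊆ ℂ^{k×k} be linear subspaces, and let U ⊛ V ⊆ ℂ^{nk×nk} be the linear span of Kronecker products A ⊗ B with A ∈ U, B ∈ V. Let μ_U, μ_V, μ_{U⊛V} be the structure tensors of the matrix-vector products β_U : U × ℂ^n → ℂ^n, β_V : V × ℂ^k → ℂ^k, and β_{U⊛V} : (U ⊛ V) × ℂ^{nk} → ℂ^{nk} respectively. Suppose rank(μ_U) = dim U, rank(μ_V) = dim V, and the induced linear maps U ⊗ ℂ^n → ℂ^n and V ⊗ ℂ^k → ℂ^k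 are surjective. Then rank(μ_{U⊛V}) = rank(μ_U) · rank(μ_V). -/
open Filter Topology

/-- Matrix-vector product by matrices in a subspace `U ⊆ ℂ^{n×n}`, as a bilinear map. -/
noncomputable def mulVecBil {d : Type*} [Fintype d] [DecidableEq d]
    (U : Submodule ℂ (Matrix d d ℂ)) :
    U →ₗ[ℂ] (d → ℂ) →ₗ[ℂ] (d → ℂ) :=
  LinearMap.mk₂ ℂ (fun A x => (A : Matrix d d ℂ).mulVec x)
    (fun A B x => by simp [Matrix.add_mulVec])
    (fun c A x => by simp [Matrix.smul_mulVec])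
    (fun A x y => by simp [Matrix.mulVec_add])
    (fun A c x => by simp [Matrix.mulVec_smul])

/-- `U ⊛ V`, the span of the Kronecker products `A ⊗ B` of matrices `A ∈ U`, `B ∈ V`. -/
noncomputable def kronSpace {n k : ℕ} (U : Submodule ℂ (Matrix (Fin n) (Fin n) ℂ))
    (V : Submodule ℂ (Matrix (Fin k) (Fin k) ℂ)) :
    Submodule ℂ (Matrix (Fin n × Fin k) (Fin n × Fin k) ℂ) :=
  Submodule.span ℂ {M | ∃ A ∈ U, ∃ B ∈ V, M = Matrix.kroneckerMap (· * ·) A B}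

lemma hasTensorRankLE_of_fintype {𝕜 : Type*} [Field 𝕜] {U V W : Type*}
    [AddCommGroup U] [Module 𝕜 U] [AddCommGroup V] [Module 𝕜 V]
    [AddCommGroup W] [Module 𝕜 W] {β : U → V → W} {ι : Type*} [Fintype ι]
    (f : ι → (U →ₗ[𝕜] 𝕜)) (g : ι → (V →ₗ[𝕜] 𝕜)) (w : ι → W)
    (h : ∀ u v, β u v = ∑ i, (f i u * g i v) • w i) :
    HasTensorRankLE 𝕜 β (Fintype.card ι) := by
  refine ⟨f ∘ (Fintype.equivFin ι).symm, g ∘ (Fintype.equivFin ι).symm,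
    w ∘ (Fintype.equivFin ι).symm, fun u v => ?_⟩
  rw [h u v]
  exact (Equiv.sum_comp (Fintype.equivFin ι).symm fun i => (f i u * g i v) • w i).symm

lemma exists_rank_mulVec {d : Type*} [Fintype d] [DecidableEq d]
    (W : Submodule ℂ (Matrix d d ℂ)) :
    HasTensorRankLE ℂ (fun (M : W) (z : d → ℂ) => (M : Matrix d d ℂ).mulVec z)
      (Fintype.card (d × d)) := by
  classical
  refine hasTensorRankLE_of_fintype
    (fun p => { toFun := fun M => (M : Matrix d d ℂ) p.1 p.2,
                map_add' := fun M N => rfl, map_smul' := fun c M => rfl })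
    (fun p => LinearMap.proj p.2) (fun p => Pi.single p.1 1) (fun M z => ?_)
  funext a
  simp only [Matrix.mulVec, dotProduct, Finset.sum_apply, Pi.smul_apply,
    smul_eq_mul, LinearMap.coe_mk, AddHom.coe_mk, LinearMap.proj_apply,
    Pi.single_apply, Fintype.sum_prod_type, mul_ite, mul_one, mul_zero]
  rw [Finset.sum_comm]
  simp
  rfl

lemma finrank_le_of_rank {d : Type*} [Fintype d] [DecidableEq d]
    (W : Submodule ℂ (Matrix d d ℂ)) {r : ℕ}
    (h : HasTensorRankLE ℂ (fun (M : W) (z : d → ℂ) => (M : Matrix d d ℂ).mulVec z) r) :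
    Module.finrank ℂ W ≤ r := by
  obtain ⟨f, g, w, hd⟩ := h
  have hinj : Function.Injective (LinearMap.pi f : W →ₗ[ℂ] (Fin r → ℂ)) := by
    rw [← LinearMap.ker_eq_bot, LinearMap.ker_eq_bot']
    intro M hM
    have hf : ∀ i, f i M = 0 := fun i => congrFun hM i
    have hz : ∀ z, (M : Matrix d d ℂ).mulVec z = 0 := by
      intro z
      have := hd M z
      simp only at this
      rw [this]
      simp [hf]
    have hM0 : (M : Matrix d d ℂ) = 0 := by
      ext a c
      have := congrFun (hz (Pi.single c 1)) a
      simpa using this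
    exact Subtype.ext hM0
  calc Module.finrank ℂ W ≤ Module.finrank ℂ (Fin r → ℂ) :=
        LinearMap.finrank_le_finrank_of_injective hinj
  _ = r := Module.finrank_fin_fun ℂ

lemma finrank_le_tensorRank {d : Type*} [Fintype d] [DecidableEq d]
    (W : Submodule ℂ (Matrix d d ℂ)) :
    Module.finrank ℂ W ≤
      tensorRank ℂ (fun (M : W) (z : d → ℂ) => (M : Matrix d d ℂ).mulVec z) := by
  have hne : {r | HasTensorRankLE ℂ
      (fun (M : W) (z : d → ℂ) => (M : Matrix d d ℂ).mulVec z) r}.Nonempty :=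
    ⟨_, exists_rank_mulVec W⟩
  exact finrank_le_of_rank W (Nat.sInf_mem hne)

noncomputable def phiAux {n k : ℕ} (F : Matrix (Fin n) (Fin n) ℂ →ₗ[ℂ] ℂ)
    (F' : Matrix (Fin k) (Fin k) ℂ →ₗ[ℂ] ℂ) :
    Matrix (Fin n × Fin k) (Fin n × Fin k) ℂ →ₗ[ℂ] ℂ where
  toFun M := F (Matrix.of fun a c => F' (Matrix.of fun b d => M (a, b) (c, d)))
  map_add' M N := by
    show F (Matrix.of fun a c => F' (Matrix.of fun b d => (M + N) (a, b) (c, d))) = _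
    rw [show (Matrix.of fun a c => F' (Matrix.of fun b d => (M + N) (a, b) (c, d)))
        = (Matrix.of fun a c => F' (Matrix.of fun b d => M (a, b) (c, d)))
          + (Matrix.of fun a c => F' (Matrix.of fun b d => N (a, b) (c, d))) from
      funext fun a => funext fun c => map_add F' _ _, map_add]
  map_smul' s M := by
    show F (Matrix.of fun a c => F' (Matrix.of fun b d => (s • M) (a, b) (c, d))) = _
    rw [show (Matrix.of fun a c => F' (Matrix.of fun b d => (s • M) (a, b) (c, d)))
        = s • (Matrix.of fun a c => F' (Matrix.of fun b d => M (a, b) (c, d))) from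
      funext fun a => funext fun c => map_smul F' s _, map_smul]
    rfl

lemma phiAux_kron {n k : ℕ} (F : Matrix (Fin n) (Fin n) ℂ →ₗ[ℂ] ℂ)
    (F' : Matrix (Fin k) (Fin k) ℂ →ₗ[ℂ] ℂ)
    (A : Matrix (Fin n) (Fin n) ℂ) (B : Matrix (Fin k) (Fin k) ℂ) :
    phiAux F F' (Matrix.kroneckerMap (· * ·) A B) = F A * F' B := by
  show F (Matrix.of fun a c => F' (Matrix.of fun b d =>
      Matrix.kroneckerMap (· * ·) A B (a, b) (c, d))) = F A * F' B
  rw [show (Matrix.of fun a c => F' (Matrix.of fun b d =>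
      Matrix.kroneckerMap (· * ·) A B (a, b) (c, d))) = F' B • A from
    funext fun a => funext fun c =>
      (map_smul F' (A a c) B).trans (mul_comm _ _), map_smul, smul_eq_mul, mul_comm]

noncomputable def gAux {n k : ℕ} (g : (Fin n → ℂ) →ₗ[ℂ] ℂ) (g' : (Fin k → ℂ) →ₗ[ℂ] ℂ) :
    (Fin n × Fin k → ℂ) →ₗ[ℂ] ℂ where
  toFun z := g (fun a => g' (fun b => z (a, b)))
  map_add' z z' := by
    show g (fun a => g' fun b => (z + z') (a, b)) = _
    rw [show (fun a => g' fun b => (z + z') (a, b))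
        = (fun a => g' fun b => z (a, b)) + (fun a => g' fun b => z' (a, b)) from
      funext fun a => map_add g' _ _, map_add]
  map_smul' s z := by
    show g (fun a => g' fun b => (s • z) (a, b)) = _
    rw [show (fun a => g' fun b => (s • z) (a, b))
        = s • (fun a => g' fun b => z (a, b)) from
      funext fun a => map_smul g' s _, map_smul]
    rfl

lemma key_identity {n k rU rV : ℕ}
    (A : Matrix (Fin n) (Fin n) ℂ) (B : Matrix (Fin k) (Fin k) ℂ)
    (a1 : Fin rU → ℂ) (gU : Fin rU → ((Fin n → ℂ) →ₗ[ℂ] ℂ)) (wU : Fin rU → Fin n → ℂ)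
    (b1 : Fin rV → ℂ) (gV : Fin rV → ((Fin k → ℂ) →ₗ[ℂ] ℂ)) (wV : Fin rV → Fin k → ℂ)
    (hA : ∀ x, A.mulVec x = ∑ i, (a1 i * gU i x) • wU i)
    (hB : ∀ y, B.mulVec y = ∑ j, (b1 j * gV j y) • wV j)
    (z : Fin n × Fin k → ℂ) :
    (Matrix.kroneckerMap (· * ·) A B).mulVec z =
      ∑ p : Fin rU × Fin rV,
        ((a1 p.1 * b1 p.2) * (gU p.1 fun a => gV p.2 fun b => z (a, b))) •
          (fun ab : Fin n × Fin k => wU p.1 ab.1 * wV p.2 ab.2) := by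
  funext ab
  obtain ⟨a, b⟩ := ab
  have hAe : ∀ (x : Fin n → ℂ) (a : Fin n),
      ∑ c, A a c * x c = ∑ i, (a1 i * gU i x) * wU i a := by
    intro x a
    have := congrFun (hA x) a
    simpa [Matrix.mulVec, dotProduct, Finset.sum_apply, Pi.smul_apply,
      smul_eq_mul] using this
  have hBe : ∀ (y : Fin k → ℂ) (b : Fin k),
      ∑ d, B b d * y d = ∑ j, (b1 j * gV j y) * wV j b := by
    intro y b
    have := congrFun (hB y) b
    simpa [Matrix.mulVec, dotProduct, Finset.sum_apply, Pi.smul_apply,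
      smul_eq_mul] using this
  have lhs : (Matrix.kroneckerMap (· * ·) A B).mulVec z (a, b)
      = ∑ c, A a c * ∑ d, B b d * z (c, d) := by
    simp [Matrix.mulVec, dotProduct, Fintype.sum_prod_type,
      Matrix.kroneckerMap_apply, Finset.mul_sum, mul_assoc]
  rw [lhs]
  calc ∑ c, A a c * ∑ d, B b d * z (c, d)
      = ∑ c, ∑ j, A a c * ((b1 j * gV j fun d => z (c, d)) * wV j b) := by
        refine Finset.sum_congr rfl fun c _ => ?_
        rw [hBe (fun d => z (c, d)) b, Finset.mul_sum]
    _ = ∑ j, ∑ c, A a c * ((b1 j * gV j fun d => z (c, d)) * wV j b) := Finset.sum_comm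
    _ = ∑ j, ∑ i, ((a1 i * b1 j) * gU i (fun c => gV j fun d => z (c, d)))
          * (wU i a * wV j b) := by
        refine Finset.sum_congr rfl fun j _ => ?_
        have h1 : ∑ c, A a c * ((b1 j * gV j fun d => z (c, d)) * wV j b)
            = (b1 j * wV j b) * ∑ c, A a c * gV j (fun d => z (c, d)) := by
          rw [Finset.mul_sum]
          exact Finset.sum_congr rfl fun c _ => by ring
        rw [h1, hAe (fun c => gV j fun d => z (c, d)) a, Finset.mul_sum]
        exact Finset.sum_congr rfl fun i _ => by ring
    _ = ∑ i, ∑ j, ((a1 i * b1 j) * gU i (fun c => gV j fun d => z (c, d)))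
          * (wU i a * wV j b) := Finset.sum_comm
    _ = (∑ p : Fin rU × Fin rV,
          ((a1 p.1 * b1 p.2) * (gU p.1 fun a => gV p.2 fun b => z (a, b))) •
            (fun ab : Fin n × Fin k => wU p.1 ab.1 * wV p.2 ab.2)) (a, b) := by
        simp [Fintype.sum_prod_type, Finset.sum_apply, Pi.smul_apply, smul_eq_mul]
lemma le_finrank_kronSpace {n k : ℕ} (U : Submodule ℂ (Matrix (Fin n) (Fin n) ℂ))
    (V : Submodule ℂ (Matrix (Fin k) (Fin k) ℂ)) :
    Module.finrank ℂ U * Module.finrank ℂ V ≤ Module.finrank ℂ (kronSpace U V) := by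
  classical
  let bU := Module.finBasis ℂ U
  let bV := Module.finBasis ℂ V
  let A : Fin (Module.finrank ℂ U) → Matrix (Fin n) (Fin n) ℂ := fun p => (bU p : _)
  let B : Fin (Module.finrank ℂ V) → Matrix (Fin k) (Fin k) ℂ := fun q => (bV q : _)
  have hA : LinearIndependent ℂ A := bU.linearIndependent.map' U.subtype U.ker_subtype
  have hB : LinearIndependent ℂ B := bV.linearIndependent.map' V.subtype V.ker_subtype
  let K : Fin (Module.finrank ℂ U) × Fin (Module.finrank ℂ V) →
      Matrix (Fin n × Fin k) (Fin n × Fin k) ℂ :=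
    fun p => Matrix.kroneckerMap (· * ·) (A p.1) (B p.2)
  have hK : LinearIndependent ℂ K := by
    rw [Fintype.linearIndependent_iff]
    intro c hc
    have hentry : ∀ (a : Fin n) (b : Fin k) (cc : Fin n) (dd : Fin k),
        ∑ p : Fin (Module.finrank ℂ U) × Fin (Module.finrank ℂ V),
          c p * (A p.1 a cc * B p.2 b dd) = 0 := by
      intro a b cc dd
      have h := congrFun (congrFun hc (a, b)) (cc, dd)
      simpa [K, Matrix.sum_apply, Matrix.smul_apply, Matrix.kroneckerMap_apply,
        smul_eq_mul] using h
    have step1 : ∀ (b : Fin k) (dd : Fin k) (p : Fin (Module.finrank ℂ U)),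
        ∑ q, c (p, q) * B q b dd = 0 := by
      intro b dd
      refine Fintype.linearIndependent_iff.mp hA
        (fun pp => ∑ q, c (pp, q) * B q b dd) ?_
      ext a cc
      simp only [Matrix.sum_apply, Matrix.smul_apply, smul_eq_mul, Matrix.zero_apply]
      rw [← hentry a b cc dd, Fintype.sum_prod_type]
      refine Finset.sum_congr rfl fun pp _ => ?_
      rw [Finset.sum_mul]
      exact Finset.sum_congr rfl fun q _ => by ring
    intro p
    obtain ⟨p, q⟩ := p
    refine Fintype.linearIndependent_iff.mp hB (fun q => c (p, q)) ?_ q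
    ext b dd
    simp only [Matrix.sum_apply, Matrix.smul_apply, smul_eq_mul, Matrix.zero_apply]
    exact step1 b dd p
  have hsub : Submodule.span ℂ (Set.range K) ≤ kronSpace U V := by
    rw [Submodule.span_le]
    rintro _ ⟨p, rfl⟩
    exact Submodule.subset_span ⟨A p.1, (bU p.1).2, B p.2, (bV p.2).2, rfl⟩
  calc Module.finrank ℂ U * Module.finrank ℂ V
      = Module.finrank ℂ (Submodule.span ℂ (Set.range K)) := by
        rw [finrank_span_eq_card hK]; simp
  _ ≤ Module.finrank ℂ (kronSpace U V) := Submodule.finrank_mono hsub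

/-- If `U ⊆ ℂ^{n×n}` and `V ⊆ ℂ^{k×k}` are linear subspaces whose
matrix-vector product structure tensors `μ_U`, `μ_V` satisfy `rank (μ_U) = dim U`,
`rank (μ_V) = dim V`, and whose induced linear maps `U ⊗ ℂ^n → ℂ^n` and `V ⊗ ℂ^k → ℂ^k` are
surjective, then the structure tensor of the matrix-vector product for `U ⊛ V` satisfies
`rank (μ_{U ⊛ V}) = rank (μ_U) · rank (μ_V)`. -/
theorem tensorRank_kronSpace_mulVec (n k : ℕ)
    (U : Submodule ℂ (Matrix (Fin n) (Fin n) ℂ))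
    (V : Submodule ℂ (Matrix (Fin k) (Fin k) ℂ))
    (hU : tensorRank ℂ (fun (A : U) (x : Fin n → ℂ) =>
        (A : Matrix (Fin n) (Fin n) ℂ).mulVec x) = Module.finrank ℂ U)
    (hV : tensorRank ℂ (fun (B : V) (y : Fin k → ℂ) =>
        (B : Matrix (Fin k) (Fin k) ℂ).mulVec y) = Module.finrank ℂ V)
    (hUsurj : Function.Surjective (TensorProduct.lift (mulVecBil U)))
    (hVsurj : Function.Surjective (TensorProduct.lift (mulVecBil V))) :
    tensorRank ℂ (fun (M : kronSpace U V) (z : Fin n × Fin k → ℂ) =>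
        (M : Matrix (Fin n × Fin k) (Fin n × Fin k) ℂ).mulVec z) =
      tensorRank ℂ (fun (A : U) (x : Fin n → ℂ) =>
        (A : Matrix (Fin n) (Fin n) ℂ).mulVec x) *
      tensorRank ℂ (fun (B : V) (y : Fin k → ℂ) =>
        (B : Matrix (Fin k) (Fin k) ℂ).mulVec y) := by
  classical
  set rU := tensorRank ℂ (fun (A : U) (x : Fin n → ℂ) =>
      (A : Matrix (Fin n) (Fin n) ℂ).mulVec x) with hrU
  set rV := tensorRank ℂ (fun (B : V) (y : Fin k → ℂ) =>
      (B : Matrix (Fin k) (Fin k) ℂ).mulVec y) with hrV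
  have hUmem : HasTensorRankLE ℂ (fun (A : U) (x : Fin n → ℂ) =>
      (A : Matrix (Fin n) (Fin n) ℂ).mulVec x) rU := by
    have := Nat.sInf_mem (s := {r | HasTensorRankLE ℂ (fun (A : U) (x : Fin n → ℂ) =>
      (A : Matrix (Fin n) (Fin n) ℂ).mulVec x) r}) ⟨_, exists_rank_mulVec U⟩; exact this
  have hVmem : HasTensorRankLE ℂ (fun (B : V) (y : Fin k → ℂ) =>
      (B : Matrix (Fin k) (Fin k) ℂ).mulVec y) rV := by
    have := Nat.sInf_mem (s := {r | HasTensorRankLE ℂ (fun (B : V) (y : Fin k → ℂ) =>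
      (B : Matrix (Fin k) (Fin k) ℂ).mulVec y) r}) ⟨_, exists_rank_mulVec V⟩; exact this
  obtain ⟨fU, gU, wU, hdU⟩ := hUmem
  obtain ⟨fV, gV, wV, hdV⟩ := hVmem
  choose FU hFU using fun i => LinearMap.exists_extend (fU i)
  choose FV hFV using fun j => LinearMap.exists_extend (fV j)
  have main : ∀ m ∈ kronSpace U V, ∀ z : Fin n × Fin k → ℂ,
      m.mulVec z = ∑ p : Fin rU × Fin rV, ((phiAux (FU p.1) (FV p.2)) m * (gAux (gU p.1) (gV p.2)) z) •
        (fun ab : Fin n × Fin k => wU p.1 ab.1 * wV p.2 ab.2) := by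
    intro m hm
    have hm' : m ∈ Submodule.span ℂ
        {M | ∃ A ∈ U, ∃ B ∈ V, M = Matrix.kroneckerMap (· * ·) A B} := hm
    clear hm
    induction hm' using Submodule.span_induction with
    | mem x hx =>
        obtain ⟨A, hA, B, hB, rfl⟩ := hx
        intro z
        have hAx : ∀ x, A.mulVec x = ∑ i, (fU i ⟨A, hA⟩ * gU i x) • wU i :=
          fun x => hdU ⟨A, hA⟩ x
        have hBx : ∀ y, B.mulVec y = ∑ j, (fV j ⟨B, hB⟩ * gV j y) • wV j :=
          fun y => hdV ⟨B, hB⟩ y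
        rw [key_identity A B (fun i => fU i ⟨A, hA⟩) gU wU
          (fun j => fV j ⟨B, hB⟩) gV wV hAx hBx z]
        refine Finset.sum_congr rfl fun p _ => ?_
        rw [phiAux_kron]
        have e1 : FU p.1 A = fU p.1 ⟨A, hA⟩ := DFunLike.congr_fun (hFU p.1) ⟨A, hA⟩
        have e2 : FV p.2 B = fV p.2 ⟨B, hB⟩ := DFunLike.congr_fun (hFV p.2) ⟨B, hB⟩
        rw [e1, e2]
        rfl
    | zero => intro z; simp
    | add x y hx hy ihx ihy =>
        intro z
        rw [Matrix.add_mulVec, ihx z, ihy z, ← Finset.sum_add_distrib]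
        refine Finset.sum_congr rfl fun p _ => ?_
        rw [map_add, add_mul, add_smul]
    | smul a x hx ih =>
        intro z
        rw [Matrix.smul_mulVec, ih z, Finset.smul_sum]
        refine Finset.sum_congr rfl fun p _ => ?_
        rw [map_smul, smul_eq_mul, smul_smul, mul_assoc]
  have hmem : HasTensorRankLE ℂ (fun (M : kronSpace U V) (z : Fin n × Fin k → ℂ) =>
      (M : Matrix (Fin n × Fin k) (Fin n × Fin k) ℂ).mulVec z)
      (Fintype.card (Fin rU × Fin rV)) :=
    hasTensorRankLE_of_fintype
      (fun p => (phiAux (FU p.1) (FV p.2)).comp (kronSpace U V).subtype)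
      (fun p => gAux (gU p.1) (gV p.2))
      (fun p => fun ab : Fin n × Fin k => wU p.1 ab.1 * wV p.2 ab.2)
      (fun M z => main M M.2 z)
  apply le_antisymm
  · calc tensorRank ℂ (fun (M : kronSpace U V) (z : Fin n × Fin k → ℂ) =>
        (M : Matrix (Fin n × Fin k) (Fin n × Fin k) ℂ).mulVec z) ≤ _ := Nat.sInf_le hmem
    _ = _ := by simp
  · calc rU * rV
        = Module.finrank ℂ U * Module.finrank ℂ V := by rw [hU, hV]
    _ ≤ Module.finrank ℂ (kronSpace U V) := le_finrank_kronSpace U V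
    _ ≤ _ := finrank_le_tensorRank (kronSpace U V)
end

section
/- Let S²(ℂ^n) be the space of n×n complex symmetric matrices and let β_s : S²(ℂ^n) × ℂ^n → ℂ^n, (A, v) ↦ Av, be the symmetric matrix-vector product with structure tensor μ_s. Then rank(μ_s) = n(n+1)/2. -/
open Filter Topology

open Finset

/-- The space `S²(ℂ^n)` of `n × n` complex symmetric matrices. -/
noncomputable def symmetricMatrixSpace (n : ℕ) : Submodule ℂ (Matrix (Fin n) (Fin n) ℂ) where
  carrier := {A | A.IsSymm}
  add_mem' hA hB := hA.add hB
  zero_mem' := Matrix.isSymm_zero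
  smul_mem' c _ hA := hA.smul c

namespace SymMV

variable (n : ℕ)

def ent (j k : Fin n) : symmetricMatrixSpace n →ₗ[ℂ] ℂ where
  toFun A := A.1 j k
  map_add' A B := rfl
  map_smul' c A := rfl

@[simp] lemma ent_apply (j k : Fin n) (A : symmetricMatrixSpace n) :
    ent n j k A = A.1 j k := rfl

noncomputable def F (p : Fin n × Fin n) : symmetricMatrixSpace n →ₗ[ℂ] ℂ :=
  if p.1 = p.2 then ent n p.1 p.1 - ∑ l ∈ univ.erase p.1, ent n p.1 l
  else ent n p.1 p.2

noncomputable def G (p : Fin n × Fin n) : (Fin n → ℂ) →ₗ[ℂ] ℂ :=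
  if p.1 = p.2 then LinearMap.proj p.1
  else (LinearMap.proj p.1 : (Fin n → ℂ) →ₗ[ℂ] ℂ) + LinearMap.proj p.2

noncomputable def Wv (p : Fin n × Fin n) : Fin n → ℂ :=
  if p.1 = p.2 then Pi.single p.1 1
  else Pi.single p.1 1 + Pi.single p.2 1

theorem key (A : Matrix (Fin n) (Fin n) ℂ) (hA : A.IsSymm) (v : Fin n → ℂ) :
    A.mulVec v = ∑ p ∈ univ.filter (fun p : Fin n × Fin n => p.1 ≤ p.2),
      (F n p ⟨A, hA⟩ * G n p v) • Wv n p := by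
  have hsym : ∀ j k, A j k = A k j := fun j k => (congrFun (congrFun hA.symm k) j).symm
  funext m
  rw [Finset.sum_apply]
  simp only [Pi.smul_apply, smul_eq_mul]
  rw [Finset.sum_filter, Fintype.sum_prod_type]
  -- abbreviations
  set X : Fin n → ℂ := fun j =>
      (A j j - ∑ l ∈ univ.erase j, A j l) * v j * (if m = j then (1:ℂ) else 0) with hX
  set Y : Fin n → Fin n → ℂ := fun j k =>
      A j k * (v j + v k) * ((if m = j then (1:ℂ) else 0) + (if m = k then (1:ℂ) else 0))
      with hY
  have split : ∀ j k : Fin n,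
      (if j ≤ k then (F n (j,k) ⟨A, hA⟩ * G n (j,k) v) * Wv n (j,k) m else 0)
      = (if j = k then X j else 0) + (if j < k then Y j k else 0) := by
    intro j k
    rcases lt_trichotomy j k with h | h | h
    · have h1 : j ≤ k := le_of_lt h
      have h2 : j ≠ k := ne_of_lt h
      simp [F, G, Wv, h1, h2, h, not_lt_of_gt, hY, Pi.single_apply, mul_comm]
    · subst h
      simp [F, G, Wv, hX, Pi.single_apply, LinearMap.sub_apply, LinearMap.coe_sum,
        Finset.sum_apply]
    · have h1 : ¬ j ≤ k := not_le_of_gt h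
      have h2 : ¬ j < k := not_lt_of_gt h
      have h3 : ¬ j = k := ne_of_gt h
      simp [h1, h2, h3]
  simp only [split]
  simp only [Finset.sum_add_distrib]
  have hS1 : (∑ j, ∑ k, if j = k then X j else 0)
      = (A m m - ∑ l ∈ univ.erase m, A m l) * v m := by
    simp [hX, mul_ite, mul_one, mul_zero, Finset.sum_ite_eq]
  have hS2 : (∑ j, ∑ k, if j < k then Y j k else 0)
      = (∑ k, if m < k then A m k * (v m + v k) else 0)
        + (∑ j, if j < m then A j m * (v j + v m) else 0) := by
    have e1 : ∀ j k : Fin n, (if j < k then Y j k else 0)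
        = (if m = j then (if j < k then A j k * (v j + v k) else 0) else 0)
          + (if m = k then (if j < k then A j k * (v j + v k) else 0) else 0) := by
      intro j k
      rcases eq_or_ne j k with he | he
      · subst he; simp [lt_irrefl]
      · by_cases h1 : j < k <;> by_cases h2 : m = j <;> by_cases h3 : m = k <;>
          simp [hY, h1, h2, h3, he, he.symm] <;> ring
    simp only [e1, Finset.sum_add_distrib]
    congr 1
    · have e2 : ∀ j : Fin n,
          (∑ k, if m = j then (if j < k then A j k * (v j + v k) else 0) else 0)
          = (if m = j then (∑ k, if j < k then A j k * (v j + v k) else 0) else 0) := by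
        intro j; split_ifs <;> simp
      simp only [e2, Finset.sum_ite_eq, mem_univ, if_true]
    · simp only [Finset.sum_ite_eq, mem_univ, if_true]
  rw [hS1, hS2]
  have hcomb : ((∑ k, if m < k then A m k * (v m + v k) else 0)
        + (∑ j, if j < m then A j m * (v j + v m) else 0))
      = ∑ l ∈ univ.erase m, A m l * (v l + v m) := by
    rw [← Finset.sum_add_distrib,
      show univ.erase m = univ.filter (· ≠ m) from (Finset.filter_ne' univ m).symm,
      Finset.sum_filter]
    apply Finset.sum_congr rfl
    intro l _
    rcases lt_trichotomy l m with h | h | h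
    · rw [if_neg (not_lt_of_gt h), if_pos h, if_pos (ne_of_lt h), hsym l m]
      ring
    · subst h; simp
    · rw [if_pos h, if_neg (not_lt_of_gt h), if_pos (ne_of_gt h)]
      ring
  rw [hcomb]
  have hmv : A.mulVec v m = ∑ l, A m l * v l := by
    simp [Matrix.mulVec, dotProduct]
  rw [hmv, ← Finset.add_sum_erase univ (fun l => A m l * v l) (mem_univ m)]
  simp only [mul_add, Finset.sum_add_distrib, ← Finset.sum_mul]
  ring

lemma card_S : Fintype.card {p : Fin n × Fin n // p.1 ≤ p.2} = n * (n + 1) / 2 := by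
  rw [← Fintype.card_congr (Sym2.sortEquiv (α := Fin n)), Sym2.card]
  simp [Nat.choose_two_right, Nat.mul_comm]

theorem upper : HasTensorRankLE ℂ
    (fun (A : symmetricMatrixSpace n) (v : Fin n → ℂ) =>
      (A : Matrix (Fin n) (Fin n) ℂ).mulVec v) (n * (n + 1) / 2) := by
  let e : Fin (n * (n + 1) / 2) ≃ {p : Fin n × Fin n // p.1 ≤ p.2} :=
    (Fintype.equivFinOfCardEq (card_S n)).symm
  refine ⟨fun i => F n (e i).1, fun i => G n (e i).1, fun i => Wv n (e i).1, ?_⟩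
  rintro ⟨A, hA⟩ v
  show A.mulVec v = _
  rw [key n A hA v]
  have h2 : ∑ p ∈ univ.filter (fun p : Fin n × Fin n => p.1 ≤ p.2),
        (F n p ⟨A, hA⟩ * G n p v) • Wv n p
      = ∑ p : {p : Fin n × Fin n // p.1 ≤ p.2},
        (F n p.1 ⟨A, hA⟩ * G n p.1 v) • Wv n p.1 :=
    Finset.sum_subtype _ (by simp) _
  rw [h2]
  exact (Equiv.sum_comp e (fun p => (F n p.1 ⟨A, hA⟩ * G n p.1 v) • Wv n p.1)).symm

noncomputable def Mlin : (Sym2 (Fin n) → ℂ) →ₗ[ℂ] symmetricMatrixSpace n where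
  toFun c := ⟨Matrix.of fun j k => c s(j, k), by
    show Matrix.IsSymm _
    ext j k
    simp [Matrix.transpose_apply, Sym2.eq_swap]⟩
  map_add' c d := rfl
  map_smul' c d := rfl

theorem lower (r : ℕ) (h : HasTensorRankLE ℂ
    (fun (A : symmetricMatrixSpace n) (v : Fin n → ℂ) =>
      (A : Matrix (Fin n) (Fin n) ℂ).mulVec v) r) : n * (n + 1) / 2 ≤ r := by
  obtain ⟨f, g, w, h⟩ := h
  by_contra hlt
  push_neg at hlt
  set Φ : (Sym2 (Fin n) → ℂ) →ₗ[ℂ] (Fin r → ℂ) := (LinearMap.pi f).comp (Mlin n) with hΦ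
  have hni : ¬ Function.Injective Φ := by
    intro hinj
    have hle := LinearMap.finrank_le_finrank_of_injective hinj
    rw [Module.finrank_fintype_fun_eq_card, Module.finrank_fintype_fun_eq_card,
      Sym2.card, Fintype.card_fin, Fintype.card_fin, Nat.choose_two_right] at hle
    simp only [Nat.add_sub_cancel] at hle
    rw [Nat.mul_comm (n + 1) n] at hle
    omega
  rw [← LinearMap.ker_eq_bot] at hni
  obtain ⟨c, hc, hc0⟩ := Submodule.exists_mem_ne_zero_of_ne_bot hni
  rw [LinearMap.mem_ker] at hc
  obtain ⟨s0, hs0⟩ := Function.ne_iff.mp hc0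
  obtain ⟨⟨j, k⟩, rfl⟩ := Quot.exists_rep s0
  have hjk : Quot.mk _ (j, k) = s(j, k) := rfl
  rw [hjk] at hs0
  have hf : ∀ i, f i (Mlin n c) = 0 := fun i => congrFun hc i
  have hAv := h (Mlin n c) (Pi.single k 1)
  simp only [hf, zero_mul, zero_smul, Finset.sum_const_zero] at hAv
  have : ((Mlin n c : symmetricMatrixSpace n) :
      Matrix (Fin n) (Fin n) ℂ).mulVec (Pi.single k 1) j = c s(j, k) := by
    simp [Mlin, Matrix.mulVec, dotProduct, Pi.single_apply]
    rfl
  rw [hAv] at this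
  exact hs0 (by simpa using this.symm)

end SymMV

/-- The structure tensor `μ_s` of the symmetric matrix-vector product
`S²(ℂ^n) × ℂ^n → ℂ^n`, `(A, v) ↦ Av`, has rank `n(n+1)/2`. -/
theorem tensorRank_symmetric_mulVec (n : ℕ) :
    tensorRank ℂ (fun (A : symmetricMatrixSpace n) (v : Fin n → ℂ) =>
        (A : Matrix (Fin n) (Fin n) ℂ).mulVec v) = n * (n + 1) / 2 := by
  refine le_antisymm (Nat.sInf_le (SymMV.upper n)) ?_
  exact le_csInf ⟨_, SymMV.upper n⟩ (fun r hr => SymMV.lower n r hr)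
end
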